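/- arXiv:1804.02548 — 3 statements merged into one kernel-verified Lean document; each statement's English description precedes it below -/
import Mathlib

section
/- Membership of a group in the class ℬ_f does not depend on the choice of finite generating set: if a finitely generated infinite Cayley automatic group G belongs to ℬ_f with respect to a finite generating set A, then G belongs to ℬ_f with respect to any other finite generating set A′ of G. -/
namespace CAG

/-- The convolution `w₁ ⊗ w₂` of two words, over the padded alphabet
`(Σ ∪ {⋄})²`, modelled as `Option α × Option α` where `none` is the padding symbol `⋄`. -/
def conv {α : Type*} : List α → List α → List (Option α × Option α)
  | [], [] => []
  | a :: as, [] => (some a, none) :: conv as []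
  | [], b :: bs => (none, some b) :: conv [] bs
  | a :: as, b :: bs => (some a, some b) :: conv as bs

/-- A binary relation on words is regular if the language of convolutions of its pairs
is a regular language. -/
def IsRegularRel {α : Type*} (R : Set (List α × List α)) : Prop :=
  Language.IsRegular {w | ∃ p ∈ R, w = conv p.1 p.2}

variable {G : Type*} [Group G]

/-- The alphabet `S = A ∪ A⁻¹` associated to a generating set `A ⊆ G`. -/
def Alph (A : Set G) : Type _ := {x : G // x ∈ A ∪ A⁻¹}

/-- The canonical evaluation map `π : S* → G`. -/
def eval (A : Set G) (w : List (Alph A)) : G := (w.map Subtype.val).prod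

/-- The word length `d_A(g)` of `g` with respect to the generating set `A`. -/
noncomputable def wordLength (A : Set G) (g : G) : ℕ :=
  sInf {n | ∃ w : List (Alph A), eval A w = g ∧ w.length = n}

/-- The distance `d_A(g₁, g₂)` in the Cayley graph of `G` with respect to `A`. -/
noncomputable def cayleyDist (A : Set G) (g₁ g₂ : G) : ℕ := wordLength A (g₁⁻¹ * g₂)

/-- `ψ : L → G` is a Cayley automatic representation of `G` (w.r.t. the
generating set `A`): `L ⊆ S*` is regular, `ψ` is a bijection from `L` onto `G`, and for every
`a ∈ A` the relation `R_a = {(ψ⁻¹(g), ψ⁻¹(g·a)) : g ∈ G}` is regular. -/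
def IsCayleyAutomaticRep (A : Set G) (L : Language (Alph A)) (ψ : List (Alph A) → G) : Prop :=
  Language.IsRegular L ∧ Set.BijOn ψ L Set.univ ∧
    ∀ a ∈ A, IsRegularRel {p : List (Alph A) × List (Alph A) |
      p.1 ∈ L ∧ p.2 ∈ L ∧ ψ p.2 = ψ p.1 * a}

/-- `G` is Cayley automatic with respect to the generating set `A`. -/
def IsCayleyAutomatic (A : Set G) : Prop :=
  ∃ (L : Language (Alph A)) (ψ : List (Alph A) → G), IsCayleyAutomaticRep A L ψ

/-- `G` is automatic (in the sense of Thurston) with respect to the generating set `A`: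
there is a regular language `L ⊆ S*` on which the canonical evaluation map `π` is a bijection
onto `G` and all the relations `R_a`, `a ∈ A`, are regular. -/
def IsAutomatic (A : Set G) : Prop :=
  ∃ L : Language (Alph A), IsCayleyAutomaticRep A L (eval A)

/-- The family `𝔉` of non-decreasing, non-negative real valued functions defined on a
final segment `[Q, ∞)` of `ℕ` (values below `Q` are irrelevant junk values). -/
structure FFun where
  Q : ℕ
  toFun : ℕ → ℝ
  nonneg : ∀ n, Q ≤ n → 0 ≤ toFun n
  mono : ∀ m n, Q ≤ m → m ≤ n → toFun m ≤ toFun n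

/-- `h ⪯ f` : there are positive integers `K, M, N`, with `[N,∞)` contained in the domains of
`h` and `f`, such that `h(n) ≤ K·f(M·n)` for all `n ≥ N`. -/
def FFun.Preceq (h f : FFun) : Prop :=
  ∃ K M N : ℕ, 0 < K ∧ 0 < M ∧ 0 < N ∧ h.Q ≤ N ∧ f.Q ≤ N ∧
    ∀ n, N ≤ n → h.toFun n ≤ K * f.toFun (M * n)

/-- `h ≍ f` iff `h ⪯ f` and `f ⪯ h`. -/
def FFun.Equiv (h f : FFun) : Prop := h.Preceq f ∧ f.Preceq h

/-- `h ≺ f` iff `h ⪯ f` and not `h ≍ f`. -/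
def FFun.Prec (h f : FFun) : Prop := h.Preceq f ∧ ¬ h.Equiv f

/-- `G ∈ ℬ_f` with respect to the generating set `A`: there is a Cayley automatic
representation `ψ : L → G` such that the function
`h(n) = max{d_A(π(w), ψ(w)) : w ∈ L, |w| ≤ n}` satisfies `h ⪯ f`
(stated equivalently: for some positive `K, M, N` with `N ≥ Q_f`, every `w ∈ L` with `|w| ≤ n`
and `n ≥ N` satisfies `d_A(π(w), ψ(w)) ≤ K·f(M·n)`). -/
def InB (A : Set G) (f : FFun) : Prop :=
  ∃ (L : Language (Alph A)) (ψ : List (Alph A) → G),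
    IsCayleyAutomaticRep A L ψ ∧
    ∃ K M N : ℕ, 0 < K ∧ 0 < M ∧ 0 < N ∧ f.Q ≤ N ∧
      ∀ n, N ≤ n → ∀ w ∈ L, w.length ≤ n →
        (cayleyDist A (eval A w) (ψ w) : ℝ) ≤ K * f.toFun (M * n)

/-- The identity function `𝔦(n) = n` as an element of `𝔉`. -/
def identF : FFun where
  Q := 1
  toFun n := n
  nonneg n _ := by positivity
  mono m n _ h := by simpa using (Nat.cast_le (α := ℝ)).mpr h

/-- The exponential function `𝔢(n) = exp n` as an element of `𝔉`. -/
noncomputable def expF : FFun where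
  Q := 1
  toFun n := Real.exp n
  nonneg n _ := (Real.exp_pos n).le
  mono m n _ h := Real.exp_le_exp.mpr (by exact_mod_cast h)

end CAG

namespace CAGAux
open CAG

variable {α : Type*}

@[simp] lemma conv_nil_nil : conv ([] : List α) [] = [] := by rw [conv]
@[simp] lemma conv_cons_cons (a b : α) (as bs : List α) :
    conv (a :: as) (b :: bs) = (some a, some b) :: conv as bs := by rw [conv]
@[simp] lemma conv_cons_nil (a : α) (as : List α) :
    conv (a :: as) [] = (some a, none) :: conv as [] := by rw [conv]
@[simp] lemma conv_nil_cons (b : α) (bs : List α) :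
    conv [] (b :: bs) = (none, some b) :: conv [] bs := by rw [conv]

lemma conv_nil_left (v : List α) : conv [] v = v.map (fun b => ((none : Option α), some b)) := by
  induction v with
  | nil => simp
  | cons b bs ih => simp [ih]

lemma conv_nil_right (u : List α) : conv u [] = u.map (fun a => (some a, (none : Option α))) := by
  induction u with
  | nil => simp
  | cons a as ih => simp [ih]

lemma length_conv (u v : List α) : (conv u v).length = max u.length v.length := by
  induction u generalizing v with
  | nil => simp [conv_nil_left]
  | cons a as ih =>
    cases v with
    | nil => simp [conv_nil_right]
    | cons b bs => simp [ih, Nat.succ_max_succ]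

lemma filterMap_fst_conv (u v : List α) : (conv u v).filterMap (fun c => c.1) = u := by
  induction u generalizing v with
  | nil =>
    induction v with
    | nil => simp
    | cons b bs ih => simpa using ih
  | cons a as ih =>
    cases v with
    | nil => simpa using ih []
    | cons b bs => simpa using ih bs

lemma filterMap_snd_conv (u v : List α) : (conv u v).filterMap (fun c => c.2) = v := by
  induction v generalizing u with
  | nil =>
    induction u with
    | nil => simp
    | cons a as ih => simpa using ih
  | cons b bs ih =>
    cases u with
    | nil => simpa using ih []
    | cons a as => simpa using ih as

lemma conv_append {u1 v1 : List α} (h : u1.length = v1.length) (u2 v2 : List α) :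
    conv (u1 ++ u2) (v1 ++ v2) = conv u1 v1 ++ conv u2 v2 := by
  induction u1 generalizing v1 with
  | nil =>
    cases v1 with
    | nil => simp
    | cons b bs => simp at h
  | cons a as ih =>
    cases v1 with
    | nil => simp at h
    | cons b bs =>
      simp only [List.length_cons, Nat.succ_inj] at h
      simp [ih h]

lemma conv_left_le {x y : List α} (h : x.length ≤ y.length) (z : List α) :
    conv x (y ++ z) = conv x y ++ z.map (fun c => ((none : Option α), some c)) := by
  induction x generalizing y with
  | nil =>
    rw [conv_nil_left, conv_nil_left, List.map_append]
  | cons a as ih =>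
    cases y with
    | nil => simp at h
    | cons b bs =>
      simp only [List.length_cons, Nat.succ_le_succ_iff] at h
      simp [ih h]

lemma conv_right_le {x y : List α} (h : x.length ≤ y.length) (z : List α) :
    conv (y ++ z) x = conv y x ++ z.map (fun c => (some c, (none : Option α))) := by
  induction x generalizing y with
  | nil =>
    rw [conv_nil_right, conv_nil_right, List.map_append]
  | cons a as ih =>
    cases y with
    | nil => simp at h
    | cons b bs =>
      simp only [List.length_cons, Nat.succ_le_succ_iff] at h
      simp [ih h]

lemma map_fst_conv (u v : List α) :
    (conv u v).map (fun c => c.1) = u.map some ++ List.replicate (v.length - u.length) none := by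
  induction u generalizing v with
  | nil =>
    induction v with
    | nil => simp
    | cons b bs ih => simpa [List.replicate_succ] using ih
  | cons a as ih =>
    cases v with
    | nil => simpa using ih []
    | cons b bs => simpa using ih bs

lemma map_snd_conv (u v : List α) :
    (conv u v).map (fun c => c.2) = v.map some ++ List.replicate (u.length - v.length) none := by
  induction v generalizing u with
  | nil =>
    induction u with
    | nil => simp
    | cons a as ih => simpa [List.replicate_succ] using ih
  | cons b bs ih =>
    cases u with
    | nil => simpa using ih []
    | cons a as => simpa using ih as

lemma nonenone_not_mem_conv (u v : List α) :
    ((none : Option α), (none : Option α)) ∉ conv u v := by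
  induction u generalizing v with
  | nil =>
    rw [conv_nil_left]; simp
  | cons a as ih =>
    cases v with
    | nil => rw [conv_nil_right]; simp
    | cons b bs => simpa using ih bs

lemma conv_self (u : List α) : conv u u = u.map (fun a => (some a, some a)) := by
  induction u with
  | nil => simp
  | cons a as ih => simp [ih]

lemma map_swap_conv (u v : List α) :
    (conv u v).map (fun c => (c.2, c.1)) = conv v u := by
  induction u generalizing v with
  | nil =>
    rw [conv_nil_left, conv_nil_right, List.map_map]; rfl
  | cons a as ih =>
    cases v with
    | nil => rw [conv_nil_right, conv_nil_left, List.map_map]; rfl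
    | cons b bs => simp [ih bs]

lemma conv_inj {u v u' v' : List α} (h : conv u v = conv u' v') : u = u' ∧ v = v' := by
  constructor
  · rw [← filterMap_fst_conv u v, h, filterMap_fst_conv]
  · rw [← filterMap_snd_conv u v, h, filterMap_snd_conv]

lemma zip_replicate' (n : ℕ) (a b : Option α) :
    List.zip (List.replicate n a) (List.replicate n b) = List.replicate n (a, b) := by
  induction n with
  | zero => rfl
  | succ n ih => simp [List.replicate_succ, ih]

lemma zip_shape (u v : List α) (p q : ℕ) (h : u.length + p = v.length + q) :
    ∃ j, List.zip (u.map some ++ List.replicate p (none : Option α))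
      (v.map some ++ List.replicate q (none : Option α)) =
    conv u v ++ List.replicate j ((none : Option α), (none : Option α)) := by
  induction u generalizing v p q with
  | nil =>
    induction v generalizing p q with
    | nil =>
      simp only [List.length_nil, Nat.zero_add] at h
      subst h
      exact ⟨p, by simp [zip_replicate']⟩
    | cons b bs ihv =>
      simp at h
      cases p with
      | zero => exact absurd h (by omega)
      | succ p' =>
        obtain ⟨j, hj⟩ := ihv p' q (by simp; omega)
        refine ⟨j, ?_⟩
        simp only [List.map_nil, List.nil_append] at hj ⊢
        simp [List.replicate_succ, hj]
  | cons a as ih =>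
    cases v with
    | nil =>
      simp at h
      cases q with
      | zero => exact absurd h (by omega)
      | succ q' =>
        obtain ⟨j, hj⟩ := ih [] p q' (by simp at h ⊢; omega)
        refine ⟨j, ?_⟩
        simp only [List.map_nil, List.nil_append] at hj ⊢
        simp [List.replicate_succ, hj]
    | cons b bs =>
      simp only [List.length_cons] at h
      obtain ⟨j, hj⟩ := ih bs p q (by omega)
      exact ⟨j, by simp [hj]⟩

/-! ### Automata helpers -/

lemma isRegular_of_finite_dfa {T : Type*} {σ : Type*} [Finite σ] (M : DFA T σ) :
    M.accepts.IsRegular := by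
  cases nonempty_fintype σ
  exact ⟨Fin (Fintype.card σ), inferInstance, (DFA.reindex (Fintype.equivFin σ)) M, by simp⟩

section NFAaux

variable {T : Type*} {σ : Type*} (N : NFA T σ)

lemma nfa_evalFrom_cons (S : Set σ) (a : T) (w : List T) :
    N.evalFrom S (a :: w) = N.evalFrom (N.stepSet S a) w := rfl

lemma nfa_evalFrom_append (S : Set σ) (x y : List T) :
    N.evalFrom S (x ++ y) = N.evalFrom (N.evalFrom S x) y := by
  simp [NFA.evalFrom, List.foldl_append]

lemma nfa_stepSet_mono {S S' : Set σ} (h : S ⊆ S') (a : T) :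
    N.stepSet S a ⊆ N.stepSet S' a := by
  intro q hq
  rw [NFA.mem_stepSet] at hq ⊢
  obtain ⟨p, hp, hq⟩ := hq
  exact ⟨p, h hp, hq⟩

lemma nfa_evalFrom_mono {S S' : Set σ} (h : S ⊆ S') (w : List T) :
    N.evalFrom S w ⊆ N.evalFrom S' w := by
  induction w generalizing S S' with
  | nil => exact h
  | cons a w ih =>
    rw [nfa_evalFrom_cons, nfa_evalFrom_cons]
    exact ih (nfa_stepSet_mono N h a)

lemma nfa_mem_evalFrom_cons {q q' p : σ} {a : T} {w : List T}
    (h1 : q' ∈ N.step q a) (h2 : p ∈ N.evalFrom {q'} w) :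
    p ∈ N.evalFrom {q} (a :: w) := by
  rw [nfa_evalFrom_cons]
  refine nfa_evalFrom_mono N ?_ w h2
  intro x hx
  rw [NFA.mem_stepSet]
  exact ⟨q, rfl, by simpa [Set.mem_singleton_iff.mp hx]⟩

lemma nfa_mem_evalFrom_trans {S : Set σ} {p r : σ} {x y : List T}
    (h : p ∈ N.evalFrom S x) (h2 : r ∈ N.evalFrom {p} y) :
    r ∈ N.evalFrom S (x ++ y) := by
  rw [nfa_evalFrom_append]
  exact nfa_evalFrom_mono N (Set.singleton_subset_iff.mpr h) y h2

end NFAaux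

/-! ### Transducers and image of a regular language under a transducer -/

section Transducer

variable {A B : Type*} {τ : Type*}

/-- concatenated output of a finite-state transducer along a word -/
def tOutC (stp : τ → A → τ) (out : τ → A → List B) : τ → List A → List B
  | _, [] => []
  | t, a :: w => out t a ++ tOutC stp out (stp t a) w

/-- final state of the transducer -/
def tEnd (stp : τ → A → τ) : τ → List A → τ
  | t, [] => t
  | t, a :: w => tEnd stp (stp t a) w

/-- the function computed by a transducer with a final-output map -/
def tFun (stp : τ → A → τ) (out : τ → A → List B) (fout : τ → List B) (init : τ)
    (w : List A) : List B :=
  tOutC stp out init w ++ fout (tEnd stp init w)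

@[simp] lemma tOutC_nil (stp : τ → A → τ) (out : τ → A → List B) (t : τ) :
    tOutC stp out t [] = [] := by rw [tOutC]

@[simp] lemma tOutC_cons (stp : τ → A → τ) (out : τ → A → List B) (t : τ) (a : A) (w : List A) :
    tOutC stp out t (a :: w) = out t a ++ tOutC stp out (stp t a) w := by rw [tOutC]

@[simp] lemma tEnd_nil (stp : τ → A → τ) (t : τ) : tEnd stp t [] = t := by rw [tEnd]

@[simp] lemma tEnd_cons (stp : τ → A → τ) (t : τ) (a : A) (w : List A) :
    tEnd stp t (a :: w) = tEnd stp (stp t a) w := by rw [tEnd]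

lemma tOutC_append_singleton (stp : τ → A → τ) (out : τ → A → List B) (t : τ)
    (u : List A) (a : A) :
    tOutC stp out t (u ++ [a]) = tOutC stp out t u ++ out (tEnd stp t u) a := by
  induction u generalizing t with
  | nil => simp
  | cons b u ih => simp [ih]

lemma tEnd_append_singleton (stp : τ → A → τ) (t : τ) (u : List A) (a : A) :
    tEnd stp t (u ++ [a]) = stp (tEnd stp t u) a := by
  induction u generalizing t with
  | nil => simp
  | cons b u ih => simp [ih]

instance optFinite {B : Type u} [Finite B] : Finite (Option B) :=
  Finite.of_equiv (B ⊕ PUnit.{u+1}) (Equiv.optionEquivSumPUnit.{u,u} B).symm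

variable {σM : Type*}

/-- state space for the image NFA -/
def TSt (σM τ B : Type*) (B0 : ℕ) : Type _ :=
  (σM × τ × {l : List B // l.length ≤ B0}) ⊕ {l : List B // l.length ≤ B0}

instance TSt.finite {σM τ B : Type*} [Finite σM] [Finite τ] [Finite B] (B0 : ℕ) :
    Finite (TSt σM τ B B0) := by
  have : Finite {l : List B // l.length ≤ B0} := by
    refine Finite.of_injective (fun l => (fun i : Fin (B0 + 1) => l.val[(i : ℕ)]?)) ?_
    intro l l' h
    apply Subtype.ext
    apply List.ext_getElem?
    intro n
    by_cases hn : n < B0 + 1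
    · exact congrFun h ⟨n, hn⟩
    · rw [List.getElem?_eq_none, List.getElem?_eq_none] <;> omega
  unfold TSt
  infer_instance

/-- The NFA accepting the image of `M.accepts` under the transducer. -/
def imgNFA (M : DFA A σM) (stp : τ → A → τ) (out : τ → A → List B) (fout : τ → List B)
    (init : τ) (B0 : ℕ) : NFA B (TSt σM τ B B0) where
  step s y :=
    match s with
    | .inl (q, t, pend) =>
      {s' | (∃ p' : {l : List B // l.length ≤ B0}, pend.val = y :: p'.val ∧
              s' = .inl (q, t, p'))
        ∨ (pend.val = [] ∧ ∃ a, ∃ p' : {l : List B // l.length ≤ B0},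
              out t a = y :: p'.val ∧ s' = .inl (M.step q a, stp t a, p'))
        ∨ (pend.val = [] ∧ q ∈ M.accept ∧ ∃ p' : {l : List B // l.length ≤ B0},
              fout t = y :: p'.val ∧ s' = .inr p')}
    | .inr rem =>
      {s' | ∃ p' : {l : List B // l.length ≤ B0}, rem.val = y :: p'.val ∧ s' = .inr p'}
  start := {.inl (M.start, init, ⟨[], by simp⟩)}
  accept := {s | match s with
    | .inl (q, t, pend) => pend.val = [] ∧ q ∈ M.accept ∧ fout t = []
    | .inr rem => rem.val = []}

theorem List.list_reverse_induction {α : Type _} (p : List α → Prop) (base : p [])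
    (ind : ∀ (l : List α) (e : α), p l → p (l ++ [e])) : (l : List α) → p l :=
  fun l => List.reverseRecOn l base (fun l e h => ind l e h)

section ImgCorrect

variable {A B : Type*} {τ σM : Type*}
variable (M : DFA A σM) (stp : τ → A → τ) (out : τ → A → List B) (fout : τ → List B)
variable (init : τ) (B0 : ℕ)


lemma img_chunk_run (l : List B) (hl : l.length ≤ B0) (q : σM) (t : τ) :
    (Sum.inl (q, t, ⟨[], by simp⟩) : TSt σM τ B B0) ∈
      (imgNFA M stp out fout init B0).evalFrom {Sum.inl (q, t, ⟨l, hl⟩)} l := by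
  induction l with
  | nil => rfl
  | cons y l' ih =>
    refine nfa_mem_evalFrom_cons _ (q' := Sum.inl (q, t, ⟨l', by
      simp only [List.length_cons] at hl; omega⟩)) ?_ (ih _)
    exact Or.inl ⟨_, rfl, rfl⟩

lemma img_outC_run (hout : ∀ t a, (out t a).length ≤ B0) (hne : ∀ t a, out t a ≠ [])
    (u : List A) (q : σM) (t : τ) :
    (Sum.inl (M.evalFrom q u, tEnd stp t u, ⟨[], by simp⟩) : TSt σM τ B B0) ∈
      (imgNFA M stp out fout init B0).evalFrom {Sum.inl (q, t, ⟨[], by simp⟩)} (tOutC stp out t u) := by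
  induction u generalizing q t with
  | nil => exact Set.mem_singleton _
  | cons a u ih =>
    rw [tOutC_cons]
    rcases hy : out t a with _ | ⟨y, p'⟩
    · exact absurd hy (hne t a)
    have hp' : p'.length ≤ B0 := by
      have := hout t a; rw [hy] at this; simp only [List.length_cons] at this; omega
    rw [List.cons_append]
    refine nfa_mem_evalFrom_cons _ (q' := Sum.inl (M.step q a, stp t a, ⟨p', hp'⟩)) ?_ ?_
    · exact Or.inr (Or.inl ⟨rfl, a, ⟨p', hp'⟩, hy, rfl⟩)
    · refine nfa_mem_evalFrom_trans _ (img_chunk_run M stp out fout init B0 p' hp' _ _) ?_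
      exact ih _ _

lemma img_rem_run (l : List B) (hl : l.length ≤ B0) :
    (Sum.inr ⟨[], by simp⟩ : TSt σM τ B B0) ∈ (imgNFA M stp out fout init B0).evalFrom {Sum.inr ⟨l, hl⟩} l := by
  induction l with
  | nil => rfl
  | cons y l' ih =>
    refine nfa_mem_evalFrom_cons _ (q' := Sum.inr ⟨l', by
      simp only [List.length_cons] at hl; omega⟩) ?_ (ih _)
    exact ⟨_, rfl, rfl⟩

lemma img_complete (hout : ∀ t a, (out t a).length ≤ B0) (hne : ∀ t a, out t a ≠ [])
    (hfin : ∀ t, (fout t).length ≤ B0) (u : List A) (hu : u ∈ M.accepts) :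
    tFun stp out fout init u ∈ (imgNFA M stp out fout init B0).accepts := by
  rw [NFA.mem_accepts]
  rw [DFA.mem_accepts] at hu
  have hrun := img_outC_run M stp out fout init B0 hout hne u M.start init
  rcases hf : fout (tEnd stp init u) with _ | ⟨y, rest⟩
  · refine ⟨Sum.inl (M.evalFrom M.start u, tEnd stp init u, ⟨[], by simp⟩), ?_, ?_⟩
    · exact ⟨rfl, hu, hf⟩
    · show _ ∈ (imgNFA M stp out fout init B0).evalFrom (imgNFA M stp out fout init B0).start (tFun stp out fout init u)
      rw [tFun, hf, List.append_nil]
      exact hrun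
  · have hrest : rest.length ≤ B0 := by
      have := hfin (tEnd stp init u); rw [hf] at this
      simp only [List.length_cons] at this; omega
    refine ⟨Sum.inr ⟨[], by simp⟩, rfl, ?_⟩
    show _ ∈ (imgNFA M stp out fout init B0).evalFrom (imgNFA M stp out fout init B0).start (tFun stp out fout init u)
    rw [tFun, hf]
    refine nfa_mem_evalFrom_trans _ hrun ?_
    refine nfa_mem_evalFrom_cons _ (q' := Sum.inr ⟨rest, hrest⟩) ?_ ?_
    · exact Or.inr (Or.inr ⟨rfl, hu, ⟨rest, hrest⟩, hf, rfl⟩)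
    · exact img_rem_run M stp out fout init B0 rest hrest

lemma img_inv (w' : List B) (s : TSt σM τ B B0) (hs : s ∈ (imgNFA M stp out fout init B0).evalFrom (imgNFA M stp out fout init B0).start w') :
    (∀ q t pend, s = Sum.inl (q, t, pend) →
      ∃ u, q = M.evalFrom M.start u ∧ t = tEnd stp init u ∧
        w' ++ pend.val = tOutC stp out init u) ∧
    (∀ rem : {l : List B // l.length ≤ B0}, s = Sum.inr rem →
      ∃ u, M.evalFrom M.start u ∈ M.accept ∧
        w' ++ rem.val = tFun stp out fout init u) := by
  induction w' using List.list_reverse_induction generalizing s with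
  | base =>
    rw [NFA.evalFrom_nil] at hs
    have hs' : s = Sum.inl (M.start, init, ⟨[], by simp⟩) := hs
    constructor
    · intro q t pend heq
      rw [hs'] at heq
      obtain ⟨h1, h2, h3⟩ : q = M.start ∧ t = init ∧ pend = ⟨[], by simp⟩ := by
        simpa [Prod.ext_iff] using Sum.inl.inj heq.symm
      exact ⟨[], by simp [h1, h2, h3]⟩
    · intro rem heq
      rw [hs'] at heq
      simp at heq
  | ind l y ih =>
    rw [nfa_evalFrom_append] at hs
    rw [NFA.evalFrom_singleton, NFA.mem_stepSet] at hs
    obtain ⟨s0, hs0, hstep⟩ := hs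
    rcases s0 with ⟨q0, t0, pend0⟩ | rem0
    · have inv0 := (ih _ hs0).1 q0 t0 pend0 rfl
      obtain ⟨u, hq, ht, hw⟩ := inv0
      rcases hstep with ⟨p', hp, hseq⟩ | ⟨hpe, a, p', hop, hseq⟩ | ⟨hpe, hacc, p', hfp, hseq⟩
      · constructor
        · intro q t pend heq
          rw [hseq] at heq
          obtain ⟨h1, h2, h3⟩ : q0 = q ∧ t0 = t ∧ p' = pend := by
            simpa [Prod.ext_iff] using Sum.inl.inj heq
          refine ⟨u, h1 ▸ hq, h2 ▸ ht, ?_⟩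
          rw [← h3, ← hw, hp]
          simp
        · intro rem heq; rw [hseq] at heq; simp at heq
      · constructor
        · intro q t pend heq
          rw [hseq] at heq
          obtain ⟨h1, h2, h3⟩ : M.step q0 a = q ∧ stp t0 a = t ∧ p' = pend := by
            simpa [Prod.ext_iff] using Sum.inl.inj heq
          refine ⟨u ++ [a], ?_, ?_, ?_⟩
          · rw [← h1, hq, DFA.evalFrom_append_singleton]
          · rw [← h2, ht, tEnd_append_singleton]
          · rw [tOutC_append_singleton, ← ht, ← hw, hpe, ← h3, List.append_nil, hop]
            simp
        · intro rem heq; rw [hseq] at heq; simp at heq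
      · constructor
        · intro q t pend heq; rw [hseq] at heq; simp at heq
        · intro rem heq
          rw [hseq] at heq
          have h3 : p' = rem := Sum.inr.inj heq
          refine ⟨u, hq ▸ hacc, ?_⟩
          rw [tFun, ← ht, ← hw, hpe, ← h3, List.append_nil, hfp]
          simp
    · obtain ⟨u, hacc, hw⟩ := (ih _ hs0).2 rem0 rfl
      obtain ⟨p', hp, hseq⟩ := hstep
      constructor
      · intro q t pend heq; rw [hseq] at heq; simp at heq
      · intro rem heq
        rw [hseq] at heq
        have h3 : p' = rem := Sum.inr.inj heq
        refine ⟨u, hacc, ?_⟩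
        rw [← h3, ← hw, hp]
        simp

lemma img_sound (w' : List B) (hw : w' ∈ (imgNFA M stp out fout init B0).accepts) :
    ∃ u ∈ M.accepts, w' = tFun stp out fout init u := by
  rw [NFA.mem_accepts] at hw
  obtain ⟨s, hacc, hs⟩ := hw
  have hinv := img_inv M stp out fout init B0 w' s hs
  rcases s with ⟨q, t, pend⟩ | rem
  · obtain ⟨hpe, hq, hf⟩ := hacc
    obtain ⟨u, h1, h2, h3⟩ := hinv.1 q t pend rfl
    refine ⟨u, by rw [DFA.mem_accepts]; show M.evalFrom M.start u ∈ M.accept; rw [← h1]; exact hq, ?_⟩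
    rw [tFun, ← h2, hf, List.append_nil, ← h3, hpe, List.append_nil]
  · have hre : rem.val = [] := hacc
    obtain ⟨u, h1, h2⟩ := hinv.2 rem rfl
    refine ⟨u, h1, ?_⟩
    rw [← h2, hre, List.append_nil]

lemma img_regular [Finite B] [Finite σM] [Finite τ]
    (hout : ∀ t a, (out t a).length ≤ B0) (hne : ∀ t a, out t a ≠ [])
    (hfin : ∀ t, (fout t).length ≤ B0) :
    Language.IsRegular ((tFun stp out fout init) '' M.accepts) := by
  have key : ((imgNFA M stp out fout init B0).toDFA).accepts = (tFun stp out fout init) '' M.accepts := by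
    rw [NFA.toDFA_correct]
    ext w'
    constructor
    · intro hw
      obtain ⟨u, hu, he⟩ := img_sound M stp out fout init B0 w' hw
      exact ⟨u, hu, he.symm⟩
    · rintro ⟨u, hu, rfl⟩
      exact img_complete M stp out fout init B0 hout hne hfin u hu
  rw [← key]
  have : Finite (Set (TSt σM τ B B0)) := by infer_instance
  exact isRegular_of_finite_dfa _

lemma img_regular' [Finite B] [Finite σM] [Finite τ] {L : Language A}
    (hL : L = M.accepts)
    (hout : ∀ t a, (out t a).length ≤ B0) (hne : ∀ t a, out t a ≠ [])
    (hfin : ∀ t, (fout t).length ≤ B0) :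
    Language.IsRegular ((tFun stp out fout init) '' L) := by
  rw [hL]
  exact img_regular M stp out fout init B0 hout hne hfin

end ImgCorrect

end Transducer

/-! ### Composition of regular relations -/

section Comp

variable {α : Type*} {σ1 σ2 : Type*}

open Classical in
/-- `M` with `(⋄,⋄)`-self-loops everywhere. -/
noncomputable def padDFA (M : DFA (Option α × Option α) σ1) : DFA (Option α × Option α) σ1 where
  step q c := if c = ((none : Option α), (none : Option α)) then q else M.step q c
  start := M.start
  accept := M.accept

@[simp] lemma padDFA_step_nn (M : DFA (Option α × Option α) σ1) (q : σ1) :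
    (padDFA M).step q ((none : Option α), (none : Option α)) = q := by
  simp [padDFA]

lemma padDFA_step_ne (M : DFA (Option α × Option α) σ1) (q : σ1)
    {c : Option α × Option α} (h : c ≠ ((none : Option α), none)) :
    (padDFA M).step q c = M.step q c := by
  simp [padDFA, h]

lemma padDFA_evalFrom_eq (M : DFA (Option α × Option α) σ1) (q : σ1) {w : List (Option α × Option α)}
    (h : ((none : Option α), (none : Option α)) ∉ w) :
    (padDFA M).evalFrom q w = M.evalFrom q w := by
  induction w generalizing q with
  | nil => rfl
  | cons c w ih =>
    have hc : c ≠ ((none : Option α), none) := by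
      intro hx; exact h (by rw [hx]; exact List.mem_cons_self)
    show (padDFA M).evalFrom ((padDFA M).step q c) w = M.evalFrom (M.step q c) w
    rw [padDFA_step_ne M q hc]
    exact ih _ (fun hm => h (List.mem_cons_of_mem _ hm))

lemma padDFA_evalFrom_replicate (M : DFA (Option α × Option α) σ1) (q : σ1) (j : ℕ) :
    (padDFA M).evalFrom q (List.replicate j ((none : Option α), (none : Option α))) = q := by
  induction j generalizing q with
  | zero => rfl
  | succ j ih =>
    rw [List.replicate_succ]
    show (padDFA M).evalFrom ((padDFA M).step q _) _ = q
    rw [padDFA_step_nn]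
    exact ih _

/-- NFA for the composition of two regular (synchronous) relations. -/
noncomputable def compNFA (M1 : DFA (Option α × Option α) σ1) (M2 : DFA (Option α × Option α) σ2) :
    NFA (Option α × Option α) (σ1 × σ2 × (Bool × Bool × Bool)) where
  step s c :=
    {s' | ¬(c.1 = none ∧ c.2 = none) ∧
      (c.1.isSome → s.2.2.1 = true) ∧ (c.2.isSome → s.2.2.2.2 = true) ∧
      ∃ y : Option α, (y.isSome → s.2.2.2.1 = true) ∧
        s' = ((padDFA M1).step s.1 (c.1, y), (padDFA M2).step s.2.1 (y, c.2),
              (c.1.isSome, y.isSome, c.2.isSome))}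
  start := {(M1.start, M2.start, (true, true, true))}
  accept := {s | ∃ t : List α,
      (padDFA M1).evalFrom s.1 (t.map fun b => ((none : Option α), some b)) ∈ M1.accept ∧
      (padDFA M2).evalFrom s.2.1 (t.map fun b => (some b, (none : Option α))) ∈ M2.accept}

lemma comp_step_mem (M1 : DFA (Option α × Option α) σ1) (M2 : DFA (Option α × Option α) σ2)
    (q1 : σ1) (q2 : σ2) (f1 fy f2 : Bool) (x z : Option α)
    (hnn : ¬(x = none ∧ z = none)) (h1 : x.isSome → f1 = true) (h2 : z.isSome → f2 = true)
    (y : Option α) (hy : y.isSome → fy = true) :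
    (((padDFA M1).step q1 (x, y), (padDFA M2).step q2 (y, z), (x.isSome, y.isSome, z.isSome))
        : σ1 × σ2 × (Bool × Bool × Bool)) ∈
      (compNFA M1 M2).step (q1, q2, (f1, fy, f2)) (x, z) :=
  ⟨hnn, h1, h2, y, hy, rfl⟩

lemma comp_clm_nil (M1 : DFA (Option α × Option α) σ1) (M2 : DFA (Option α × Option α) σ2) :
    ∀ (w v : List α) (q1 : σ1) (q2 : σ2) (f1 fy f2 : Bool),
    (fy = false → v = []) → (f2 = false → w = []) →
    ∃ s' ∈ (compNFA M1 M2).evalFrom {(q1, q2, (f1, fy, f2))} (conv [] w),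
      (padDFA M1).evalFrom s'.1
          ((v.drop w.length).map (fun b => ((none : Option α), some b)))
        = (padDFA M1).evalFrom q1 (conv [] v) ∧
      (padDFA M2).evalFrom s'.2.1
          ((v.drop w.length).map (fun b => (some b, (none : Option α))))
        = (padDFA M2).evalFrom q2 (conv v w) := by
  intro w
  induction w with
  | nil =>
    intro v q1 q2 f1 fy f2 _ _
    refine ⟨(q1, q2, (f1, fy, f2)), by simp, ?_, ?_⟩
    · rw [conv_nil_left]; simp
    · rw [conv_nil_right]; simp
  | cons c w' ihw =>
    intro v q1 q2 f1 fy f2 hfy hf2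
    have hf2t : f2 = true := by
      cases f2
      · exact absurd (hf2 rfl) (by simp)
      · rfl
    cases v with
    | nil =>
      obtain ⟨s', hs', hc1, hc2⟩ := ihw [] ((padDFA M1).step q1 (none, none))
        ((padDFA M2).step q2 (none, some c)) false false true
        (fun _ => rfl) (fun h => Bool.noConfusion h)
      refine ⟨s', ?_, ?_, ?_⟩
      · rw [conv_nil_cons]
        exact nfa_mem_evalFrom_cons _ (comp_step_mem M1 M2 q1 q2 f1 fy f2 none (some c)
          (by simp) (by simp) (fun _ => hf2t) none (by simp)) hs'
      · simpa using hc1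
      · rw [conv_nil_cons]
        show _ = (padDFA M2).evalFrom ((padDFA M2).step q2 (none, some c)) (conv [] w')
        simpa using hc2
    | cons b v' =>
      have hfyt : fy = true := by
        cases fy
        · exact absurd (hfy rfl) (by simp)
        · rfl
      obtain ⟨s', hs', hc1, hc2⟩ := ihw v' ((padDFA M1).step q1 (none, some b))
        ((padDFA M2).step q2 (some b, some c)) false true true
        (fun h => Bool.noConfusion h) (fun h => Bool.noConfusion h)
      refine ⟨s', ?_, ?_, ?_⟩
      · rw [conv_nil_cons]
        exact nfa_mem_evalFrom_cons _ (comp_step_mem M1 M2 q1 q2 f1 fy f2 none (some c)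
          (by simp) (by simp) (fun _ => hf2t) (some b) (fun _ => hfyt)) hs'
      · rw [conv_nil_cons]
        show _ = (padDFA M1).evalFrom ((padDFA M1).step q1 (none, some b)) (conv [] v')
        simpa using hc1
      · rw [conv_cons_cons]
        show _ = (padDFA M2).evalFrom ((padDFA M2).step q2 (some b, some c)) (conv v' w')
        simpa using hc2

lemma comp_clm (M1 : DFA (Option α × Option α) σ1) (M2 : DFA (Option α × Option α) σ2) :
    ∀ (u v w : List α) (q1 : σ1) (q2 : σ2) (f1 fy f2 : Bool),
    (f1 = false → u = []) → (fy = false → v = []) → (f2 = false → w = []) →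
    ∃ s' ∈ (compNFA M1 M2).evalFrom {(q1, q2, (f1, fy, f2))} (conv u w),
      (padDFA M1).evalFrom s'.1
          ((v.drop (max u.length w.length)).map (fun b => ((none : Option α), some b)))
        = (padDFA M1).evalFrom q1 (conv u v) ∧
      (padDFA M2).evalFrom s'.2.1
          ((v.drop (max u.length w.length)).map (fun b => (some b, (none : Option α))))
        = (padDFA M2).evalFrom q2 (conv v w) := by
  intro u
  induction u with
  | nil =>
    intro v w q1 q2 f1 fy f2 _ hfy hf2
    simpa using comp_clm_nil M1 M2 w v q1 q2 f1 fy f2 hfy hf2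
  | cons a u' ihu =>
    intro v w q1 q2 f1 fy f2 hf1 hfy hf2
    have hf1t : f1 = true := by
      cases f1
      · exact absurd (hf1 rfl) (by simp)
      · rfl
    cases w with
    | nil =>
      cases v with
      | nil =>
        obtain ⟨s', hs', hc1, hc2⟩ := ihu [] [] ((padDFA M1).step q1 (some a, none))
          ((padDFA M2).step q2 (none, none)) true false false
          (fun h => Bool.noConfusion h) (fun _ => rfl) (fun _ => rfl)
        refine ⟨s', ?_, ?_, ?_⟩
        · rw [conv_cons_nil]
          exact nfa_mem_evalFrom_cons _ (comp_step_mem M1 M2 q1 q2 f1 fy f2 (some a) none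
            (by simp) (fun _ => hf1t) (by simp) none (by simp)) hs'
        · rw [conv_cons_nil]
          show _ = (padDFA M1).evalFrom ((padDFA M1).step q1 (some a, none)) (conv u' [])
          simpa using hc1
        · simpa using hc2
      | cons b v' =>
        have hfyt : fy = true := by
          cases fy
          · exact absurd (hfy rfl) (by simp)
          · rfl
        obtain ⟨s', hs', hc1, hc2⟩ := ihu v' [] ((padDFA M1).step q1 (some a, some b))
          ((padDFA M2).step q2 (some b, none)) true true false
          (fun h => Bool.noConfusion h) (fun h => Bool.noConfusion h) (fun _ => rfl)
        refine ⟨s', ?_, ?_, ?_⟩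
        · rw [conv_cons_nil]
          exact nfa_mem_evalFrom_cons _ (comp_step_mem M1 M2 q1 q2 f1 fy f2 (some a) none
            (by simp) (fun _ => hf1t) (by simp) (some b) (fun _ => hfyt)) hs'
        · rw [conv_cons_cons]
          show _ = (padDFA M1).evalFrom ((padDFA M1).step q1 (some a, some b)) (conv u' v')
          simpa using hc1
        · rw [conv_cons_nil]
          show _ = (padDFA M2).evalFrom ((padDFA M2).step q2 (some b, none)) (conv v' [])
          simpa using hc2
    | cons c w' =>
      have hf2t : f2 = true := by
        cases f2
        · exact absurd (hf2 rfl) (by simp)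
        · rfl
      cases v with
      | nil =>
        obtain ⟨s', hs', hc1, hc2⟩ := ihu [] w' ((padDFA M1).step q1 (some a, none))
          ((padDFA M2).step q2 (none, some c)) true false true
          (fun h => Bool.noConfusion h) (fun _ => rfl) (fun h => Bool.noConfusion h)
        refine ⟨s', ?_, ?_, ?_⟩
        · rw [conv_cons_cons]
          exact nfa_mem_evalFrom_cons _ (comp_step_mem M1 M2 q1 q2 f1 fy f2 (some a) (some c)
            (by simp) (fun _ => hf1t) (fun _ => hf2t) none (by simp)) hs'
        · rw [conv_cons_nil]
          show _ = (padDFA M1).evalFrom ((padDFA M1).step q1 (some a, none)) (conv u' [])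
          simpa [Nat.succ_max_succ] using hc1
        · rw [conv_nil_cons]
          show _ = (padDFA M2).evalFrom ((padDFA M2).step q2 (none, some c)) (conv [] w')
          simpa [Nat.succ_max_succ] using hc2
      | cons b v' =>
        have hfyt : fy = true := by
          cases fy
          · exact absurd (hfy rfl) (by simp)
          · rfl
        obtain ⟨s', hs', hc1, hc2⟩ := ihu v' w' ((padDFA M1).step q1 (some a, some b))
          ((padDFA M2).step q2 (some b, some c)) true true true
          (fun h => Bool.noConfusion h) (fun h => Bool.noConfusion h) (fun h => Bool.noConfusion h)
        refine ⟨s', ?_, ?_, ?_⟩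
        · rw [conv_cons_cons]
          exact nfa_mem_evalFrom_cons _ (comp_step_mem M1 M2 q1 q2 f1 fy f2 (some a) (some c)
            (by simp) (fun _ => hf1t) (fun _ => hf2t) (some b) (fun _ => hfyt)) hs'
        · rw [conv_cons_cons]
          show _ = (padDFA M1).evalFrom ((padDFA M1).step q1 (some a, some b)) (conv u' v')
          simpa [Nat.succ_max_succ] using hc1
        · rw [conv_cons_cons]
          show _ = (padDFA M2).evalFrom ((padDFA M2).step q2 (some b, some c)) (conv v' w')
          simpa [Nat.succ_max_succ] using hc2

lemma filterMap_fst_pad1 (t : List α) :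
    (t.map fun b => ((none : Option α), some b)).filterMap (fun c => c.1) = [] := by
  induction t with
  | nil => rfl
  | cons b t ih => simpa using ih

lemma filterMap_snd_pad1 (t : List α) :
    (t.map fun b => ((none : Option α), some b)).filterMap (fun c => c.2) = t := by
  induction t with
  | nil => rfl
  | cons b t ih => simpa using ih

lemma filterMap_fst_pad2 (t : List α) :
    (t.map fun b => (some b, (none : Option α))).filterMap (fun c => c.1) = t := by
  induction t with
  | nil => rfl
  | cons b t ih => simpa using ih

lemma filterMap_snd_pad2 (t : List α) :
    (t.map fun b => (some b, (none : Option α))).filterMap (fun c => c.2) = [] := by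
  induction t with
  | nil => rfl
  | cons b t ih => simpa using ih

lemma comp_inv (M1 : DFA (Option α × Option α) σ1) (M2 : DFA (Option α × Option α) σ2)
    (w_in : List (Option α × Option α)) (s : σ1 × σ2 × (Bool × Bool × Bool))
    (hs : s ∈ (compNFA M1 M2).evalFrom (compNFA M1 M2).start w_in) :
    ∃ u0 v0 w0 : List α,
      w_in = conv u0 w0 ∧
      v0.length ≤ w_in.length ∧
      (s.2.2.1 = true → u0.length = w_in.length) ∧
      (s.2.2.2.1 = true → v0.length = w_in.length) ∧
      (s.2.2.2.2 = true → w0.length = w_in.length) ∧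
      s.1 = (padDFA M1).evalFrom M1.start
        (List.zip (w_in.map (fun c => c.1))
          (v0.map some ++ List.replicate (w_in.length - v0.length) none)) ∧
      s.2.1 = (padDFA M2).evalFrom M2.start
        (List.zip (v0.map some ++ List.replicate (w_in.length - v0.length) none)
          (w_in.map (fun c => c.2))) := by
  induction w_in using List.list_reverse_induction generalizing s with
  | base =>
    rw [NFA.evalFrom_nil] at hs
    have hs' : s = (M1.start, M2.start, (true, true, true)) := hs
    subst hs'
    exact ⟨[], [], [], by simp, by simp, by simp, by simp, by simp, rfl, rfl⟩
  | ind l c ih =>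
    rw [nfa_evalFrom_append, NFA.evalFrom_singleton, NFA.mem_stepSet] at hs
    obtain ⟨s0, hs0, hstep⟩ := hs
    obtain ⟨p1, p2, f1, fy, f2⟩ := s0
    obtain ⟨u0, v0, w0, hconv, hv0, hu0l, hv0l, hw0l, he1, he2⟩ := ih _ hs0
    obtain ⟨x, z⟩ := c
    obtain ⟨hnn, hx1, hz2, y, hyy, seq⟩ := hstep
    simp only at hnn hx1 hz2 hyy seq
    have hlen : l.length = max u0.length w0.length := by rw [hconv, length_conv]
    have hu0le : u0.length ≤ l.length := by omega
    have hw0le : w0.length ≤ l.length := by omega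
    have hyslen : (v0.map some ++ List.replicate (l.length - v0.length)
        (none : Option α)).length = l.length := by
      simp; omega
    -- new words
    refine ⟨u0 ++ x.toList, v0 ++ y.toList, w0 ++ z.toList, ?_, ?_, ?_, ?_, ?_, ?_, ?_⟩
    · -- conv identity
      rcases x with _ | a <;> rcases z with _ | c
      · exact absurd ⟨rfl, rfl⟩ hnn
      · -- x = none, z = some c
        have : u0.length ≤ w0.length := by
          have := hz2 rfl; have := hw0l this; omega
        rw [hconv, Option.toList_none, Option.toList_some, List.append_nil,
          conv_left_le this [c]]
        simp
      · -- x = some a, z = none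
        have : w0.length ≤ u0.length := by
          have := hx1 rfl; have := hu0l this; omega
        rw [hconv, Option.toList_none, Option.toList_some, List.append_nil,
          conv_right_le this [a]]
        simp
      · -- both some
        have h1 : u0.length = l.length := hu0l (hx1 rfl)
        have h2 : w0.length = l.length := hw0l (hz2 rfl)
        rw [hconv, Option.toList_some, Option.toList_some, conv_append (by omega) [a] [c]]
        simp
    · simp only [List.length_append, List.length_append]
      rcases y with _ | b
      · simp only [Option.toList_none, List.length_nil]; omega
      · simp only [Option.toList_some]; simp; omega
    · rw [seq]
      rcases x with _ | a
      · simp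
      · intro _
        have h1 : u0.length = l.length := hu0l (hx1 rfl)
        simp [h1]
    · rw [seq]
      rcases y with _ | b
      · simp
      · intro _
        have h1 : v0.length = l.length := hv0l (hyy rfl)
        simp [h1]
    · rw [seq]
      rcases z with _ | c
      · simp
      · intro _
        have h1 : w0.length = l.length := hw0l (hz2 rfl)
        simp [h1]
    · -- first coordinate evaluation
      rw [seq]
      show (padDFA M1).step p1 (x, y) = _
      have hys' : (v0 ++ y.toList).map some ++
          List.replicate ((l ++ [(x, z)]).length - (v0 ++ y.toList).length) (none : Option α)
          = (v0.map some ++ List.replicate (l.length - v0.length) none) ++ [y] := by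
        rcases y with _ | b
        · simp only [Option.toList_none, List.append_nil, List.length_append,
            List.length_cons, List.length_nil]
          rw [List.append_assoc, ← List.replicate_succ']
          congr 2
          omega
        · have h1 : v0.length = l.length := hv0l (hyy rfl)
          simp [h1]
      rw [hys', List.map_append, List.zip_append (by simp; omega)]
      simp only [List.map_cons, List.map_nil, List.zip_cons_cons, List.zip_nil_right]
      rw [DFA.evalFrom_append_singleton, ← he1]
    · -- second coordinate evaluation
      rw [seq]
      show (padDFA M2).step p2 (y, z) = _
      have hys' : (v0 ++ y.toList).map some ++
          List.replicate ((l ++ [(x, z)]).length - (v0 ++ y.toList).length) (none : Option α)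
          = (v0.map some ++ List.replicate (l.length - v0.length) none) ++ [y] := by
        rcases y with _ | b
        · simp only [Option.toList_none, List.append_nil, List.length_append,
            List.length_cons, List.length_nil]
          rw [List.append_assoc, ← List.replicate_succ']
          congr 2
          omega
        · have h1 : v0.length = l.length := hv0l (hyy rfl)
          simp [h1]
      rw [hys', List.map_append, List.zip_append (by simp; omega)]
      simp only [List.map_cons, List.map_nil, List.zip_cons_cons, List.zip_nil_right]
      rw [DFA.evalFrom_append_singleton, ← he2]

lemma pad_skip_mid (M : DFA (Option α × Option α) σ1) (q : σ1)
    (x : List (Option α × Option α)) (j : ℕ) (y : List (Option α × Option α)) :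
    (padDFA M).evalFrom q (x ++ List.replicate j ((none : Option α), (none : Option α)) ++ y)
      = (padDFA M).evalFrom q (x ++ y) := by
  rw [DFA.evalFrom_of_append, DFA.evalFrom_of_append, DFA.evalFrom_of_append,
    padDFA_evalFrom_replicate]

lemma comp_sound (M1 : DFA (Option α × Option α) σ1) (M2 : DFA (Option α × Option α) σ2)
    (R1 R2 : Set (List α × List α))
    (hM1 : M1.accepts = {w | ∃ p ∈ R1, w = conv p.1 p.2})
    (hM2 : M2.accepts = {w | ∃ p ∈ R2, w = conv p.1 p.2})
    (w_in : List (Option α × Option α)) (hw : w_in ∈ (compNFA M1 M2).accepts) :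
    ∃ p ∈ {p : List α × List α | ∃ v, (p.1, v) ∈ R1 ∧ (v, p.2) ∈ R2}, w_in = conv p.1 p.2 := by
  rw [NFA.mem_accepts] at hw
  obtain ⟨s, hacc, hs⟩ := hw
  obtain ⟨t, ht1, ht2⟩ := hacc
  obtain ⟨u0, v0, w0, hconv, hv0, _, _, _, he1, he2⟩ := comp_inv M1 M2 w_in s hs
  have hlen : w_in.length = max u0.length w0.length := by rw [hconv, length_conv]
  have hu0le : u0.length ≤ w_in.length := by omega
  have hw0le : w0.length ≤ w_in.length := by omega
  -- W1 in conv-shape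
  obtain ⟨j1, hW1⟩ := zip_shape u0 v0 (w0.length - u0.length) (w_in.length - v0.length)
    (by omega)
  obtain ⟨j2, hW2⟩ := zip_shape v0 w0 (w_in.length - v0.length) (u0.length - w0.length)
    (by omega)
  have hmf : w_in.map (fun c => c.1) = u0.map some ++
      List.replicate (w0.length - u0.length) (none : Option α) := by
    rw [hconv, map_fst_conv]
  have hms : w_in.map (fun c => c.2) = w0.map some ++
      List.replicate (u0.length - w0.length) (none : Option α) := by
    rw [hconv, map_snd_conv]
  -- side 1
  have hkey1 : M1.evalFrom M1.start (conv u0 v0 ++ (t.map fun b =>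
      ((none : Option α), some b))) ∈ M1.accept := by
    have e1 : (padDFA M1).evalFrom M1.start (conv u0 v0 ++ (t.map fun b =>
        ((none : Option α), some b))) ∈ M1.accept := by
      have := ht1
      rw [he1, ← DFA.evalFrom_of_append, hmf, hW1, List.append_assoc] at this
      rw [← pad_skip_mid M1 M1.start (conv u0 v0) j1, List.append_assoc]
      exact this
    rw [padDFA_evalFrom_eq] at e1
    · exact e1
    · intro hmem
      rcases List.mem_append.mp hmem with h | h
      · exact nonenone_not_mem_conv _ _ h
      · simp at h
  have hkey2 : M2.evalFrom M2.start (conv v0 w0 ++ (t.map fun b =>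
      (some b, (none : Option α)))) ∈ M2.accept := by
    have e2 : (padDFA M2).evalFrom M2.start (conv v0 w0 ++ (t.map fun b =>
        (some b, (none : Option α)))) ∈ M2.accept := by
      have := ht2
      rw [he2, ← DFA.evalFrom_of_append, hms, hW2, List.append_assoc] at this
      rw [← pad_skip_mid M2 M2.start (conv v0 w0) j2, List.append_assoc]
      exact this
    rw [padDFA_evalFrom_eq] at e2
    · exact e2
    · intro hmem
      rcases List.mem_append.mp hmem with h | h
      · exact nonenone_not_mem_conv _ _ h
      · simp at h
  -- extract relation memberships
  have hw1 : (conv u0 v0 ++ (t.map fun b => ((none : Option α), some b))) ∈ M1.accepts := hkey1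
  have hw2 : (conv v0 w0 ++ (t.map fun b => (some b, (none : Option α)))) ∈ M2.accepts := hkey2
  rw [hM1] at hw1
  rw [hM2] at hw2
  obtain ⟨⟨p1, p2⟩, hp12, he12⟩ := hw1
  obtain ⟨⟨p3, p4⟩, hp34, he34⟩ := hw2
  have hp1 : p1 = u0 := by
    have := congrArg (List.filterMap (fun c => c.1)) he12
    rw [filterMap_fst_conv, List.filterMap_append, filterMap_fst_conv, filterMap_fst_pad1,
      List.append_nil] at this
    exact this.symm
  have hp2 : p2 = v0 ++ t := by
    have := congrArg (List.filterMap (fun c => c.2)) he12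
    rw [filterMap_snd_conv, List.filterMap_append, filterMap_snd_conv, filterMap_snd_pad1]
      at this
    exact this.symm
  have hp3 : p3 = v0 ++ t := by
    have := congrArg (List.filterMap (fun c => c.1)) he34
    rw [filterMap_fst_conv, List.filterMap_append, filterMap_fst_conv, filterMap_fst_pad2]
      at this
    exact this.symm
  have hp4 : p4 = w0 := by
    have := congrArg (List.filterMap (fun c => c.2)) he34
    rw [filterMap_snd_conv, List.filterMap_append, filterMap_snd_conv, filterMap_snd_pad2,
      List.append_nil] at this
    exact this.symm
  refine ⟨(u0, w0), ⟨v0 ++ t, ?_, ?_⟩, hconv⟩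
  · rw [← hp1, ← hp2]; exact hp12
  · rw [← hp3, ← hp4]; exact hp34

lemma comp_regular (R1 R2 : Set (List α × List α))
    (h1 : IsRegularRel R1) (h2 : IsRegularRel R2) :
    IsRegularRel {p : List α × List α | ∃ v, (p.1, v) ∈ R1 ∧ (v, p.2) ∈ R2} := by
  obtain ⟨σ1', i1, M1, hM1⟩ := h1
  obtain ⟨σ2', i2, M2, hM2⟩ := h2
  have key : (compNFA M1 M2).toDFA.accepts =
      {w | ∃ p ∈ {p : List α × List α | ∃ v, (p.1, v) ∈ R1 ∧ (v, p.2) ∈ R2},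
        w = conv p.1 p.2} := by
    rw [NFA.toDFA_correct]
    ext w_in
    constructor
    · intro hw
      exact comp_sound M1 M2 R1 R2 hM1 hM2 w_in hw
    · rintro ⟨⟨u, w⟩, ⟨v, huv, hvw⟩, rfl⟩
      obtain ⟨s', hs', hc1, hc2⟩ := comp_clm M1 M2 u v w M1.start M2.start true true true
        (fun h => Bool.noConfusion h) (fun h => Bool.noConfusion h) (fun h => Bool.noConfusion h)
      rw [NFA.mem_accepts]
      refine ⟨s', ⟨v.drop (max u.length w.length), ?_, ?_⟩, hs'⟩
      · rw [hc1, padDFA_evalFrom_eq M1 M1.start (nonenone_not_mem_conv u v)]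
        have : conv u v ∈ M1.accepts := by
          rw [hM1]; exact ⟨(u, v), huv, rfl⟩
        exact this
      · rw [hc2, padDFA_evalFrom_eq M2 M2.start (nonenone_not_mem_conv v w)]
        have : conv v w ∈ M2.accepts := by
          rw [hM2]; exact ⟨(v, w), hvw, rfl⟩
        exact this
  unfold IsRegularRel
  rw [← key]
  exact isRegular_of_finite_dfa _

end Comp

/-! ### Group words -/

section GroupWords

variable {G : Type*} [Group G] (A : Set G)

lemma eval_nil : eval A [] = 1 := rfl

lemma eval_cons (s : Alph A) (w : List (Alph A)) : eval A (s :: w) = s.val * eval A w := by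
  exact List.prod_cons

lemma eval_append (w1 w2 : List (Alph A)) : eval A (w1 ++ w2) = eval A w1 * eval A w2 := by
  exact (congrArg List.prod (List.map_append (f := Subtype.val) (l₁ := w1) (l₂ := w2))).trans List.prod_append

/-- inverse of a letter -/
def linv (s : Alph A) : Alph A :=
  ⟨(s.val)⁻¹, by
    rcases s.2 with h | h
    · exact Or.inr (by simpa using h)
    · exact Or.inl (by simpa using h)⟩

@[simp] lemma linv_val (s : Alph A) : (linv A s).val = (s.val)⁻¹ := rfl

lemma eval_reverse_inv (w : List (Alph A)) :
    eval A ((w.map (linv A)).reverse) = (eval A w)⁻¹ := by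
  induction w with
  | nil => exact inv_one.symm
  | cons s w ih =>
    rw [List.map_cons, List.reverse_cons, eval_append, ih, eval_cons, eval_cons, eval_nil]
    simp [mul_inv_rev]

lemma exists_word (hgen : Subgroup.closure A = ⊤) (g : G) : ∃ w, eval A w = g := by
  have hg : g ∈ Subgroup.closure A := by rw [hgen]; trivial
  induction hg using Subgroup.closure_induction with
  | mem x hx => exact ⟨[⟨x, Set.mem_union_left _ hx⟩], mul_one x⟩
  | one => exact ⟨[], rfl⟩
  | mul x y _ _ hx hy =>
    obtain ⟨wx, hwx⟩ := hx
    obtain ⟨wy, hwy⟩ := hy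
    exact ⟨wx ++ wy, by rw [eval_append, hwx, hwy]⟩
  | inv x _ hx =>
    obtain ⟨wx, hwx⟩ := hx
    exact ⟨(wx.map (linv A)).reverse, by rw [eval_reverse_inv, hwx]⟩

lemma wordLength_le {g : G} {w : List (Alph A)} (hw : eval A w = g) :
    wordLength A g ≤ w.length := Nat.sInf_le ⟨w, hw, rfl⟩

lemma exists_min_word (hgen : Subgroup.closure A = ⊤) (g : G) :
    ∃ w, eval A w = g ∧ w.length = wordLength A g := by
  have hne : {n | ∃ w : List (Alph A), eval A w = g ∧ w.length = n}.Nonempty := by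
    obtain ⟨w, hw⟩ := exists_word A hgen g
    exact ⟨w.length, w, hw, rfl⟩
  exact Nat.sInf_mem hne

lemma wordLength_mul_le (hgen : Subgroup.closure A = ⊤) (g h : G) :
    wordLength A (g * h) ≤ wordLength A g + wordLength A h := by
  obtain ⟨wg, hwg, hlg⟩ := exists_min_word A hgen g
  obtain ⟨wh, hwh, hlh⟩ := exists_min_word A hgen h
  have : eval A (wg ++ wh) = g * h := by rw [eval_append, hwg, hwh]
  have h2 := wordLength_le A this
  rw [List.length_append] at h2
  omega

lemma wordLength_one : wordLength A (1 : G) = 0 :=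
  Nat.eq_zero_of_le_zero (wordLength_le A (w := []) rfl)

lemma wordLength_eval_le (A' : Set G) (hA'gen : Subgroup.closure A' = ⊤) (C : ℕ)
    (hC : ∀ s : Alph A, wordLength A' s.val ≤ C) (w : List (Alph A)) :
    wordLength A' (eval A w) ≤ C * w.length := by
  induction w with
  | nil => rw [eval_nil, wordLength_one]; exact Nat.zero_le _
  | cons s w ih =>
    rw [eval_cons]
    have h1 := wordLength_mul_le A' hA'gen s.val (eval A w)
    have h2 := hC s
    simp only [List.length_cons]
    calc wordLength A' (s.val * eval A w) ≤ wordLength A' s.val + wordLength A' (eval A w) := h1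
      _ ≤ C + C * w.length := by omega
      _ = C * (w.length + 1) := by ring

lemma wordLength_lipschitz (A' : Set G) (hAgen : Subgroup.closure A = ⊤)
    (hA'gen : Subgroup.closure A' = ⊤) (C : ℕ)
    (hC : ∀ s : Alph A, wordLength A' s.val ≤ C) (g : G) :
    wordLength A' g ≤ C * wordLength A g := by
  obtain ⟨w, hw, hl⟩ := exists_min_word A hAgen g
  calc wordLength A' g = wordLength A' (eval A w) := by rw [hw]
    _ ≤ C * w.length := wordLength_eval_le A A' hA'gen C hC w
    _ = C * wordLength A g := by rw [hl]

lemma hasWord_add_even (x0 : Alph A) {g : G} {n : ℕ}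
    (h : ∃ w : List (Alph A), eval A w = g ∧ w.length = n) (k : ℕ) :
    ∃ w : List (Alph A), eval A w = g ∧ w.length = n + 2 * k := by
  induction k with
  | zero => simpa using h
  | succ k ih =>
    obtain ⟨w, hw, hl⟩ := ih
    refine ⟨w ++ [x0, linv A x0], ?_, ?_⟩
    · rw [eval_append, hw, eval_cons, eval_cons, eval_nil, linv_val]
      simp
    · simp [hl]; ring

lemma key_parity (hgen : Subgroup.closure A = ⊤) (x0 : Alph A) (g : G) (m : ℕ)
    (hm : wordLength A g + 1 ≤ m) :
    (∃ w : List (Alph A), eval A w = g ∧ w.length = m) ∨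
    (∃ w : List (Alph A), eval A w = g * (x0.val)⁻¹ ∧ w.length = m) := by
  obtain ⟨wd, hwd, hld⟩ := exists_min_word A hgen g
  set d := wordLength A g with hd
  by_cases hpar : (m - d) % 2 = 0
  · left
    obtain ⟨w, hw, hl⟩ := hasWord_add_even A x0 ⟨wd, hwd, hld⟩ ((m - d) / 2)
    exact ⟨w, hw, by omega⟩
  · right
    have hbase : ∃ w : List (Alph A), eval A w = g * (x0.val)⁻¹ ∧ w.length = d + 1 := by
      refine ⟨wd ++ [linv A x0], ?_, by simp [hld]⟩
      rw [eval_append, hwd, eval_cons, eval_nil, linv_val, mul_one]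
    obtain ⟨w, hw, hl⟩ := hasWord_add_even A x0 hbase ((m - (d + 1)) / 2)
    exact ⟨w, hw, by omega⟩

lemma key_two (hgen : Subgroup.closure A = ⊤) (x0 : Alph A) (g : G) (m : ℕ)
    (hm : wordLength A g ≤ m) :
    (∃ w : List (Alph A), eval A w = g ∧ w.length = m) ∨
    (∃ w : List (Alph A), eval A w = g ∧ w.length = m + 1) := by
  obtain ⟨wd, hwd, hld⟩ := exists_min_word A hgen g
  set d := wordLength A g with hd
  by_cases hpar : (m - d) % 2 = 0
  · left
    obtain ⟨w, hw, hl⟩ := hasWord_add_even A x0 ⟨wd, hwd, hld⟩ ((m - d) / 2)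
    exact ⟨w, hw, by omega⟩
  · right
    obtain ⟨w, hw, hl⟩ := hasWord_add_even A x0 ⟨wd, hwd, hld⟩ ((m + 1 - d) / 2)
    exact ⟨w, hw, by omega⟩

lemma exists_two_letters (A' : Set G) [Infinite G] (hgen : Subgroup.closure A' = ⊤) :
    ∃ x y : Alph A', x ≠ y := by
  by_contra hcon
  push_neg at hcon
  have hind : ∀ v : List (Alph A'), eval A' v = 1 ∨ ∃ x : Alph A', eval A' v = x.val := by
    intro v
    induction v with
    | nil => exact Or.inl rfl
    | cons t v' ih =>
      rcases ih with h | ⟨x, h⟩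
      · exact Or.inr ⟨t, by rw [eval_cons, h, mul_one]⟩
      · left
        have hxt : x = t := hcon _ _
        have hti : (t.val)⁻¹ = t.val := by
          have := congrArg Subtype.val (hcon (linv A' t) t)
          simpa using this
        rw [eval_cons, h, hxt]
        nth_rewrite 2 [← hti]
        simp
  have hsub : (Set.univ : Set G) ⊆ {1} ∪ Set.range (fun x : Alph A' => x.val) := by
    intro g _
    obtain ⟨w, hw⟩ := exists_word A' hgen g
    rcases hind w with h | ⟨x, h⟩
    · exact Or.inl (by rw [← hw, h]; rfl)
    · exact Or.inr ⟨x, by rw [← hw, h]⟩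
  have hsing : Subsingleton (Alph A') := ⟨fun a b => hcon a b⟩
  have hfin1 : Finite (Alph A') := Finite.of_subsingleton
  have hfin : (({1} : Set G) ∪ Set.range (fun x : Alph A' => x.val)).Finite :=
    (Set.finite_singleton 1).union (Set.finite_range _)
  exact Set.infinite_univ (Set.Finite.subset hfin hsub)

end GroupWords

/-! ### Regularity of relations R_g for arbitrary g -/

section Rel

lemma tFun_cons {A B τ : Type*} (stp : τ → A → τ) (out : τ → A → List B) (fout : τ → List B)
    (t : τ) (a : A) (w : List A) :
    tFun stp out fout t (a :: w) = out t a ++ tFun stp out fout (stp t a) w := by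
  simp [tFun]

lemma tFun_nil {A B τ : Type*} (stp : τ → A → τ) (out : τ → A → List B) (fout : τ → List B)
    (t : τ) : tFun stp out fout t [] = fout t := by
  simp [tFun]

lemma tFun_const_map {γ γ' : Type*} (f : γ → γ') (w : List γ) :
    tFun (fun _ _ => ()) (fun _ c => [f c]) (fun _ => []) () w = w.map f := by
  induction w with
  | nil => rw [tFun_nil]; rfl
  | cons c w ih => rw [tFun_cons, ih]; rfl

lemma map_image_regular {γ γ' : Type*} [Finite γ'] {L : Language γ}
    (h : Language.IsRegular L) (f : γ → γ') :
    Language.IsRegular (List.map f '' L) := by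
  obtain ⟨σ, iσ, M, hM⟩ := h
  have himg := img_regular' M (fun _ _ => ()) (fun _ c => [f c]) (fun _ => []) () 1
    hM.symm (by simp) (by simp) (by simp)
  have heq : (tFun (fun _ _ => ()) (fun _ c => [f c]) (fun _ => []) ()) '' L
      = List.map f '' L := Set.image_congr (fun x _ => tFun_const_map f x)
  rwa [heq] at himg

lemma swap_rel_regular {α : Type*} [Finite α] {R : Set (List α × List α)}
    (h : IsRegularRel R) : IsRegularRel {p | (p.2, p.1) ∈ R} := by
  unfold IsRegularRel at *
  have himg := map_image_regular h (fun c : Option α × Option α => (c.2, c.1))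
  have heq : List.map (fun c : Option α × Option α => (c.2, c.1)) ''
      {w | ∃ p ∈ R, w = conv p.1 p.2}
      = {w | ∃ p ∈ {p : List α × List α | (p.2, p.1) ∈ R}, w = conv p.1 p.2} := by
    ext w
    constructor
    · rintro ⟨w0, ⟨⟨p1, p2⟩, hp, rfl⟩, rfl⟩
      exact ⟨(p2, p1), hp, map_swap_conv p1 p2⟩
    · rintro ⟨⟨p1, p2⟩, hp, rfl⟩
      exact ⟨conv p2 p1, ⟨(p2, p1), hp, rfl⟩, map_swap_conv p2 p1⟩
  rwa [heq] at himg

variable {G : Type*} [Group G] {A : Set G}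

lemma rel_regular_word [Finite (Alph A)] {L : Language (Alph A)} {ψ : List (Alph A) → G}
    (hLreg : Language.IsRegular L) (hbij : Set.BijOn ψ L Set.univ)
    (hrel : ∀ a ∈ A, IsRegularRel {p : List (Alph A) × List (Alph A) |
      p.1 ∈ L ∧ p.2 ∈ L ∧ ψ p.2 = ψ p.1 * a}) (w : List (Alph A)) :
    IsRegularRel {p : List (Alph A) × List (Alph A) |
      p.1 ∈ L ∧ p.2 ∈ L ∧ ψ p.2 = ψ p.1 * eval A w} := by
  induction w with
  | nil =>
    have hset : {p : List (Alph A) × List (Alph A) |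
        p.1 ∈ L ∧ p.2 ∈ L ∧ ψ p.2 = ψ p.1 * eval A []} =
        {p : List (Alph A) × List (Alph A) | p.1 ∈ L ∧ p.2 = p.1} := by
      ext ⟨p1, p2⟩
      simp only [Set.mem_setOf_eq, eval_nil, mul_one]
      constructor
      · rintro ⟨h1, h2, h3⟩
        exact ⟨h1, hbij.2.1 h2 h1 h3⟩
      · rintro ⟨h1, rfl⟩
        exact ⟨h1, h1, rfl⟩
    rw [hset]
    unfold IsRegularRel
    have heq : {w | ∃ p ∈ {p : List (Alph A) × List (Alph A) | p.1 ∈ L ∧ p.2 = p.1},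
        w = conv p.1 p.2} = List.map (fun a : Alph A => (some a, some a)) '' L := by
      ext w
      constructor
      · rintro ⟨⟨p1, p2⟩, ⟨h1, heq⟩, rfl⟩
        simp only at heq h1
        subst heq
        exact ⟨p2, h1, (conv_self p2).symm⟩
      · rintro ⟨u, hu, rfl⟩
        exact ⟨(u, u), ⟨hu, rfl⟩, (conv_self u).symm⟩
    rw [heq]
    exact map_image_regular hLreg _
  | cons s w' ih =>
    have hset : {p : List (Alph A) × List (Alph A) |
        p.1 ∈ L ∧ p.2 ∈ L ∧ ψ p.2 = ψ p.1 * eval A (s :: w')} =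
        {p : List (Alph A) × List (Alph A) | ∃ v,
          (p.1, v) ∈ {q : List (Alph A) × List (Alph A) |
            q.1 ∈ L ∧ q.2 ∈ L ∧ ψ q.2 = ψ q.1 * s.val} ∧
          (v, p.2) ∈ {q : List (Alph A) × List (Alph A) |
            q.1 ∈ L ∧ q.2 ∈ L ∧ ψ q.2 = ψ q.1 * eval A w'}} := by
      ext ⟨p1, p2⟩
      simp only [Set.mem_setOf_eq]
      constructor
      · rintro ⟨h1, h2, h3⟩
        obtain ⟨v, hvL, hvψ⟩ := hbij.2.2 (Set.mem_univ (ψ p1 * s.val))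
        refine ⟨v, ⟨h1, hvL, hvψ⟩, hvL, h2, ?_⟩
        rw [h3, hvψ, eval_cons, mul_assoc]
      · rintro ⟨v, ⟨h1, hvL, hvψ⟩, _, h2, hψ2⟩
        refine ⟨h1, h2, ?_⟩
        rw [hψ2, hvψ, eval_cons, mul_assoc]
    rw [hset]
    apply comp_regular
    · rcases s.2 with ha | ha
      · exact hrel s.val ha
      · have ha' : (s.val)⁻¹ ∈ A := Set.mem_inv.mp ha
        have hswap : {q : List (Alph A) × List (Alph A) |
            q.1 ∈ L ∧ q.2 ∈ L ∧ ψ q.2 = ψ q.1 * s.val} =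
            {p : List (Alph A) × List (Alph A) | (p.2, p.1) ∈
              {q : List (Alph A) × List (Alph A) |
                q.1 ∈ L ∧ q.2 ∈ L ∧ ψ q.2 = ψ q.1 * (s.val)⁻¹}} := by
          ext ⟨p1, p2⟩
          simp only [Set.mem_setOf_eq]
          constructor
          · rintro ⟨h1, h2, h3⟩
            exact ⟨h2, h1, by rw [h3, mul_assoc]; simp⟩
          · rintro ⟨h2, h1, h3⟩
            exact ⟨h1, h2, by rw [h3, mul_assoc]; simp⟩
        rw [hswap]
        exact swap_rel_regular (hrel _ ha')
    · exact ih

end Rel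

/-! ### Construction of the block codes -/

section Data

variable {G : Type*} [Group G]

lemma code_data (A A' : Set G) (hAfin : A.Finite) (hA'gen : Subgroup.closure A' = ⊤)
    (x0 y0 : Alph A') (hxy : x0 ≠ y0) :
    ∃ (ℓ : ℕ) (code : Bool → Alph A → List (Alph A')) (nextb : Bool → Alph A → Bool)
      (T : Bool → List (Alph A')),
      3 ≤ ℓ ∧
      (∀ b s, (code b s).length = ℓ) ∧
      (∀ b s, eval A' (code b s) =
        (if b then x0.val else 1) * s.val * (if nextb b s then x0.val else 1)⁻¹) ∧
      (∀ b s s', code b s = code b s' → s = s') ∧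
      (∀ b, eval A' (T b) = (if b then x0.val else 1)) ∧
      (∀ b, (T b).length = ℓ + 1 ∨ (T b).length = ℓ + 2) := by
  classical
  haveI hfinA : Finite (Alph A) := (hAfin.union hAfin.inv).to_subtype
  obtain ⟨n0, ⟨e⟩⟩ := Finite.exists_equiv_fin (Bool × Alph A)
  set bval : Bool → G := fun b => if b then x0.val else 1 with hbval
  set ident : Bool → Alph A → List (Alph A') := fun b s =>
    List.replicate (e (b, s)).val x0 ++ List.replicate (n0 - (e (b, s)).val) y0 with hident
  have hidlen : ∀ b s, (ident b s).length = n0 := by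
    intro b s
    have := (e (b, s)).isLt
    simp only [hident, List.length_append, List.length_replicate]
    omega
  have hidinj : ∀ b s b' s', ident b s = ident b' s' → (b, s) = (b', s') := by
    intro b s b' s' h
    have hcount := congrArg (List.count x0) h
    have hy0 : (y0 == x0) = false := beq_eq_false_iff_ne.mpr (Ne.symm hxy)
    have hc : ∀ p : Bool × Alph A, List.count x0 (ident p.1 p.2) = (e p).val := by
      intro p
      simp only [hident, List.count_append, List.count_replicate, beq_self_eq_true,
        if_true, hy0, if_false, add_zero]
      simp
    have h1 := hc (b, s)
    have h2 := hc (b', s')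
    simp only at h1 h2
    rw [h1, h2] at hcount
    exact e.injective (Fin.ext hcount)
  set g0 : Bool → Alph A → G := fun b s => (eval A' (ident b s))⁻¹ * bval b * s.val with hg0
  set W := (Finset.univ : Finset (Fin n0)).sup
    (fun i => wordLength A' (g0 (e.symm i).1 (e.symm i).2)) with hW
  set WT := max (wordLength A' (1 : G)) (wordLength A' x0.val) with hWT
  set ℓ := n0 + W + WT + 3 with hℓ
  have hWb : ∀ b s, wordLength A' (g0 b s) ≤ W := by
    intro b s
    have hmem := Finset.le_sup (f := fun i => wordLength A' (g0 (e.symm i).1 (e.symm i).2))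
      (Finset.mem_univ (e (b, s)))
    simpa using hmem
  have H : ∀ b s, ∃ (w : List (Alph A')) (b' : Bool),
      w.length = ℓ - n0 ∧ eval A' w = g0 b s * (bval b')⁻¹ := by
    intro b s
    rcases key_parity A' hA'gen x0 (g0 b s) (ℓ - n0) (by have := hWb b s; omega) with
      ⟨w, hw, hl⟩ | ⟨w, hw, hl⟩
    · exact ⟨w, false, hl, by rw [hw]; simp [hbval]⟩
    · exact ⟨w, true, hl, by rw [hw]; simp [hbval]⟩
  choose wof nb hwl hwe using H
  have HT : ∀ b, ∃ w : List (Alph A'),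
      eval A' w = bval b ∧ (w.length = ℓ + 1 ∨ w.length = ℓ + 2) := by
    intro b
    have hwt : wordLength A' (bval b) ≤ ℓ + 1 := by
      have : wordLength A' (bval b) ≤ WT := by
        cases b <;> simp [hbval, hWT]
      omega
    rcases key_two A' hA'gen x0 (bval b) (ℓ + 1) hwt with ⟨w, hw, hl⟩ | ⟨w, hw, hl⟩
    · exact ⟨w, hw, Or.inl hl⟩
    · exact ⟨w, hw, Or.inr hl⟩
  choose Tf hTe hTl using HT
  refine ⟨ℓ, fun b s => ident b s ++ wof b s, nb, Tf, by omega, ?_, ?_, ?_, hTe, hTl⟩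
  · intro b s
    rw [List.length_append, hidlen, hwl]
    omega
  · intro b s
    rw [eval_append, hwe, hg0]
    simp only [hbval]
    group
  · intro b s s' h
    have hpre := (List.append_inj h (by rw [hidlen, hidlen])).1
    have := hidinj b s b s' hpre
    simpa using this

end Data

/-! ### The encoding transducers -/

section Encode

variable {G : Type*} [Group G] {A A' : Set G}

lemma enc_eval (code : Bool → Alph A → List (Alph A')) (nextb : Bool → Alph A → Bool)
    (T : Bool → List (Alph A')) (bv : Bool → G)
    (hcl : ∀ b s, eval A' (code b s) = bv b * s.val * (bv (nextb b s))⁻¹)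
    (hTe : ∀ b, eval A' (T b) = bv b) :
    ∀ (u : List (Alph A)) (b : Bool),
      eval A' (tFun nextb code T b u) = bv b * eval A u := by
  intro u
  induction u with
  | nil => intro b; rw [tFun_nil, hTe, eval_nil, mul_one]
  | cons s u ih =>
    intro b
    rw [tFun_cons, eval_append, hcl, ih, eval_cons]
    group

lemma enc_length (code : Bool → Alph A → List (Alph A')) (nextb : Bool → Alph A → Bool)
    (T : Bool → List (Alph A')) (ℓ : ℕ) (hlen : ∀ b s, (code b s).length = ℓ) :
    ∀ (u : List (Alph A)) (b : Bool),
      (tFun nextb code T b u).length = ℓ * u.length + (T (tEnd nextb b u)).length := by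
  intro u
  induction u with
  | nil => intro b; rw [tFun_nil, tEnd_nil]; simp
  | cons s u ih =>
    intro b
    rw [tFun_cons, List.length_append, hlen, ih, tEnd_cons]
    simp only [List.length_cons]
    ring

lemma enc_inj (code : Bool → Alph A → List (Alph A')) (nextb : Bool → Alph A → Bool)
    (T : Bool → List (Alph A')) (ℓ : ℕ) (hl3 : 3 ≤ ℓ)
    (hlen : ∀ b s, (code b s).length = ℓ)
    (hTl : ∀ b, (T b).length = ℓ + 1 ∨ (T b).length = ℓ + 2)
    (hcinj : ∀ b s s', code b s = code b s' → s = s') :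
    ∀ (u v : List (Alph A)) (b : Bool),
      tFun nextb code T b u = tFun nextb code T b v → u = v := by
  intro u
  induction u with
  | nil =>
    intro v b h
    cases v with
    | nil => rfl
    | cons t v' =>
      exfalso
      have hle := congrArg List.length h
      rw [enc_length code nextb T ℓ hlen, enc_length code nextb T ℓ hlen] at hle
      simp only [List.length_nil, List.length_cons, Nat.mul_zero, Nat.zero_add] at hle
      rw [Nat.mul_succ] at hle
      set X := ℓ * v'.length with hX
      have h1 := hTl (tEnd nextb b [])
      have h2 := hTl (tEnd nextb b (t :: v'))
      omega
  | cons s u' ih =>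
    intro v b h
    cases v with
    | nil =>
      exfalso
      have hle := congrArg List.length h
      rw [enc_length code nextb T ℓ hlen, enc_length code nextb T ℓ hlen] at hle
      simp only [List.length_nil, List.length_cons, Nat.mul_zero, Nat.zero_add] at hle
      rw [Nat.mul_succ] at hle
      set X := ℓ * u'.length with hX
      have h1 := hTl (tEnd nextb b [])
      have h2 := hTl (tEnd nextb b (s :: u'))
      omega
    | cons t v' =>
      rw [tFun_cons, tFun_cons] at h
      obtain ⟨hc, hrest⟩ := List.append_inj h (by rw [hlen, hlen])
      have hst : s = t := hcinj b s t hc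
      subst hst
      rw [ih v' (nextb b s) hrest]

/-- state space of the pairing transducer -/
abbrev ESt : Type := (Bool × Bool) ⊕ ((Bool × Option Bool) ⊕ (Bool × Option Bool))

instance : Finite ESt := by unfold ESt; infer_instance

def carryV (T : Bool → List (Alph A')) (ℓ : ℕ) : Option Bool → List (Alph A')
  | none => []
  | some b => (T b).drop ℓ

def stp2 (nextb : Bool → Alph A → Bool) :
    ESt → Option (Alph A) × Option (Alph A) → ESt
  | Sum.inl (b1, b2), (some s, some t) => Sum.inl (nextb b1 s, nextb b2 t)
  | Sum.inl (b1, b2), (some s, none) => Sum.inr (Sum.inr (nextb b1 s, some b2))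
  | Sum.inl (b1, b2), (none, some t) => Sum.inr (Sum.inl (nextb b2 t, some b1))
  | Sum.inl st, (none, none) => Sum.inl st
  | Sum.inr (Sum.inl (b2, _)), (none, some t) => Sum.inr (Sum.inl (nextb b2 t, none))
  | Sum.inr (Sum.inl st), _ => Sum.inr (Sum.inl st)
  | Sum.inr (Sum.inr (b1, _)), (some s, none) => Sum.inr (Sum.inr (nextb b1 s, none))
  | Sum.inr (Sum.inr st), _ => Sum.inr (Sum.inr st)

def out2 (code : Bool → Alph A → List (Alph A')) (T : Bool → List (Alph A')) (ℓ : ℕ) :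
    ESt → Option (Alph A) × Option (Alph A) →
      List (Option (Alph A') × Option (Alph A'))
  | Sum.inl (b1, b2), (some s, some t) => conv (code b1 s) (code b2 t)
  | Sum.inl (b1, b2), (some s, none) => conv (code b1 s) ((T b2).take ℓ)
  | Sum.inl (b1, b2), (none, some t) => conv ((T b1).take ℓ) (code b2 t)
  | Sum.inl _, (none, none) => [(none, none)]
  | Sum.inr (Sum.inl (b2, c)), (none, some t) => conv (carryV T ℓ c) (code b2 t)
  | Sum.inr (Sum.inl _), _ => [(none, none)]
  | Sum.inr (Sum.inr (b1, c)), (some s, none) => conv (code b1 s) (carryV T ℓ c)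
  | Sum.inr (Sum.inr _), _ => [(none, none)]

def fout2 (T : Bool → List (Alph A')) (ℓ : ℕ) :
    ESt → List (Option (Alph A') × Option (Alph A'))
  | Sum.inl (b1, b2) => conv (T b1) (T b2)
  | Sum.inr (Sum.inl (b2, c)) => conv (carryV T ℓ c) (T b2)
  | Sum.inr (Sum.inr (b1, c)) => conv (T b1) (carryV T ℓ c)

variable (code : Bool → Alph A → List (Alph A')) (nextb : Bool → Alph A → Bool)
  (T : Bool → List (Alph A')) (ℓ : ℕ)

lemma carryV_len (hl3 : 3 ≤ ℓ)
    (hTl : ∀ b, (T b).length = ℓ + 1 ∨ (T b).length = ℓ + 2) (c : Option Bool) :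
    (carryV T ℓ c).length ≤ 2 := by
  cases c with
  | none => simp [carryV]
  | some b =>
    have := hTl b
    simp only [carryV, List.length_drop]
    omega

lemma eq_right (hl3 : 3 ≤ ℓ) (hlen : ∀ b s, (code b s).length = ℓ)
    (hTl : ∀ b, (T b).length = ℓ + 1 ∨ (T b).length = ℓ + 2) :
    ∀ (v : List (Alph A)) (b2 : Bool) (c : Option Bool),
      tFun (stp2 nextb) (out2 code T ℓ) (fout2 T ℓ) (Sum.inr (Sum.inl (b2, c)))
          (v.map fun t => ((none : Option (Alph A)), some t))
        = conv (carryV T ℓ c) (tFun nextb code T b2 v) := by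
  intro v
  induction v with
  | nil => intro b2 c; rw [List.map_nil, tFun_nil, tFun_nil]; rfl
  | cons t v' ih =>
    intro b2 c
    rw [List.map_cons, tFun_cons, tFun_cons]
    have hout : out2 code T ℓ (Sum.inr (Sum.inl (b2, c))) (none, some t)
        = conv (carryV T ℓ c) (code b2 t) := rfl
    have hstp : stp2 nextb (Sum.inr (Sum.inl (b2, c))) (none, some t)
        = Sum.inr (Sum.inl (nextb b2 t, none)) := rfl
    rw [hout, hstp, ih]
    have hcl : (carryV T ℓ c).length ≤ (code b2 t).length := by
      rw [hlen]
      have := carryV_len T ℓ hl3 hTl c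
      omega
    rw [conv_left_le hcl]
    congr 1
    rw [show carryV T ℓ (none : Option Bool) = [] from rfl, conv_nil_left]

lemma eq_left (hl3 : 3 ≤ ℓ) (hlen : ∀ b s, (code b s).length = ℓ)
    (hTl : ∀ b, (T b).length = ℓ + 1 ∨ (T b).length = ℓ + 2) :
    ∀ (u : List (Alph A)) (b1 : Bool) (c : Option Bool),
      tFun (stp2 nextb) (out2 code T ℓ) (fout2 T ℓ) (Sum.inr (Sum.inr (b1, c)))
          (u.map fun s => (some s, (none : Option (Alph A))))
        = conv (tFun nextb code T b1 u) (carryV T ℓ c) := by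
  intro u
  induction u with
  | nil => intro b1 c; rw [List.map_nil, tFun_nil, tFun_nil]; rfl
  | cons s u' ih =>
    intro b1 c
    rw [List.map_cons, tFun_cons, tFun_cons]
    have hout : out2 code T ℓ (Sum.inr (Sum.inr (b1, c))) (some s, none)
        = conv (code b1 s) (carryV T ℓ c) := rfl
    have hstp : stp2 nextb (Sum.inr (Sum.inr (b1, c))) (some s, none)
        = Sum.inr (Sum.inr (nextb b1 s, none)) := rfl
    rw [hout, hstp, ih]
    have hcl : (carryV T ℓ c).length ≤ (code b1 s).length := by
      rw [hlen]
      have := carryV_len T ℓ hl3 hTl c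
      omega
    rw [conv_right_le hcl]
    congr 1
    rw [show carryV T ℓ (none : Option Bool) = [] from rfl, conv_nil_right]

lemma eq_both (hl3 : 3 ≤ ℓ) (hlen : ∀ b s, (code b s).length = ℓ)
    (hTl : ∀ b, (T b).length = ℓ + 1 ∨ (T b).length = ℓ + 2) :
    ∀ (u v : List (Alph A)) (b1 b2 : Bool),
      tFun (stp2 nextb) (out2 code T ℓ) (fout2 T ℓ) (Sum.inl (b1, b2)) (conv u v)
        = conv (tFun nextb code T b1 u) (tFun nextb code T b2 v) := by
  intro u
  induction u with
  | nil =>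
    intro v b1 b2
    cases v with
    | nil => rw [conv_nil_nil, tFun_nil, tFun_nil, tFun_nil]; rfl
    | cons t v' =>
      rw [conv_nil_cons, tFun_cons]
      have hout : out2 code T ℓ (Sum.inl (b1, b2)) (none, some t)
          = conv ((T b1).take ℓ) (code b2 t) := rfl
      have hstp : stp2 nextb (Sum.inl (b1, b2)) (none, some t)
          = Sum.inr (Sum.inl (nextb b2 t, some b1)) := rfl
      rw [hout, hstp, conv_nil_left, eq_right code nextb T ℓ hl3 hlen hTl]
      rw [tFun_nil, tFun_cons]
      have hsplit : T b1 = (T b1).take ℓ ++ (T b1).drop ℓ := (List.take_append_drop ℓ _).symm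
      have htake : ((T b1).take ℓ).length = ℓ := by
        rw [List.length_take]
        have := hTl b1
        omega
      calc conv ((T b1).take ℓ) (code b2 t) ++
            conv (carryV T ℓ (some b1)) (tFun nextb code T (nextb b2 t) v')
          = conv ((T b1).take ℓ ++ (T b1).drop ℓ)
              (code b2 t ++ tFun nextb code T (nextb b2 t) v') := by
            rw [conv_append (by rw [htake, hlen]) _ _]
            rfl
        _ = conv (T b1) (code b2 t ++ tFun nextb code T (nextb b2 t) v') := by rw [← hsplit]
  | cons s u' ihu =>
    intro v b1 b2
    cases v with
    | nil =>
      rw [conv_cons_nil, tFun_cons]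
      have hout : out2 code T ℓ (Sum.inl (b1, b2)) (some s, none)
          = conv (code b1 s) ((T b2).take ℓ) := rfl
      have hstp : stp2 nextb (Sum.inl (b1, b2)) (some s, none)
          = Sum.inr (Sum.inr (nextb b1 s, some b2)) := rfl
      rw [hout, hstp, conv_nil_right, eq_left code nextb T ℓ hl3 hlen hTl]
      rw [tFun_nil, tFun_cons]
      have hsplit : T b2 = (T b2).take ℓ ++ (T b2).drop ℓ := (List.take_append_drop ℓ _).symm
      have htake : ((T b2).take ℓ).length = ℓ := by
        rw [List.length_take]
        have := hTl b2
        omega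
      calc conv (code b1 s) ((T b2).take ℓ) ++
            conv (tFun nextb code T (nextb b1 s) u') (carryV T ℓ (some b2))
          = conv (code b1 s ++ tFun nextb code T (nextb b1 s) u')
              ((T b2).take ℓ ++ (T b2).drop ℓ) := by
            rw [conv_append (by rw [htake, hlen]) _ _]
            rfl
        _ = conv (code b1 s ++ tFun nextb code T (nextb b1 s) u') (T b2) := by rw [← hsplit]
    | cons t v' =>
      rw [conv_cons_cons, tFun_cons]
      have hout : out2 code T ℓ (Sum.inl (b1, b2)) (some s, some t)
          = conv (code b1 s) (code b2 t) := rfl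
      have hstp : stp2 nextb (Sum.inl (b1, b2)) (some s, some t)
          = Sum.inl (nextb b1 s, nextb b2 t) := rfl
      rw [hout, hstp, ihu v' (nextb b1 s) (nextb b2 t), tFun_cons, tFun_cons]
      rw [conv_append (by rw [hlen, hlen]) _ _]

lemma out2_len_le (hclen : ∀ b s, (code b s).length = ℓ)
    (hTl : ∀ b, (T b).length = ℓ + 1 ∨ (T b).length = ℓ + 2) :
    ∀ (st : ESt) (c : Option (Alph A) × Option (Alph A)),
      (out2 code T ℓ st c).length ≤ 2 * ℓ + 4 := by
  have hcar : ∀ c0 : Option Bool, (carryV T ℓ c0).length ≤ ℓ + 2 := by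
    intro c0
    cases c0 with
    | none => simp [carryV]
    | some b => have := hTl b; simp only [carryV, List.length_drop]; omega
  have htake : ∀ b, ((T b).take ℓ).length ≤ ℓ + 2 := by
    intro b; have := hTl b; simp only [List.length_take]; omega
  rintro (⟨b1, b2⟩ | ⟨b2, c0⟩ | ⟨b1, c0⟩) ⟨x, z⟩ <;> rcases x with _ | s <;> rcases z with _ | t
  · simp only [out2]; simp
  · have := htake b1; have := hclen b2 t
    simp only [out2, length_conv]; omega
  · have := htake b2; have := hclen b1 s
    simp only [out2, length_conv]; omega
  · have := hclen b1 s; have := hclen b2 t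
    simp only [out2, length_conv]; omega
  · simp only [out2]; simp
  · have := hcar c0; have := hclen b2 t
    simp only [out2, length_conv]; omega
  · simp only [out2]; simp
  · simp only [out2]; simp
  · simp only [out2]; simp
  · simp only [out2]; simp
  · have := hcar c0; have := hclen b1 s
    simp only [out2, length_conv]; omega
  · simp only [out2]; simp

lemma out2_ne (hl3 : 3 ≤ ℓ) (hclen : ∀ b s, (code b s).length = ℓ)
    (hTl : ∀ b, (T b).length = ℓ + 1 ∨ (T b).length = ℓ + 2) :
    ∀ (st : ESt) (c : Option (Alph A) × Option (Alph A)),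
      out2 code T ℓ st c ≠ [] := by
  have hlp : ∀ w : List (Option (Alph A') × Option (Alph A')), 0 < w.length → w ≠ [] := by
    intro w hw heq
    rw [heq] at hw
    simp at hw
  rintro (⟨b1, b2⟩ | ⟨b2, c0⟩ | ⟨b1, c0⟩) ⟨x, z⟩ <;> rcases x with _ | s <;> rcases z with _ | t
  · simp only [out2]; simp
  · apply hlp; have := hclen b2 t; simp only [out2, length_conv]; omega
  · apply hlp; have := hclen b1 s; simp only [out2, length_conv]; omega
  · apply hlp; have := hclen b1 s; simp only [out2, length_conv]; omega
  · simp only [out2]; simp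
  · apply hlp; have := hclen b2 t; simp only [out2, length_conv]; omega
  · simp only [out2]; simp
  · simp only [out2]; simp
  · simp only [out2]; simp
  · simp only [out2]; simp
  · apply hlp; have := hclen b1 s; simp only [out2, length_conv]; omega
  · simp only [out2]; simp

lemma fout2_len_le (hTl : ∀ b, (T b).length = ℓ + 1 ∨ (T b).length = ℓ + 2) :
    ∀ st : ESt, (fout2 T ℓ st).length ≤ 2 * ℓ + 4 := by
  have hcar : ∀ c0 : Option Bool, (carryV T ℓ c0).length ≤ ℓ + 2 := by
    intro c0
    cases c0 with
    | none => simp [carryV]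
    | some b => have := hTl b; simp only [carryV, List.length_drop]; omega
  rintro (⟨b1, b2⟩ | ⟨b2, c0⟩ | ⟨b1, c0⟩)
  · have := hTl b1; have := hTl b2
    simp only [fout2, length_conv]; omega
  · have := hcar c0; have := hTl b2
    simp only [fout2, length_conv]; omega
  · have := hcar c0; have := hTl b1
    simp only [fout2, length_conv]; omega

end Encode

/-! ### Main theorem -/

section Main

variable {G : Type*} [Group G]

theorem main_theorem (G : Type*) [Group G] [Infinite G] (f : FFun)
    (A A' : Set G) (hAfin : A.Finite) (hA'fin : A'.Finite)
    (hAgen : Subgroup.closure A = ⊤) (hA'gen : Subgroup.closure A' = ⊤)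
    (h : InB A f) : InB A' f := by
  classical
  obtain ⟨L, ψ, ⟨hLreg, hbij, hrel⟩, K, M, N, hK, hM, hN, hQN, hdist⟩ := h
  obtain ⟨x0, y0, hxy⟩ := exists_two_letters A' hA'gen
  obtain ⟨ℓ, code, nextb, T, hl3, hclen, hceval, hcinj, hTe, hTl⟩ :=
    code_data A A' hAfin hA'gen x0 y0 hxy
  haveI hfinA : Finite (Alph A) := (hAfin.union hAfin.inv).to_subtype
  haveI hfinA' : Finite (Alph A') := (hA'fin.union hA'fin.inv).to_subtype
  -- the encoding map
  set Enc : List (Alph A) → List (Alph A') := tFun nextb code T false with hEncDef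
  have hEval : ∀ u, eval A' (Enc u) = eval A u := by
    intro u
    rw [hEncDef, enc_eval code nextb T (fun b => if b then x0.val else 1) hceval hTe u false]
    simp
  have hInj : ∀ u v, Enc u = Enc v → u = v := by
    intro u v hEq
    exact enc_inj code nextb T ℓ hl3 hclen hTl hcinj u v false hEq
  set L' : Language (Alph A') := Enc '' L with hL'def
  set ψ' : List (Alph A') → G := fun w => ψ (Function.invFunOn Enc L w) with hψ'def
  have hψ'Enc : ∀ u ∈ L, ψ' (Enc u) = ψ u := by
    intro u hu
    have h1 : ∃ a ∈ L, Enc a = Enc u := ⟨u, hu, rfl⟩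
    have h2 := Function.invFunOn_eq h1
    have h3 := hInj _ _ h2
    rw [hψ'def]
    simp only
    rw [h3]
  -- regularity of L'
  have hL'reg : Language.IsRegular L' := by
    obtain ⟨σ0, i0, M0, hM0⟩ := hLreg
    have himg := img_regular' M0 nextb code T false (ℓ + 2) hM0.symm
      (fun t a => by rw [hclen]; omega)
      (fun t a => by
        intro heq
        have := congrArg List.length heq
        rw [hclen] at this
        simp at this
        omega)
      (fun t => by rcases hTl t with h' | h' <;> omega)
    exact himg
  -- bijectivity of ψ'
  have hbij' : Set.BijOn ψ' L' Set.univ := by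
    refine ⟨fun _ _ => trivial, ?_, ?_⟩
    · rintro w1 ⟨u1, hu1, rfl⟩ w2 ⟨u2, hu2, rfl⟩ heq
      rw [hψ'Enc u1 hu1, hψ'Enc u2 hu2] at heq
      rw [hbij.2.1 hu1 hu2 heq]
    · intro g _
      obtain ⟨u, hu, hg⟩ := hbij.2.2 (Set.mem_univ g)
      exact ⟨Enc u, ⟨u, hu, rfl⟩, by rw [hψ'Enc u hu, hg]⟩
  -- regularity of the multiplication relations
  have hrel' : ∀ a ∈ A', IsRegularRel {p : List (Alph A') × List (Alph A') |
      p.1 ∈ L' ∧ p.2 ∈ L' ∧ ψ' p.2 = ψ' p.1 * a} := by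
    intro a _
    obtain ⟨wa, hwa⟩ := exists_word A hAgen a
    have hbase := rel_regular_word hLreg hbij hrel wa
    rw [hwa] at hbase
    unfold IsRegularRel at hbase ⊢
    obtain ⟨σR, iR, MR, hMR⟩ := hbase
    have himg := img_regular' MR (stp2 nextb) (out2 code T ℓ) (fout2 T ℓ)
      (Sum.inl (false, false)) (2 * ℓ + 4) hMR.symm
      (fun t c => out2_len_le code T ℓ hclen hTl t c)
      (fun t c => out2_ne code T ℓ hl3 hclen hTl t c)
      (fun t => fout2_len_le T ℓ hTl t)
    have hseteq : (tFun (stp2 nextb) (out2 code T ℓ) (fout2 T ℓ) (Sum.inl (false, false))) ''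
        {w | ∃ p ∈ {p : List (Alph A) × List (Alph A) |
          p.1 ∈ L ∧ p.2 ∈ L ∧ ψ p.2 = ψ p.1 * a}, w = conv p.1 p.2}
        = {w | ∃ p ∈ {p : List (Alph A') × List (Alph A') |
          p.1 ∈ L' ∧ p.2 ∈ L' ∧ ψ' p.2 = ψ' p.1 * a}, w = conv p.1 p.2} := by
      ext w0
      constructor
      · rintro ⟨w1, ⟨⟨u, v⟩, ⟨hu, hv, hψ⟩, rfl⟩, rfl⟩
        refine ⟨(Enc u, Enc v), ⟨⟨u, hu, rfl⟩, ⟨v, hv, rfl⟩, ?_⟩, ?_⟩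
        · rw [hψ'Enc u hu, hψ'Enc v hv, hψ]
        · exact eq_both code nextb T ℓ hl3 hclen hTl u v false false
      · rintro ⟨⟨p1, p2⟩, ⟨⟨u, hu, rfl⟩, ⟨v, hv, rfl⟩, hψ⟩, rfl⟩
        rw [hψ'Enc u hu, hψ'Enc v hv] at hψ
        refine ⟨conv u v, ⟨(u, v), ⟨hu, hv, hψ⟩, rfl⟩, ?_⟩
        exact eq_both code nextb T ℓ hl3 hclen hTl u v false false
    rwa [hseteq] at himg
  -- the Lipschitz constant
  obtain ⟨nA, ⟨eA⟩⟩ := Finite.exists_equiv_fin (Alph A)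
  set C := (Finset.univ : Finset (Fin nA)).sup
    (fun i => wordLength A' ((eA.symm i).val)) with hCdef
  have hC : ∀ s : Alph A, wordLength A' s.val ≤ C := by
    intro s
    have hmem := Finset.le_sup (f := fun i => wordLength A' ((eA.symm i).val))
      (Finset.mem_univ (eA s))
    simpa using hmem
  refine ⟨L', ψ', ⟨hL'reg, hbij', hrel'⟩, C * K + 1, M, N, by omega, hM, hN, hQN, ?_⟩
  intro n hn w' hw' hwlen
  obtain ⟨u, hu, rfl⟩ := hw'
  have hlu : u.length ≤ n := by
    have h1 := enc_length code nextb T ℓ hclen u false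
    have h2 : u.length ≤ ℓ * u.length := Nat.le_mul_of_pos_left _ (by omega)
    have h3 : (Enc u).length = ℓ * u.length + (T (tEnd nextb false u)).length := h1
    omega
  have hd := hdist n hn u hu hlu
  have hCd : cayleyDist A' (eval A' (Enc u)) (ψ' (Enc u)) ≤
      C * cayleyDist A (eval A u) (ψ u) := by
    rw [hEval u, hψ'Enc u hu]
    unfold cayleyDist
    exact wordLength_lipschitz A A' hAgen hA'gen C hC _
  have hQf : f.Q ≤ M * n := by
    have : n ≤ M * n := Nat.le_mul_of_pos_left _ (by omega)
    omega
  have hf0 : 0 ≤ f.toFun (M * n) := f.nonneg (M * n) hQf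
  calc (cayleyDist A' (eval A' (Enc u)) (ψ' (Enc u)) : ℝ)
      ≤ ((C * cayleyDist A (eval A u) (ψ u) : ℕ) : ℝ) := Nat.cast_le.mpr hCd
    _ = (C : ℝ) * (cayleyDist A (eval A u) (ψ u) : ℝ) := by push_cast; ring
    _ ≤ (C : ℝ) * ((K : ℝ) * f.toFun (M * n)) := by
        apply mul_le_mul_of_nonneg_left hd
        positivity
    _ ≤ ((C * K + 1 : ℕ) : ℝ) * f.toFun (M * n) := by
        push_cast
        nlinarith [hf0]

end Main

end CAGAux



open CAG in
/-- Membership in the class `ℬ_f` does not depend on the choice of finite generating set: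
if a finitely generated infinite Cayley automatic group `G` belongs to `ℬ_f` with respect to a
finite generating set `A`, then it belongs to `ℬ_f` with respect to any other finite
generating set `A'`. -/
theorem classB_independent_of_generating_set
    (G : Type*) [Group G] [Infinite G] (f : FFun)
    (A A' : Set G) (hAfin : A.Finite) (hA'fin : A'.Finite)
    (hAgen : Subgroup.closure A = ⊤) (hA'gen : Subgroup.closure A' = ⊤)
    (h : InB A f) : InB A' f :=
  CAGAux.main_theorem G f A A' hAfin hA'fin hAgen hA'gen h
end

section
/- Let G be a finitely generated group with finite generating set A, S = A ∪ A⁻¹, and let L ⊆ S* be a regular language such that π : L → G is surjective. Assume there is a constant C₀ such that for every w₁, w₂ ∈ L and a ∈ A for which π(w₁)·a = π(w₂), the paths ŵ₁ and ŵ₂ are a uniform distance at most C₀ apart, i.e., d_A(π(w₁(t)), π(w₂(t))) ≤ C₀ for all non-negative integers t, where w(t) denotes the prefix of w of length t (and w(t) = w if t > |w|). Then G is an automatic group. -/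
namespace CAG

variable {G : Type*} [Group G]

/-! ### Auxiliary machinery for the proof of `automatic_of_fellow_traveller` -/

section ConvBasics
variable {α : Type*}

lemma evalFrom_cons' {β σ : Type*} (M : DFA β σ) (s : σ) (a : β) (u : List β) :
    M.evalFrom s (a :: u) = M.evalFrom (M.step s a) u := rfl

lemma filterMap_fst_conv : ∀ w₁ w₂ : List α, (conv w₁ w₂).filterMap Prod.fst = w₁ := by
  intro w₁ w₂
  induction w₁, w₂ using conv.induct <;> simp [conv, *]

lemma filterMap_snd_conv : ∀ w₁ w₂ : List α, (conv w₁ w₂).filterMap Prod.snd = w₂ := by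
  intro w₁ w₂
  induction w₁, w₂ using conv.induct <;> simp [conv, *]

/-- DFA recognizing well-formed convolutions. -/
def wfDFA (α : Type*) : DFA (Option α × Option α) (Option (Bool × Bool)) where
  step s b := s.bind fun p =>
    bif (b.1.isNone && b.2.isNone) || (p.1 && b.1.isSome) || (p.2 && b.2.isSome) then none
    else some (p.1 || b.1.isNone, p.2 || b.2.isNone)
  start := some (false, false)
  accept := {s | s ≠ none}

lemma wf_evalFrom_none (u : List (Option α × Option α)) :
    (wfDFA α).evalFrom none u = none := by
  induction u with
  | nil => rfl
  | cons a u ih => rw [evalFrom_cons']; exact ih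

lemma wf_complete : ∀ w₁ w₂ : List α, ∀ p1 p2 : Bool,
    (p1 = true → w₁ = []) → (p2 = true → w₂ = []) →
    (wfDFA α).evalFrom (some (p1, p2)) (conv w₁ w₂) ≠ none := by
  intro w₁ w₂
  induction w₁, w₂ using conv.induct with
  | case1 => intro p1 p2 _ _; simp [conv, DFA.evalFrom]
  | case2 a as ih =>
      intro p1 p2 h1 h2
      have hp1 : p1 = false := by cases p1 with
        | false => rfl
        | true => simp at h1
      subst hp1
      rw [conv, evalFrom_cons']
      have : (wfDFA α).step (some (false, p2)) (some a, none) = some (false, true) := by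
        simp [wfDFA]
      rw [this]
      exact ih false true (by simp) (fun _ => rfl)
  | case3 b bs ih =>
      intro p1 p2 h1 h2
      have hp2 : p2 = false := by cases p2 with
        | false => rfl
        | true => simp at h2
      subst hp2
      rw [conv, evalFrom_cons']
      have : (wfDFA α).step (some (p1, false)) (none, some b) = some (true, false) := by
        simp [wfDFA]
      rw [this]
      exact ih true false (fun _ => rfl) (by simp)
  | case4 a as b bs ih =>
      intro p1 p2 h1 h2
      have hp1 : p1 = false := by cases p1 with
        | false => rfl
        | true => simp at h1
      have hp2 : p2 = false := by cases p2 with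
        | false => rfl
        | true => simp at h2
      subst hp1; subst hp2
      rw [conv, evalFrom_cons']
      have : (wfDFA α).step (some (false, false)) (some a, some b) = some (false, false) := by
        simp [wfDFA]
      rw [this]
      exact ih false false (by simp) (by simp)

lemma wf_sound : ∀ u : List (Option α × Option α), ∀ p1 p2 : Bool,
    (wfDFA α).evalFrom (some (p1, p2)) u ≠ none →
    (p1 = true → u.filterMap Prod.fst = []) ∧ (p2 = true → u.filterMap Prod.snd = []) ∧
      u = conv (u.filterMap Prod.fst) (u.filterMap Prod.snd) := by
  intro u
  induction u with
  | nil => intro p1 p2 _; exact ⟨fun _ => rfl, fun _ => rfl, by simp [conv]⟩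
  | cons xy u ih =>
      intro p1 p2 h
      obtain ⟨x, y⟩ := xy
      rw [evalFrom_cons'] at h
      match x, y with
      | none, none =>
          exfalso; apply h
          have : (wfDFA α).step (some (p1, p2)) (none, none) = none := by simp [wfDFA]
          rw [this]; exact wf_evalFrom_none u
      | some a, none =>
          have hp1 : p1 = false := by
            cases p1
            · rfl
            · exfalso; apply h
              have : (wfDFA α).step (some (true, p2)) (some a, none) = none := by
                simp [wfDFA]
              rw [this]; exact wf_evalFrom_none u
          subst hp1
          have hstep : (wfDFA α).step (some (false, p2)) (some a, none) = some (false, true) := by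
            simp [wfDFA]
          rw [hstep] at h
          obtain ⟨c1, c2, c3⟩ := ih false true h
          have h2 : u.filterMap Prod.snd = [] := c2 rfl
          refine ⟨by simp, fun _ => by simp [h2], ?_⟩
          have e1 : ((some a, none) :: u).filterMap Prod.fst = a :: u.filterMap Prod.fst := rfl
          have e2 : ((some a, none) :: u).filterMap Prod.snd = u.filterMap Prod.snd := rfl
          rw [e1, e2, h2]
          simp only [conv]
          congr 1
          rw [← h2]
          exact c3
      | none, some b =>
          have hp2 : p2 = false := by
            cases p2
            · rfl
            · exfalso; apply h
              have : (wfDFA α).step (some (p1, true)) (none, some b) = none := by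
                simp [wfDFA]
              rw [this]; exact wf_evalFrom_none u
          subst hp2
          have hstep : (wfDFA α).step (some (p1, false)) (none, some b) = some (true, false) := by
            simp [wfDFA]
          rw [hstep] at h
          obtain ⟨c1, c2, c3⟩ := ih true false h
          have h1 : u.filterMap Prod.fst = [] := c1 rfl
          refine ⟨fun _ => by simp [h1], by simp, ?_⟩
          have e1 : ((none, some b) :: u).filterMap Prod.fst = u.filterMap Prod.fst := rfl
          have e2 : ((none, some b) :: u).filterMap Prod.snd = b :: u.filterMap Prod.snd := rfl
          rw [e1, e2, h1]
          simp only [conv]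
          congr 1
          rw [← h1]
          exact c3
      | some a, some b =>
          have hp1 : p1 = false := by
            cases p1
            · rfl
            · exfalso; apply h
              have : (wfDFA α).step (some (true, p2)) (some a, some b) = none := by
                simp [wfDFA]
              rw [this]; exact wf_evalFrom_none u
          subst hp1
          have hp2 : p2 = false := by
            cases p2
            · rfl
            · exfalso; apply h
              have : (wfDFA α).step (some (false, true)) (some a, some b) = none := by
                simp [wfDFA]
              rw [this]; exact wf_evalFrom_none u
          subst hp2
          have hstep : (wfDFA α).step (some (false, false)) (some a, some b)
              = some (false, false) := by simp [wfDFA]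
          rw [hstep] at h
          obtain ⟨c1, c2, c3⟩ := ih false false h
          refine ⟨by simp, by simp, ?_⟩
          have e1 : ((some a, some b) :: u).filterMap Prod.fst = a :: u.filterMap Prod.fst := rfl
          have e2 : ((some a, some b) :: u).filterMap Prod.snd = b :: u.filterMap Prod.snd := rfl
          rw [e1, e2]
          simp only [conv]
          congr 1

end ConvBasics

section Lift
variable {α σ : Type*} (M : DFA α σ)

def liftFst : DFA (Option α × Option α) σ where
  step s b := match b.1 with | some a => M.step s a | none => s
  start := M.start
  accept := M.accept

def liftSnd : DFA (Option α × Option α) σ where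
  step s b := match b.2 with | some a => M.step s a | none => s
  start := M.start
  accept := M.accept

lemma liftFst_evalFrom (s : σ) (u : List (Option α × Option α)) :
    (liftFst M).evalFrom s u = M.evalFrom s (u.filterMap Prod.fst) := by
  induction u generalizing s with
  | nil => rfl
  | cons b u ih =>
      obtain ⟨x, y⟩ := b
      rw [evalFrom_cons']
      cases x with
      | none => exact ih s
      | some a => exact ih (M.step s a)

lemma liftSnd_evalFrom (s : σ) (u : List (Option α × Option α)) :
    (liftSnd M).evalFrom s u = M.evalFrom s (u.filterMap Prod.snd) := by
  induction u generalizing s with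
  | nil => rfl
  | cons b u ih =>
      obtain ⟨x, y⟩ := b
      rw [evalFrom_cons']
      cases y with
      | none => exact ih s
      | some a => exact ih (M.step s a)

lemma liftFst_accepts (u : List (Option α × Option α)) :
    u ∈ (liftFst M).accepts ↔ u.filterMap Prod.fst ∈ M.accepts := by
  rw [DFA.mem_accepts, DFA.mem_accepts, DFA.eval, liftFst_evalFrom]; rfl

lemma liftSnd_accepts (u : List (Option α × Option α)) :
    u ∈ (liftSnd M).accepts ↔ u.filterMap Prod.snd ∈ M.accepts := by
  rw [DFA.mem_accepts, DFA.mem_accepts, DFA.eval, liftSnd_evalFrom]; rfl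

end Lift

section Inter
variable {β σ₁ σ₂ : Type*} (M₁ : DFA β σ₁) (M₂ : DFA β σ₂)

def interDFA : DFA β (σ₁ × σ₂) where
  step s b := (M₁.step s.1 b, M₂.step s.2 b)
  start := (M₁.start, M₂.start)
  accept := {s | s.1 ∈ M₁.accept ∧ s.2 ∈ M₂.accept}

lemma interDFA_evalFrom (s₁ : σ₁) (s₂ : σ₂) (u : List β) :
    (interDFA M₁ M₂).evalFrom (s₁, s₂) u = (M₁.evalFrom s₁ u, M₂.evalFrom s₂ u) := by
  induction u generalizing s₁ s₂ with
  | nil => rfl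
  | cons b u ih => rw [evalFrom_cons']; exact ih _ _

lemma interDFA_accepts (u : List β) :
    u ∈ (interDFA M₁ M₂).accepts ↔ u ∈ M₁.accepts ∧ u ∈ M₂.accepts := by
  rw [DFA.mem_accepts, DFA.mem_accepts, DFA.mem_accepts]
  show (interDFA M₁ M₂).evalFrom (M₁.start, M₂.start) u ∈ _ ↔ _
  rw [interDFA_evalFrom]
  exact Iff.rfl

def complDFA (M : DFA β σ₁) : DFA β σ₁ := ⟨M.step, M.start, M.acceptᶜ⟩

lemma complDFA_accepts (M : DFA β σ₁) (u : List β) :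
    u ∈ (complDFA M).accepts ↔ u ∉ M.accepts := by
  rw [DFA.mem_accepts, DFA.mem_accepts]
  exact Iff.rfl

end Inter

section SLOrd
variable {α : Type*} [LinearOrder α]

def lexc : List α → List α → Ordering
  | [], [] => .eq
  | _ :: as, [] => lexc as []
  | [], _ :: bs => lexc [] bs
  | a :: as, b :: bs => (compare a b).then (lexc as bs)

lemma othen_eq (o : Ordering) : o.then .eq = o := by cases o <;> rfl

lemma othen_assoc (o p q : Ordering) : (o.then p).then q = o.then (p.then q) := by
  cases o <;> rfl

lemma othen_eq_lt (o p : Ordering) : o.then p = .lt ↔ o = .lt ∨ (o = .eq ∧ p = .lt) := by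
  cases o <;> simp [Ordering.then]

lemma lex_cons_iff {a b : α} {as bs : List α} :
    List.Lex (· < ·) (a :: as) (b :: bs) ↔ a < b ∨ (a = b ∧ List.Lex (· < ·) as bs) := by
  constructor
  · intro h
    cases h with
    | rel h => exact Or.inl h
    | cons h => exact Or.inr ⟨rfl, h⟩
  · rintro (h | ⟨rfl, h⟩)
    · exact List.Lex.rel h
    · exact List.Lex.cons h

lemma lexc_lt_iff : ∀ w₁ w₂ : List α, w₁.length = w₂.length →
    (lexc w₁ w₂ = .lt ↔ List.Lex (· < ·) w₁ w₂) := by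
  intro w₁ w₂
  induction w₁, w₂ using lexc.induct with
  | case1 => intro _; simp [lexc]
  | case2 a as ih => intro h; simp at h
  | case3 b bs ih => intro h; simp at h
  | case4 a as b bs ih =>
      intro h
      simp only [List.length_cons, Nat.succ_inj] at h
      rw [lexc, othen_eq_lt, lex_cons_iff, compare_lt_iff_lt, compare_eq_iff_eq, ih h]

/-- The shortlex comparison DFA. -/
def slDFA (α : Type*) [LinearOrder α] : DFA (Option α × Option α) (Ordering × Bool × Bool) where
  step s b :=
    ((match b.1, b.2 with
      | some a, some b' => s.1.then (compare a b')
      | _, _ => s.1),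
     s.2.1 || b.1.isNone, s.2.2 || b.2.isNone)
  start := (.eq, false, false)
  accept := {s | (s.2.1 = true ∧ s.2.2 = false) ∨ (s.2.1 = false ∧ s.2.2 = false ∧ s.1 = .lt)}

lemma sl_evalFrom : ∀ w₁ w₂ : List α, ∀ c : Ordering, ∀ p1 p2 : Bool,
    (p1 = true → w₁ = []) → (p2 = true → w₂ = []) →
    (slDFA α).evalFrom (c, p1, p2) (conv w₁ w₂) =
      (c.then (lexc w₁ w₂), p1 || decide (w₁.length < w₂.length),
        p2 || decide (w₂.length < w₁.length)) := by
  intro w₁ w₂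
  induction w₁, w₂ using conv.induct with
  | case1 =>
      intro c p1 p2 _ _
      simp only [conv, lexc, othen_eq]
      simp [DFA.evalFrom]
  | case2 a as ih =>
      intro c p1 p2 h1 h2
      have hp1 : p1 = false := by
        cases p1 with
        | false => rfl
        | true => simp at h1
      subst hp1
      rw [conv, evalFrom_cons']
      rw [show (slDFA α).step (c, false, p2) (some a, none) = (c, false, true) by
        simp [slDFA]]
      rw [ih c false true (by simp) (fun _ => rfl)]
      simp [lexc]
  | case3 b bs ih =>
      intro c p1 p2 h1 h2
      have hp2 : p2 = false := by
        cases p2 with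
        | false => rfl
        | true => simp at h2
      subst hp2
      rw [conv, evalFrom_cons']
      rw [show (slDFA α).step (c, p1, false) (none, some b) = (c, true, false) by
        simp [slDFA]]
      rw [ih c true false (fun _ => rfl) (by simp)]
      simp [lexc]
  | case4 a as b bs ih =>
      intro c p1 p2 h1 h2
      have hp1 : p1 = false := by
        cases p1 with
        | false => rfl
        | true => simp at h1
      have hp2 : p2 = false := by
        cases p2 with
        | false => rfl
        | true => simp at h2
      subst hp1; subst hp2
      rw [conv, evalFrom_cons']
      rw [show (slDFA α).step (c, false, false) (some a, some b)
          = (c.then (compare a b), false, false) by simp [slDFA]]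
      rw [ih _ false false (by simp) (by simp)]
      rw [lexc, ← othen_assoc]
      simp [Nat.succ_lt_succ_iff]

def slLt (v w : List α) : Prop :=
  v.length < w.length ∨ (v.length = w.length ∧ List.Lex (· < ·) v w)

lemma slLt_trichotomy (v w : List α) : slLt v w ∨ v = w ∨ slLt w v := by
  rcases lt_trichotomy v.length w.length with h | h | h
  · exact Or.inl (Or.inl h)
  · rcases lt_trichotomy v w with hl | hl | hl
    · exact Or.inl (Or.inr ⟨h, hl⟩)
    · exact Or.inr (Or.inl hl)
    · exact Or.inr (Or.inr (Or.inr ⟨h.symm, hl⟩))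
  · exact Or.inr (Or.inr (Or.inl h))

lemma exists_slLt_min [Finite α] (S : Set (List α)) (hne : S.Nonempty) :
    ∃ w ∈ S, ∀ v ∈ S, ¬ slLt v w := by
  have hleneS : {n | ∃ w ∈ S, w.length = n}.Nonempty :=
    ⟨hne.choose.length, hne.choose, hne.choose_spec, rfl⟩
  obtain ⟨w₀, hw₀S, hw₀len⟩ := Nat.sInf_mem hleneS
  set n := sInf {n | ∃ w ∈ S, w.length = n} with hn
  have hmin : ∀ v ∈ S, n ≤ v.length := fun v hv => Nat.sInf_le ⟨v, hv, rfl⟩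
  have hfin : {w ∈ S | w.length = n}.Finite :=
    (List.finite_length_eq α n).subset (fun w hw => hw.2)
  have hnefn : {w ∈ S | w.length = n}.Nonempty := ⟨w₀, hw₀S, hw₀len⟩
  obtain ⟨w₁, hw₁, hmin₁⟩ := Set.exists_min_image _ id hfin hnefn
  refine ⟨w₁, hw₁.1, ?_⟩
  rintro v hv (hlt | ⟨hlen, hlex⟩)
  · rw [hw₁.2] at hlt; exact absurd (hmin v hv) (not_le.mpr hlt)
  · have hvFn : v ∈ {w ∈ S | w.length = n} := ⟨hv, by rw [hlen, hw₁.2]⟩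
    have hvw : v < w₁ := hlex
    exact absurd hvw (not_lt.mpr (hmin₁ v hvFn))

lemma sl_accepts_conv (w₁ w₂ : List α) :
    conv w₁ w₂ ∈ (slDFA α).accepts ↔ slLt w₁ w₂ := by
  rw [DFA.mem_accepts, DFA.eval,
    show (slDFA α).start = (Ordering.eq, false, false) from rfl,
    sl_evalFrom w₁ w₂ .eq false false (by simp) (by simp)]
  show ((false || decide (w₁.length < w₂.length)) = true ∧
      (false || decide (w₂.length < w₁.length)) = false) ∨
      ((false || decide (w₁.length < w₂.length)) = false ∧
      (false || decide (w₂.length < w₁.length)) = false ∧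
      Ordering.eq.then (lexc w₁ w₂) = .lt) ↔ _
  simp only [Bool.false_or, decide_eq_true_eq, decide_eq_false_iff_not]
  have he : Ordering.eq.then (lexc w₁ w₂) = lexc w₁ w₂ := rfl
  rw [he]
  constructor
  · rintro (⟨h1, _⟩ | ⟨h1, h2, h3⟩)
    · exact Or.inl h1
    · have hlen : w₁.length = w₂.length := by omega
      exact Or.inr ⟨hlen, (lexc_lt_iff _ _ hlen).mp h3⟩
  · rintro (h | ⟨hlen, hlex⟩)
    · exact Or.inl ⟨h, by omega⟩
    · exact Or.inr ⟨by omega, by omega, (lexc_lt_iff _ _ hlen).mpr hlex⟩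

end SLOrd

section Proj
variable {α σ : Type*}

/-- `pairUp xs w` zips `xs` with `w.map some`. -/
def pairUp (xs : List (Option α)) (w : List α) : List (Option α × Option α) :=
  List.zipWith (fun x b => (x, some b)) xs w

/-- The projection NFA. -/
def projNFA (D : DFA (Option α × Option α) σ) : NFA α σ where
  step s b := {t | ∃ x : Option α, t = D.step s (x, some b)}
  start := {D.start}
  accept := {s | ∃ l : List α,
    D.evalFrom s (l.map fun a => (some a, none)) ∈ D.accept}

lemma projNFA_mem_evalFrom (D : DFA (Option α × Option α) σ) :
    ∀ (w : List α) (S : Set σ) (t : σ),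
    t ∈ (projNFA D).evalFrom S w ↔
      ∃ s ∈ S, ∃ xs : List (Option α), xs.length = w.length ∧
        t = D.evalFrom s (pairUp xs w) := by
  intro w
  induction w with
  | nil =>
      intro S t
      constructor
      · intro h; exact ⟨t, h, [], rfl, rfl⟩
      · rintro ⟨s, hs, xs, hlen, rfl⟩
        have hxs : xs = [] := List.length_eq_zero_iff.mp hlen
        subst hxs
        simpa [pairUp] using hs
  | cons b w ih =>
      intro S t
      show t ∈ (projNFA D).evalFrom ((projNFA D).stepSet S b) w ↔ _
      rw [ih]
      constructor
      · rintro ⟨s', hs', xs, hlen, rfl⟩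
        rw [NFA.mem_stepSet] at hs'
        obtain ⟨s, hs, x, rfl⟩ := hs'
        exact ⟨s, hs, x :: xs, by simp [hlen], rfl⟩
      · rintro ⟨s, hs, xs, hlen, rfl⟩
        match xs, hlen with
        | x :: xs, hlen =>
            exact ⟨D.step s (x, some b), NFA.mem_stepSet.mpr ⟨s, hs, x, rfl⟩, xs,
              by simpa using hlen, rfl⟩

lemma conv_nil_right : ∀ v : List α, conv v [] = v.map fun a => (some a, none) := by
  intro v
  induction v with
  | nil => simp [conv]
  | cons a as ih => rw [conv, ih]; rfl

lemma conv_decomp : ∀ v w : List α, ∃ (xs : List (Option α)) (l : List α),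
    xs.length = w.length ∧ conv v w = pairUp xs w ++ l.map fun a => (some a, none) := by
  intro v w
  induction v, w using conv.induct with
  | case1 => exact ⟨[], [], rfl, by simp [conv, pairUp]⟩
  | case2 a as ih =>
      exact ⟨[], a :: as, rfl, by rw [conv_nil_right]; simp [pairUp]⟩
  | case3 b bs ih =>
      obtain ⟨xs, l, hlen, heq⟩ := ih
      exact ⟨none :: xs, l, by simp [hlen], by rw [conv, heq]; rfl⟩
  | case4 a as b bs ih =>
      obtain ⟨xs, l, hlen, heq⟩ := ih
      exact ⟨some a :: xs, l, by simp [hlen], by rw [conv, heq]; rfl⟩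

lemma filterMap_snd_pairUp : ∀ (xs : List (Option α)) (w : List α), xs.length = w.length →
    (pairUp xs w).filterMap Prod.snd = w := by
  intro xs
  induction xs with
  | nil => intro w hw; have : w = [] := (List.length_eq_zero_iff.mp hw.symm); subst this; rfl
  | cons x xs ih =>
      intro w hw
      match w, hw with
      | b :: w, hw =>
          have e : pairUp (x :: xs) (b :: w) = (x, some b) :: pairUp xs w := rfl
          rw [e]
          have e2 : ((x, some b) :: pairUp xs w).filterMap Prod.snd
              = b :: (pairUp xs w).filterMap Prod.snd := rfl
          rw [e2, ih w (by simpa using hw)]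

lemma projNFA_accepts (D : DFA (Option α × Option α) σ) (R : Set (List α × List α))
    (hD : ∀ u, u ∈ D.accepts ↔ ∃ p ∈ R, u = conv p.1 p.2) (w : List α) :
    w ∈ (projNFA D).accepts ↔ ∃ v, (v, w) ∈ R := by
  rw [NFA.mem_accepts]
  constructor
  · rintro ⟨t, ht, hmem⟩
    obtain ⟨l, hl⟩ := ht
    rw [projNFA_mem_evalFrom] at hmem
    obtain ⟨s, hs, xs, hlen, rfl⟩ := hmem
    have hs' : s = D.start := hs
    subst hs'
    rw [← DFA.evalFrom_of_append] at hl
    have hacc : pairUp xs w ++ (l.map fun a => (some a, none)) ∈ D.accepts := hl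
    rw [hD] at hacc
    obtain ⟨⟨v, w'⟩, hvw, hconv⟩ := hacc
    have : w' = w := by
      have h1 : List.filterMap Prod.snd
          (pairUp xs w ++ l.map fun a => (some a, none)) = w' := by
        rw [hconv]; exact filterMap_snd_conv v w'
      rw [List.filterMap_append, filterMap_snd_pairUp xs w hlen] at h1
      have h2 : List.filterMap Prod.snd
          (l.map fun a => ((some a, none) : Option α × Option α)) = [] := by
        induction l with
        | nil => rfl
        | cons c l ihl => simpa using ihl
      rw [h2, List.append_nil] at h1
      exact h1.symm
    subst this
    exact ⟨v, hvw⟩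
  · rintro ⟨v, hv⟩
    have hacc : conv v w ∈ D.accepts := (hD _).mpr ⟨(v, w), hv, rfl⟩
    obtain ⟨xs, l, hlen, heq⟩ := conv_decomp v w
    refine ⟨D.evalFrom D.start (pairUp xs w), ⟨l, ?_⟩, ?_⟩
    · rw [← DFA.evalFrom_of_append, ← heq]
      exact hacc
    · rw [projNFA_mem_evalFrom]
      exact ⟨D.start, rfl, xs, hlen, rfl⟩

end Proj

section GroupWords
variable {A : Set G}

@[simp] lemma eval_nil : eval A [] = 1 := rfl

@[simp] lemma eval_cons (a : Alph A) (w : List (Alph A)) :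
    eval A (a :: w) = a.val * eval A w := by unfold eval; exact List.prod_cons

lemma eval_append (w v : List (Alph A)) : eval A (w ++ v) = eval A w * eval A v := by
  unfold eval; exact (congrArg List.prod List.map_append).trans List.prod_append

/-- The inverse of a letter. -/
def invLetter (a : Alph A) : Alph A :=
  ⟨a.val⁻¹, by
    rcases a.property with h | h
    · exact Or.inr (by simpa using h)
    · exact Or.inl (by simpa using h)⟩

lemma eval_invWord (w : List (Alph A)) :
    eval A ((w.map invLetter).reverse) = (eval A w)⁻¹ := by
  induction w with
  | nil => simp
  | cons a w ih =>
      rw [List.map_cons, List.reverse_cons, eval_append, ih, eval_cons]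
      simp [invLetter, mul_inv_rev]

/-- The ball of radius `C`. -/
def ball (A : Set G) (C : ℕ) : Set G :=
  {g : G | ∃ w : List (Alph A), eval A w = g ∧ w.length ≤ C}

lemma one_mem_ball (C : ℕ) : (1 : G) ∈ ball A C := ⟨[], rfl, by simp⟩

lemma ball_mono {C C' : ℕ} (h : C ≤ C') : ball A C ⊆ ball A C' :=
  fun _ ⟨w, hw, hlen⟩ => ⟨w, hw, hlen.trans h⟩

lemma mul_mem_ball {x y : G} {C₁ C₂ : ℕ} (hx : x ∈ ball A C₁) (hy : y ∈ ball A C₂) :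
    x * y ∈ ball A (C₁ + C₂) := by
  obtain ⟨w, hw, hlw⟩ := hx
  obtain ⟨v, hv, hlv⟩ := hy
  exact ⟨w ++ v, by rw [eval_append, hw, hv], by simpa using Nat.add_le_add hlw hlv⟩

lemma inv_mem_ball {x : G} {C : ℕ} (hx : x ∈ ball A C) : x⁻¹ ∈ ball A C := by
  obtain ⟨w, hw, hlw⟩ := hx
  exact ⟨(w.map invLetter).reverse, by rw [eval_invWord, hw], by simpa using hlw⟩

lemma ball_finite (hAfin : A.Finite) (C : ℕ) : (ball A C).Finite := by
  have hfin : Finite (Alph A) := by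
    have : (A ∪ A⁻¹).Finite := hAfin.union hAfin.inv
    exact this.to_subtype
  have : ball A C ⊆ (fun w => eval A w) '' {w : List (Alph A) | w.length ≤ C} := by
    rintro g ⟨w, hw, hlen⟩
    exact ⟨w, hlen, hw⟩
  exact Set.Finite.subset (Set.Finite.image _ (List.finite_length_le _ C)) this

lemma exists_rep (hAgen : Subgroup.closure A = ⊤) (g : G) :
    ∃ w : List (Alph A), eval A w = g := by
  have hg : g ∈ Subgroup.closure A := hAgen ▸ Subgroup.mem_top g
  induction hg using Subgroup.closure_induction with
  | mem x hx => exact ⟨[⟨x, Set.mem_union_left _ hx⟩], mul_one x⟩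
  | one => exact ⟨[], rfl⟩
  | mul x y hx hy ihx ihy =>
      obtain ⟨w, hw⟩ := ihx
      obtain ⟨v, hv⟩ := ihy
      exact ⟨w ++ v, by rw [eval_append, hw, hv]⟩
  | inv x hx ihx =>
      obtain ⟨w, hw⟩ := ihx
      exact ⟨(w.map invLetter).reverse, by rw [eval_invWord, hw]⟩

lemma mem_ball_of_cayleyDist_le (hAgen : Subgroup.closure A = ⊤) {g₁ g₂ : G} {C : ℕ}
    (h : cayleyDist A g₁ g₂ ≤ C) : g₁⁻¹ * g₂ ∈ ball A C := by
  have hne : {n | ∃ w : List (Alph A), eval A w = g₁⁻¹ * g₂ ∧ w.length = n}.Nonempty := by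
    obtain ⟨w, hw⟩ := exists_rep hAgen (g₁⁻¹ * g₂)
    exact ⟨w.length, w, hw, rfl⟩
  obtain ⟨w, hw, hlen⟩ := Nat.sInf_mem hne
  exact ⟨w, hw, by rw [hlen]; exact h⟩

end GroupWords

section DiffDFA
variable {A : Set G}

def ofLetter : Option (Alph A) → G := fun o => (Option.map Subtype.val o).getD 1

lemma ofLetter_some (a : Alph A) : ofLetter (some a) = a.val := rfl

lemma ofLetter_none : ofLetter (none : Option (Alph A)) = 1 := rfl

open scoped Classical in
noncomputable def diffDFA (A : Set G) (B : Set G) (h1 : (1 : G) ∈ B) (z : G) :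
    DFA (Option (Alph A) × Option (Alph A)) (Option B) where
  step s b := s.bind fun g =>
    if h : (ofLetter b.1)⁻¹ * g.val * ofLetter b.2 ∈ B then some ⟨_, h⟩ else none
  start := some ⟨1, h1⟩
  accept := {s | Option.map Subtype.val s = some z}

variable {B : Set G} {h1 : (1 : G) ∈ B} {z : G}

lemma diff_evalFrom_none (u : List (Option (Alph A) × Option (Alph A))) :
    (diffDFA A B h1 z).evalFrom none u = none := by
  induction u with
  | nil => rfl
  | cons b u ih => rw [evalFrom_cons']; exact ih

lemma diff_step_some {g : G} (hg : g ∈ B) (x y : Option (Alph A))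
    (h : (ofLetter x)⁻¹ * g * ofLetter y ∈ B) :
    (diffDFA A B h1 z).step (some ⟨g, hg⟩) (x, y) = some ⟨_, h⟩ := by
  simp [diffDFA, h]

lemma diff_step_none {g : G} (hg : g ∈ B) (x y : Option (Alph A))
    (h : (ofLetter x)⁻¹ * g * ofLetter y ∉ B) :
    (diffDFA A B h1 z).step (some ⟨g, hg⟩) (x, y) = none := by
  simp [diffDFA, h]

lemma diff_sound : ∀ w₁ w₂ : List (Alph A), ∀ g : G, ∀ hg : g ∈ B, ∀ d : B,
    (diffDFA A B h1 z).evalFrom (some ⟨g, hg⟩) (conv w₁ w₂) = some d →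
    d.val = (eval A w₁)⁻¹ * g * eval A w₂ ∧
      ∀ t, (eval A (w₁.take t))⁻¹ * g * eval A (w₂.take t) ∈ B := by
  intro w₁ w₂
  induction w₁, w₂ using conv.induct with
  | case1 =>
      intro g hg d h
      simp only [conv, DFA.evalFrom, List.foldl_nil] at h
      cases h
      exact ⟨by simp, fun t => by simpa using hg⟩
  | case2 a as ih =>
      intro g hg d h
      rw [conv, evalFrom_cons'] at h
      by_cases hB : (ofLetter (some a))⁻¹ * g * ofLetter (none : Option (Alph A)) ∈ B
      · rw [diff_step_some hg _ _ hB] at h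
        obtain ⟨hd, ht⟩ := ih _ hB d h
        constructor
        · rw [hd]; simp [ofLetter_some, ofLetter_none]; group
        · intro t
          cases t with
          | zero => simpa using hg
          | succ t =>
              have := ht t
              simp only [List.take_succ_cons, List.take_nil, eval_cons, eval_nil,
                mul_one, ofLetter_some, ofLetter_none] at this ⊢
              simpa [mul_assoc, mul_one] using this
      · rw [diff_step_none hg _ _ hB, diff_evalFrom_none] at h
        cases h
  | case3 b bs ih =>
      intro g hg d h
      rw [conv, evalFrom_cons'] at h
      by_cases hB : (ofLetter (none : Option (Alph A)))⁻¹ * g * ofLetter (some b) ∈ B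
      · rw [diff_step_some hg _ _ hB] at h
        obtain ⟨hd, ht⟩ := ih _ hB d h
        constructor
        · rw [hd]; simp [ofLetter_some, ofLetter_none]; group
        · intro t
          cases t with
          | zero => simpa using hg
          | succ t =>
              have := ht t
              simp only [List.take_succ_cons, List.take_nil, eval_cons, eval_nil,
                mul_one, ofLetter_some, ofLetter_none] at this ⊢
              simpa [mul_assoc, mul_one] using this
      · rw [diff_step_none hg _ _ hB, diff_evalFrom_none] at h
        cases h
  | case4 a as b bs ih =>
      intro g hg d h
      rw [conv, evalFrom_cons'] at h
      by_cases hB : (ofLetter (some a))⁻¹ * g * ofLetter (some b) ∈ B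
      · rw [diff_step_some hg _ _ hB] at h
        obtain ⟨hd, ht⟩ := ih _ hB d h
        constructor
        · rw [hd]; simp [ofLetter_some, ofLetter_none]; group
        · intro t
          cases t with
          | zero => simpa using hg
          | succ t =>
              have := ht t
              simp only [List.take_succ_cons, eval_cons, ofLetter_some, ofLetter_none] at this ⊢
              simpa [mul_assoc] using this
      · rw [diff_step_none hg _ _ hB, diff_evalFrom_none] at h
        cases h

lemma diff_complete : ∀ w₁ w₂ : List (Alph A), ∀ g : G, ∀ hg : g ∈ B,
    (∀ t, (eval A (w₁.take t))⁻¹ * g * eval A (w₂.take t) ∈ B) →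
    ∃ d : B, (diffDFA A B h1 z).evalFrom (some ⟨g, hg⟩) (conv w₁ w₂) = some d := by
  intro w₁ w₂
  induction w₁, w₂ using conv.induct with
  | case1 =>
      intro g hg _
      exact ⟨⟨g, hg⟩, by simp only [conv]; rfl⟩
  | case2 a as ih =>
      intro g hg ht
      have hB : (ofLetter (some a))⁻¹ * g * ofLetter (none : Option (Alph A)) ∈ B := by
        have := ht 1
        simpa [ofLetter_some, ofLetter_none, mul_assoc] using this
      rw [conv, evalFrom_cons', diff_step_some hg _ _ hB]
      apply ih
      intro t
      have := ht (t + 1)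
      simp only [List.take_succ_cons, List.take_nil, eval_cons, eval_nil, ofLetter_some, ofLetter_none] at this ⊢
      simpa [mul_assoc] using this
  | case3 b bs ih =>
      intro g hg ht
      have hB : (ofLetter (none : Option (Alph A)))⁻¹ * g * ofLetter (some b) ∈ B := by
        have := ht 1
        simpa [ofLetter_some, ofLetter_none, mul_assoc] using this
      rw [conv, evalFrom_cons', diff_step_some hg _ _ hB]
      apply ih
      intro t
      have := ht (t + 1)
      simp only [List.take_succ_cons, List.take_nil, eval_cons, eval_nil, ofLetter_some, ofLetter_none] at this ⊢
      simpa [mul_assoc] using this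
  | case4 a as b bs ih =>
      intro g hg ht
      have hB : (ofLetter (some a))⁻¹ * g * ofLetter (some b) ∈ B := by
        have := ht 1
        simpa [ofLetter_some, ofLetter_none, mul_assoc] using this
      rw [conv, evalFrom_cons', diff_step_some hg _ _ hB]
      apply ih
      intro t
      have := ht (t + 1)
      simp only [List.take_succ_cons, eval_cons, ofLetter_some, ofLetter_none] at this ⊢
      simpa [mul_assoc] using this

/-- The key language identity: the convolution language of pairs `(w₁, w₂)`, with `wᵢ` accepted
by `Mᵢ` and `(eval w₁)⁻¹ * eval w₂ = z`, provided a fellow-traveller-type property holds. -/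
lemma diff_lang_iff {σ₁ σ₂ : Type*} (M₁ : DFA (Alph A) σ₁) (M₂ : DFA (Alph A) σ₂)
    (h1B : (1 : G) ∈ B) (z : G)
    (hpre : ∀ w₁ w₂ : List (Alph A), w₁ ∈ M₁.accepts → w₂ ∈ M₂.accepts →
      (eval A w₁)⁻¹ * eval A w₂ = z →
      ∀ t, (eval A (w₁.take t))⁻¹ * 1 * eval A (w₂.take t) ∈ B) (u) :
    u ∈ (interDFA (wfDFA (Alph A)) (interDFA (liftFst M₁) (interDFA (liftSnd M₂)
        (diffDFA A B h1B z)))).accepts ↔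
      ∃ w₁ w₂ : List (Alph A), w₁ ∈ M₁.accepts ∧ w₂ ∈ M₂.accepts ∧
        (eval A w₁)⁻¹ * eval A w₂ = z ∧ u = conv w₁ w₂ := by
  rw [interDFA_accepts, interDFA_accepts, interDFA_accepts, liftFst_accepts, liftSnd_accepts]
  constructor
  · rintro ⟨hwf, hm1, hm2, hdiff⟩
    obtain ⟨-, -, hu⟩ := wf_sound u false false hwf
    refine ⟨u.filterMap Prod.fst, u.filterMap Prod.snd, hm1, hm2, ?_, hu⟩
    rw [DFA.mem_accepts, DFA.eval, hu] at hdiff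
    have hdiff' : Option.map Subtype.val ((diffDFA A B h1B z).evalFrom (some ⟨1, h1B⟩)
        (conv (u.filterMap Prod.fst) (u.filterMap Prod.snd))) = some z := hdiff
    obtain ⟨d, hd, hdz⟩ := Option.map_eq_some_iff.mp hdiff'
    obtain ⟨hval, -⟩ := diff_sound _ _ 1 h1B d hd
    rw [← hdz, hval, mul_one]
  · rintro ⟨w₁, w₂, hm1, hm2, hz, rfl⟩
    refine ⟨wf_complete w₁ w₂ false false (by simp) (by simp), ?_, ?_, ?_⟩
    · rw [filterMap_fst_conv]; exact hm1
    · rw [filterMap_snd_conv]; exact hm2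
    · obtain ⟨d, hd⟩ := diff_complete w₁ w₂ 1 h1B (hpre w₁ w₂ hm1 hm2 hz)
      rw [DFA.mem_accepts, DFA.eval]
      have hstart : (diffDFA A B h1B z).evalFrom (diffDFA A B h1B z).start (conv w₁ w₂)
          = some d := hd
      rw [hstart]
      obtain ⟨hval, -⟩ := diff_sound _ _ 1 h1B d hd
      show Option.map Subtype.val (some d) = some z
      rw [Option.map_some, hval, mul_one, hz]

end DiffDFA

lemma isRegular_of_fintype_dfa {T σ : Type*} [Fintype σ] (M : DFA T σ) :
    Language.IsRegular M.accepts :=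
  ⟨Fin (Fintype.card σ), inferInstance, DFA.reindex (Fintype.equivFin σ) M,
    DFA.accepts_reindex _ _⟩

end CAG

open CAG in
/-- If `L ⊆ S*` is a regular language such that `π : L → G` is surjective and there is a
constant `C₀` such that for every `w₁, w₂ ∈ L` and `a ∈ A` with `π(w₁)·a = π(w₂)` the paths
`ŵ₁` and `ŵ₂` are a uniform distance at most `C₀` apart (i.e.
`d_A(π(w₁(t)), π(w₂(t))) ≤ C₀` for all non-negative integers `t`, where `w(t)` is the prefix
of `w` of length `t`, and `w(t) = w` for `t > |w|`), then `G` is an automatic group. -/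
theorem automatic_of_fellow_traveller
    (G : Type*) [Group G] (A : Set G) (hAfin : A.Finite)
    (hAgen : Subgroup.closure A = ⊤)
    (L : Language (Alph A)) (hL : Language.IsRegular L)
    (hsurj : ∀ g : G, ∃ w ∈ L, eval A w = g)
    (C₀ : ℕ)
    (hft : ∀ w₁ ∈ L, ∀ w₂ ∈ L, ∀ a ∈ A, eval A w₁ * a = eval A w₂ →
        ∀ t : ℕ, cayleyDist A (eval A (w₁.take t)) (eval A (w₂.take t)) ≤ C₀) :
    IsAutomatic A := by
  classical
  obtain ⟨σ₀, fin₀, M₀, hM₀⟩ := hL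
  subst hM₀
  letI := fin₀
  letI : Finite (Alph A) := (hAfin.union hAfin.inv).to_subtype
  letI : Fintype (Alph A) := Fintype.ofFinite _
  letI : LinearOrder (Alph A) := IsWellOrder.linearOrder WellOrderingRel
  letI : Fintype Ordering := ⟨{.lt, .eq, .gt}, fun x => by cases x <;> decide⟩
  set B : Set G := ball A (2 * C₀) with hBdef
  have h1B : (1 : G) ∈ B := one_mem_ball _
  letI : Fintype B := (ball_finite hAfin _).fintype
  -- fellow traveller, ball version
  have hft' : ∀ w₁ ∈ M₀.accepts, ∀ w₂ ∈ M₀.accepts, ∀ a ∈ A, eval A w₁ * a = eval A w₂ →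
      ∀ t, (eval A (w₁.take t))⁻¹ * 1 * eval A (w₂.take t) ∈ B := by
    intro w₁ h₁ w₂ h₂ a ha hevala t
    rw [mul_one]
    exact ball_mono (by omega)
      (mem_ball_of_cayleyDist_le hAgen (hft w₁ h₁ w₂ h₂ a ha hevala t))
  -- fellow traveller for the equality relation
  have heqft : ∀ w₁ ∈ M₀.accepts, ∀ w₂ ∈ M₀.accepts, eval A w₁ = eval A w₂ →
      ∀ t, (eval A (w₁.take t))⁻¹ * 1 * eval A (w₂.take t) ∈ B := by
    intro w₁ h₁ w₂ h₂ heq t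
    rw [mul_one]
    rcases Set.eq_empty_or_nonempty A with hA | ⟨a₀, ha₀⟩
    · have htriv : ∀ g : G, g = 1 := by
        intro g
        have h := hAgen
        rw [hA, Subgroup.closure_empty] at h
        exact Subgroup.mem_bot.mp (h ▸ Subgroup.mem_top g)
      rw [htriv ((eval A (w₁.take t))⁻¹ * eval A (w₂.take t))]
      exact h1B
    · obtain ⟨w₃, hw₃L, hw₃⟩ := hsurj (eval A w₁ * a₀)
      have hx := mem_ball_of_cayleyDist_le hAgen (hft w₁ h₁ w₃ hw₃L a₀ ha₀ hw₃.symm t)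
      have hy := mem_ball_of_cayleyDist_le hAgen
        (hft w₂ h₂ w₃ hw₃L a₀ ha₀ (by rw [← heq, hw₃]) t)
      have hdecomp : (eval A (w₁.take t))⁻¹ * eval A (w₂.take t)
          = ((eval A (w₁.take t))⁻¹ * eval A (w₃.take t))
            * ((eval A (w₂.take t))⁻¹ * eval A (w₃.take t))⁻¹ := by group
      rw [hBdef, hdecomp, two_mul]
      exact mul_mem_ball hx (inv_mem_ball hy)
  -- the shortlex relation and its convolution automaton
  set Rsl : Set (List (Alph A) × List (Alph A)) :=
    {p | p.1 ∈ M₀.accepts ∧ p.2 ∈ M₀.accepts ∧ eval A p.1 = eval A p.2 ∧ slLt p.1 p.2}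
    with hRsl
  set Dbase := interDFA (wfDFA (Alph A)) (interDFA (liftFst M₀) (interDFA (liftSnd M₀)
    (diffDFA A B h1B 1))) with hDbase
  have hDbaseacc : ∀ u, u ∈ Dbase.accepts ↔
      ∃ w₁ w₂ : List (Alph A), w₁ ∈ M₀.accepts ∧ w₂ ∈ M₀.accepts ∧
        (eval A w₁)⁻¹ * eval A w₂ = 1 ∧ u = conv w₁ w₂ := by
    intro u
    exact diff_lang_iff M₀ M₀ h1B 1
      (fun w₁ w₂ hm1 hm2 hz t => heqft w₁ hm1 w₂ hm2 (inv_mul_eq_one.mp hz) t) u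
  set Dsl := interDFA Dbase (slDFA (Alph A)) with hDsldef
  have hDslacc : ∀ u, u ∈ Dsl.accepts ↔ ∃ p ∈ Rsl, u = conv p.1 p.2 := by
    intro u
    rw [interDFA_accepts, hDbaseacc]
    constructor
    · rintro ⟨⟨w₁, w₂, hw₁, hw₂, hz, rfl⟩, hsl⟩
      exact ⟨(w₁, w₂), ⟨hw₁, hw₂, inv_mul_eq_one.mp hz, (sl_accepts_conv w₁ w₂).mp hsl⟩, rfl⟩
    · rintro ⟨⟨w₁, w₂⟩, ⟨hw₁, hw₂, heq, hsl⟩, rfl⟩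
      exact ⟨⟨w₁, w₂, hw₁, hw₂, inv_mul_eq_one.mpr heq, rfl⟩, (sl_accepts_conv w₁ w₂).mpr hsl⟩
  -- the DFA for words that are not shortlex-minimal
  set DP := (projNFA Dsl).toDFA with hDP
  have hDPacc : ∀ w, w ∈ DP.accepts ↔ ∃ v, (v, w) ∈ Rsl := by
    intro w
    rw [hDP, NFA.toDFA_correct]
    exact projNFA_accepts Dsl Rsl hDslacc w
  -- the language of shortlex-minimal representatives
  set M' := interDFA M₀ (complDFA DP) with hM'def
  have hM' : ∀ w, w ∈ M'.accepts ↔ w ∈ M₀.accepts ∧ ¬ ∃ v, (v, w) ∈ Rsl := by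
    intro w
    rw [hM'def, interDFA_accepts, complDFA_accepts, hDPacc]
  refine ⟨M'.accepts, isRegular_of_fintype_dfa M', ⟨fun _ _ => trivial, ?_, ?_⟩, ?_⟩
  · -- injectivity
    intro w₁ hw₁ w₂ hw₂ heval
    replace hw₁ := (hM' w₁).mp hw₁; replace hw₂ := (hM' w₂).mp hw₂
    by_contra hne
    rcases slLt_trichotomy w₁ w₂ with h | h | h
    · exact hw₂.2 ⟨w₁, hw₁.1, hw₂.1, heval, h⟩
    · exact hne h
    · exact hw₁.2 ⟨w₂, hw₂.1, hw₁.1, heval.symm, h⟩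
  · -- surjectivity
    intro g _
    obtain ⟨wg, hwgL, hwg⟩ := hsurj g
    obtain ⟨w₀, hw₀, hmin⟩ := exists_slLt_min
      {w : List (Alph A) | w ∈ M₀.accepts ∧ eval A w = g} ⟨wg, hwgL, hwg⟩
    exact ⟨w₀, (hM' w₀).mpr
      ⟨hw₀.1, fun ⟨v, hv⟩ => hmin v ⟨hv.1, hv.2.2.1.trans hw₀.2⟩ hv.2.2.2⟩, hw₀.2⟩
  · -- the multiplier relations
    intro a ha
    set Da := interDFA (wfDFA (Alph A)) (interDFA (liftFst M') (interDFA (liftSnd M')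
      (diffDFA A B h1B a))) with hDadef
    have hpre : ∀ w₁ w₂ : List (Alph A), w₁ ∈ M'.accepts → w₂ ∈ M'.accepts →
        (eval A w₁)⁻¹ * eval A w₂ = a →
        ∀ t, (eval A (w₁.take t))⁻¹ * 1 * eval A (w₂.take t) ∈ B := by
      intro w₁ w₂ h1 h2 hz t
      exact hft' w₁ ((hM' w₁).mp h1).1 w₂ ((hM' w₂).mp h2).1 a ha
        ((inv_mul_eq_iff_eq_mul.mp hz).symm) t
    have hDaacc : Da.accepts =
        {u | ∃ p ∈ {p : List (Alph A) × List (Alph A) |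
          p.1 ∈ M'.accepts ∧ p.2 ∈ M'.accepts ∧ eval A p.2 = eval A p.1 * a},
          u = conv p.1 p.2} := by
      apply Set.ext
      intro u
      rw [Set.mem_setOf_eq, hDadef]
      refine Iff.trans (diff_lang_iff M' M' h1B a hpre u) ?_
      constructor
      · rintro ⟨w₁, w₂, h1, h2, hz, rfl⟩
        exact ⟨(w₁, w₂), ⟨h1, h2, inv_mul_eq_iff_eq_mul.mp hz⟩, rfl⟩
      · rintro ⟨⟨w₁, w₂⟩, ⟨h1, h2, he⟩, rfl⟩
        exact ⟨w₁, w₂, h1, h2, inv_mul_eq_iff_eq_mul.mpr he, rfl⟩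
    rw [IsRegularRel, ← hDaacc]
    exact isRegular_of_fintype_dfa Da
end

section
/- In the Baumslag–Solitar group BS(p,q) = ⟨a, t | t a^p t⁻¹ = a^q⟩ with 1 ≤ p ≤ q, every element g can be written uniquely as g = w̃(a,t)·a^k, where w̃(a,t) is a product of letters from the set {t, at, a²t, …, a^{q−1}t, t⁻¹, at⁻¹, …, a^{p−1}t⁻¹} whose corresponding word in a and t is freely reduced, and k ∈ ℤ. -/
namespace CAG

/-- The defining relation of the Baumslag–Solitar group `BS(p,q) = ⟨a,t | t aᵖ t⁻¹ = a^q⟩`,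
with `a` the generator `0` and `t` the generator `1` of the free group on two generators. -/
def BSRels (p q : ℕ) : Set (FreeGroup (Fin 2)) :=
  {FreeGroup.of 1 * FreeGroup.of 0 ^ p * (FreeGroup.of 1)⁻¹ * (FreeGroup.of 0 ^ q)⁻¹}

/-- The Baumslag–Solitar group `BS(p,q) = ⟨a,t | t aᵖ t⁻¹ = a^q⟩`. -/
abbrev BS (p q : ℕ) := PresentedGroup (BSRels p q)

/-- The generator `a` of `BS(p,q)`. -/
def BS.a (p q : ℕ) : BS p q := PresentedGroup.of 0

/-- The generator `t` of `BS(p,q)`. -/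
def BS.t (p q : ℕ) : BS p q := PresentedGroup.of 1

/-- The alphabet of blocks `{t, at, …, a^{q-1}t, t⁻¹, at⁻¹, …, a^{p-1}t⁻¹}`:
`.inl i` stands for `aⁱt` (`0 ≤ i < q`) and `.inr j` stands for `aʲt⁻¹` (`0 ≤ j < p`). -/
abbrev BSBlock (p q : ℕ) := Fin q ⊕ Fin p

/-- The word in the letters `a, t` (elements of `Fin 2 × Bool`, the letter `(x, b)` standing
for `x` if `b = true` and `x⁻¹` if `b = false`) spelled by a single block. -/
def BSBlock.letters {p q : ℕ} : BSBlock p q → List (Fin 2 × Bool)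
  | .inl i => List.replicate i.val ((0 : Fin 2), true) ++ [((1 : Fin 2), true)]
  | .inr j => List.replicate j.val ((0 : Fin 2), true) ++ [((1 : Fin 2), false)]

/-- The word in the letters `a, t` spelled by a sequence of blocks. -/
def BSBlockWord {p q : ℕ} (bs : List (BSBlock p q)) : List (Fin 2 × Bool) :=
  (bs.map BSBlock.letters).flatten

/-- A sequence of blocks is freely reduced if the word in `a, t` it spells is freely
reduced, i.e. it contains no subword `x x⁻¹` or `x⁻¹ x`. -/
def BSFreelyReduced {p q : ℕ} (bs : List (BSBlock p q)) : Prop :=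
  FreeGroup.reduce (BSBlockWord bs) = BSBlockWord bs

/-- The element of `BS(p,q)` represented by a single block. -/
def BSBlock.elem {p q : ℕ} : BSBlock p q → BS p q
  | .inl i => BS.a p q ^ i.val * BS.t p q
  | .inr j => BS.a p q ^ j.val * (BS.t p q)⁻¹

end CAG

namespace BSNF
open CAG

variable {p q : ℕ}

/-! ### Basic relations in `BS(p,q)` -/

lemma bs_rel (p q : ℕ) : BS.t p q * BS.a p q ^ p * (BS.t p q)⁻¹ = BS.a p q ^ q := by
  have h : (PresentedGroup.mk (BSRels p q))
      (FreeGroup.of 1 * FreeGroup.of 0 ^ p * (FreeGroup.of 1)⁻¹ * (FreeGroup.of 0 ^ q)⁻¹) = 1 := by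
    apply (QuotientGroup.eq_one_iff _).mpr
    exact Subgroup.subset_normalClosure rfl
  have h2 : BS.t p q * BS.a p q ^ p * (BS.t p q)⁻¹ * (BS.a p q ^ q)⁻¹ = 1 := by
    simpa [map_mul, map_pow, map_inv, BS.a, BS.t, PresentedGroup.of] using h
  calc BS.t p q * BS.a p q ^ p * (BS.t p q)⁻¹
      = BS.t p q * BS.a p q ^ p * (BS.t p q)⁻¹ * (BS.a p q ^ q)⁻¹ * BS.a p q ^ q := by group
    _ = BS.a p q ^ q := by rw [h2]; group

/-- Key commutation: `a^(q·m) · t = t · a^(p·m)` for all integers `m`. -/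
lemma key_comm (p q : ℕ) (m : ℤ) :
    BS.a p q ^ ((q : ℤ) * m) * BS.t p q = BS.t p q * BS.a p q ^ ((p : ℤ) * m) := by
  have h : BS.t p q * BS.a p q ^ ((p : ℤ) * m) * (BS.t p q)⁻¹ = BS.a p q ^ ((q : ℤ) * m) := by
    have h1 : BS.a p q ^ ((p : ℤ) * m) = (BS.a p q ^ p) ^ m := by
      rw [zpow_mul, zpow_natCast]
    have h2 : BS.a p q ^ ((q : ℤ) * m) = (BS.a p q ^ q) ^ m := by
      rw [zpow_mul, zpow_natCast]
    rw [h1, h2, ← bs_rel p q, conj_zpow]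
  rw [← h]; group

/-! ### The normal form carrier -/

/-- Adjacency condition on blocks guaranteeing free reduction of the spelled word. -/
def Good : BSBlock p q → BSBlock p q → Prop
  | .inl _, .inr j => j.val ≠ 0
  | .inr _, .inl i => i.val ≠ 0
  | .inl _, .inl _ => True
  | .inr _, .inr _ => True

/-- Normal forms: a `Good`-chained list of blocks together with an integer exponent. -/
def NF (p q : ℕ) : Type := {x : List (BSBlock p q) × ℤ // x.1.Chain' Good}

lemma emod_toNat_lt {n : ℕ} (hn : 0 < n) (k : ℤ) : (k % (n : ℤ)).toNat < n := by
  have h1 : 0 ≤ k % (n : ℤ) := Int.emod_nonneg k (by exact_mod_cast hn.ne')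
  have h2 : k % (n : ℤ) < n := Int.emod_lt_of_pos k (by exact_mod_cast hn)
  omega

/-- Value of the final `inr` block, junk `0` otherwise. -/
def jval : Option (BSBlock p q) → ℕ
  | some (.inr j) => j.val
  | _ => 0

/-- Value of the final `inl` block, junk `0` otherwise. -/
def ival : Option (BSBlock p q) → ℕ
  | some (.inl i) => i.val
  | _ => 0

/-- Raw right multiplication by `t` on normal-form data. -/
def rT (hq : 0 < q) (x : List (BSBlock p q) × ℤ) : List (BSBlock p q) × ℤ :=
  if x.2 % q = 0 ∧ ∃ j : Fin p, x.1.getLast? = some (.inr j) then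
    (x.1.dropLast, (jval x.1.getLast? : ℤ) + p * (x.2 / q))
  else
    (x.1 ++ [.inl ⟨(x.2 % q).toNat, emod_toNat_lt hq x.2⟩], p * (x.2 / q))

/-- Raw right multiplication by `t⁻¹` on normal-form data. -/
def rTi (hp : 0 < p) (x : List (BSBlock p q) × ℤ) : List (BSBlock p q) × ℤ :=
  if x.2 % p = 0 ∧ ∃ i : Fin q, x.1.getLast? = some (.inl i) then
    (x.1.dropLast, (ival x.1.getLast? : ℤ) + q * (x.2 / p))
  else
    (x.1 ++ [.inr ⟨(x.2 % p).toNat, emod_toNat_lt hp x.2⟩], q * (x.2 / p))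

lemma rT_chain' (hq : 0 < q) {x : List (BSBlock p q) × ℤ} (hx : x.1.Chain' Good) :
    (rT hq x).1.Chain' Good := by
  obtain ⟨bs, k⟩ := x
  by_cases hc : k % q = 0 ∧ ∃ j : Fin p, bs.getLast? = some (.inr j)
  · rw [rT, if_pos hc]
    obtain ⟨hr, j, hj⟩ := hc
    obtain ⟨ys, rfl⟩ := List.getLast?_eq_some_iff.1 hj
    simpa [List.dropLast_concat, List.Chain'] using (List.isChain_append.1 hx).1
  · rw [rT, if_neg hc]
    refine List.isChain_append.2 ⟨hx, List.isChain_singleton _, ?_⟩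
    intro b hb y hy
    simp only [List.head?_cons, Option.mem_def, Option.some.injEq] at hy
    subst hy
    cases b with
    | inl i => trivial
    | inr j =>
        show ((k % (q : ℤ)).toNat : ℕ) ≠ 0
        intro h0
        have h1 : 0 ≤ k % (q : ℤ) := Int.emod_nonneg k (by exact_mod_cast hq.ne')
        have : k % (q : ℤ) = 0 := by omega
        exact hc ⟨this, j, hb⟩

lemma rTi_chain' (hp : 0 < p) {x : List (BSBlock p q) × ℤ} (hx : x.1.Chain' Good) :
    (rTi hp x).1.Chain' Good := by
  obtain ⟨bs, k⟩ := x
  by_cases hc : k % p = 0 ∧ ∃ i : Fin q, bs.getLast? = some (.inl i)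
  · rw [rTi, if_pos hc]
    obtain ⟨hr, i, hi⟩ := hc
    obtain ⟨ys, rfl⟩ := List.getLast?_eq_some_iff.1 hi
    simpa [List.dropLast_concat, List.Chain'] using (List.isChain_append.1 hx).1
  · rw [rTi, if_neg hc]
    refine List.isChain_append.2 ⟨hx, List.isChain_singleton _, ?_⟩
    intro b hb y hy
    simp only [List.head?_cons, Option.mem_def, Option.some.injEq] at hy
    subst hy
    cases b with
    | inr j => trivial
    | inl i =>
        show ((k % (p : ℤ)).toNat : ℕ) ≠ 0
        intro h0
        have h1 : 0 ≤ k % (p : ℤ) := Int.emod_nonneg k (by exact_mod_cast hp.ne')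
        have : k % (p : ℤ) = 0 := by omega
        exact hc ⟨this, i, hb⟩

lemma rTi_rT (hp : 0 < p) (hq : 0 < q) {x : List (BSBlock p q) × ℤ}
    (hx : x.1.Chain' Good) : rTi hp (rT hq x) = x := by
  obtain ⟨bs, k⟩ := x
  have hp' : (p : ℤ) ≠ 0 := by exact_mod_cast hp.ne'
  have hq' : (q : ℤ) ≠ 0 := by exact_mod_cast hq.ne'
  by_cases hc : k % q = 0 ∧ ∃ j : Fin p, bs.getLast? = some (.inr j)
  · rw [rT, if_pos hc]
    obtain ⟨hr, j, hj⟩ := hc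
    obtain ⟨ys, rfl⟩ := List.getLast?_eq_some_iff.1 hj
    have hjv : jval (ys ++ [Sum.inr j] : List (BSBlock p q)).getLast? = j.val := by
      rw [List.getLast?_concat]; rfl
    rw [hjv, List.dropLast_concat]
    have hmod : ((j.val : ℤ) + p * (k / q)) % p = j.val := by
      rw [Int.add_mul_emod_self_left, Int.emod_eq_of_lt (by positivity) (by exact_mod_cast j.2)]
    have hdiv : ((j.val : ℤ) + p * (k / q)) / p = k / q := by
      rw [Int.add_mul_ediv_left _ _ hp', Int.ediv_eq_zero_of_lt (by positivity)
        (by exact_mod_cast j.2), zero_add]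
    have hk : (q : ℤ) * (k / q) = k := by
      have := Int.mul_ediv_add_emod k q
      omega
    have hneg : ¬(((j.val : ℤ) + p * (k / q)) % p = 0 ∧
        ∃ i : Fin q, ys.getLast? = some (.inl i)) := by
      rintro ⟨h0, i, hi⟩
      rw [hmod] at h0
      have hjunc := (List.isChain_append.1 hx).2.2
      have hg : Good (Sum.inl i : BSBlock p q) (Sum.inr j) := by
        refine hjunc _ hi _ ?_
        simp
      have : j.val ≠ 0 := hg
      omega
    rw [rTi, if_neg (by simpa using hneg)]
    refine Prod.ext ?_ ?_
    · show ys ++ [(Sum.inr ⟨_, _⟩ : BSBlock p q)] = ys ++ [Sum.inr j]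
      congr 2
      exact congrArg Sum.inr (Fin.ext (by
        show ((((j.val : ℤ)) + ↑p * (k / ↑q)) % ↑p).toNat = j.val
        rw [hmod]; simp))
    · show (q : ℤ) * (((j.val : ℤ) + p * (k / q)) / p) = k
      rw [hdiv, hk]
  · rw [rT, if_neg hc]
    have hmod : ((p : ℤ) * (k / q)) % p = 0 := Int.mul_emod_right _ _
    have hlast : ((bs ++ [(Sum.inl ⟨(k % (q : ℤ)).toNat, emod_toNat_lt hq k⟩ : BSBlock p q)]
        : List (BSBlock p q))).getLast? = some (Sum.inl ⟨(k % (q : ℤ)).toNat, emod_toNat_lt hq k⟩) :=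
      List.getLast?_concat
    rw [rTi, if_pos ⟨hmod, ⟨_, hlast⟩⟩, hlast]
    refine Prod.ext ?_ ?_
    · simpa using List.dropLast_concat
    · show ((ival (some (Sum.inl ⟨(k % (q : ℤ)).toNat, emod_toNat_lt hq k⟩ : BSBlock p q)) : ℤ)
        + q * ((p : ℤ) * (k / q) / p)) = k
      have h1 : 0 ≤ k % (q : ℤ) := Int.emod_nonneg k hq'
      have h2 : (ival (some (Sum.inl ⟨(k % (q : ℤ)).toNat, emod_toNat_lt hq k⟩ : BSBlock p q)) : ℤ)
          = k % q := by
        show (((k % (q : ℤ)).toNat : ℤ)) = k % q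
        omega
      rw [h2, Int.mul_ediv_cancel_left _ hp']
      have := Int.mul_ediv_add_emod k q
      omega

lemma rT_rTi (hp : 0 < p) (hq : 0 < q) {x : List (BSBlock p q) × ℤ}
    (hx : x.1.Chain' Good) : rT hq (rTi hp x) = x := by
  obtain ⟨bs, k⟩ := x
  have hp' : (p : ℤ) ≠ 0 := by exact_mod_cast hp.ne'
  have hq' : (q : ℤ) ≠ 0 := by exact_mod_cast hq.ne'
  by_cases hc : k % p = 0 ∧ ∃ i : Fin q, bs.getLast? = some (.inl i)
  · rw [rTi, if_pos hc]
    obtain ⟨hr, i, hi⟩ := hc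
    obtain ⟨ys, rfl⟩ := List.getLast?_eq_some_iff.1 hi
    have hiv : ival (ys ++ [Sum.inl i] : List (BSBlock p q)).getLast? = i.val := by
      rw [List.getLast?_concat]; rfl
    rw [hiv, List.dropLast_concat]
    have hmod : ((i.val : ℤ) + q * (k / p)) % q = i.val := by
      rw [Int.add_mul_emod_self_left, Int.emod_eq_of_lt (by positivity) (by exact_mod_cast i.2)]
    have hdiv : ((i.val : ℤ) + q * (k / p)) / q = k / p := by
      rw [Int.add_mul_ediv_left _ _ hq', Int.ediv_eq_zero_of_lt (by positivity)
        (by exact_mod_cast i.2), zero_add]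
    have hk : (p : ℤ) * (k / p) = k := by
      have := Int.mul_ediv_add_emod k p
      omega
    have hneg : ¬(((i.val : ℤ) + q * (k / p)) % q = 0 ∧
        ∃ j : Fin p, ys.getLast? = some (.inr j)) := by
      rintro ⟨h0, j, hj⟩
      rw [hmod] at h0
      have hjunc := (List.isChain_append.1 hx).2.2
      have hg : Good (Sum.inr j : BSBlock p q) (Sum.inl i) := by
        refine hjunc _ hj _ ?_
        simp
      have : i.val ≠ 0 := hg
      omega
    rw [rT, if_neg (by simpa using hneg)]
    refine Prod.ext ?_ ?_
    · show ys ++ [(Sum.inl ⟨_, _⟩ : BSBlock p q)] = ys ++ [Sum.inl i]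
      congr 2
      exact congrArg Sum.inl (Fin.ext (by
        show ((((i.val : ℤ)) + ↑q * (k / ↑p)) % ↑q).toNat = i.val
        rw [hmod]; simp))
    · show (p : ℤ) * (((i.val : ℤ) + q * (k / p)) / q) = k
      rw [hdiv, hk]
  · rw [rTi, if_neg hc]
    have hmod : ((q : ℤ) * (k / p)) % q = 0 := Int.mul_emod_right _ _
    have hlast : ((bs ++ [(Sum.inr ⟨(k % (p : ℤ)).toNat, emod_toNat_lt hp k⟩ : BSBlock p q)]
        : List (BSBlock p q))).getLast? = some (Sum.inr ⟨(k % (p : ℤ)).toNat, emod_toNat_lt hp k⟩) :=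
      List.getLast?_concat
    rw [rT, if_pos ⟨hmod, ⟨_, hlast⟩⟩, hlast]
    refine Prod.ext ?_ ?_
    · simpa using List.dropLast_concat
    · show ((jval (some (Sum.inr ⟨(k % (p : ℤ)).toNat, emod_toNat_lt hp k⟩ : BSBlock p q)) : ℤ)
        + p * ((q : ℤ) * (k / p) / q)) = k
      have h1 : 0 ≤ k % (p : ℤ) := Int.emod_nonneg k hp'
      have h2 : (jval (some (Sum.inr ⟨(k % (p : ℤ)).toNat, emod_toNat_lt hp k⟩ : BSBlock p q)) : ℤ)
          = k % p := by
        show (((k % (p : ℤ)).toNat : ℤ)) = k % p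
        omega
      rw [h2, Int.mul_ediv_cancel_left _ hq']
      have := Int.mul_ediv_add_emod k p
      omega

/-! ### The permutations -/

/-- Right multiplication by `a` as a permutation of normal forms. -/
def eA : Equiv.Perm (NF p q) where
  toFun x := ⟨(x.1.1, x.1.2 + 1), x.2⟩
  invFun x := ⟨(x.1.1, x.1.2 - 1), x.2⟩
  left_inv x := Subtype.ext (Prod.ext rfl (by simp))
  right_inv x := Subtype.ext (Prod.ext rfl (by simp))

/-- Right multiplication by `t` as a permutation of normal forms. -/
def eT (hp : 0 < p) (hq : 0 < q) : Equiv.Perm (NF p q) where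
  toFun x := ⟨rT hq x.1, rT_chain' hq x.2⟩
  invFun x := ⟨rTi hp x.1, rTi_chain' hp x.2⟩
  left_inv x := Subtype.ext (rTi_rT hp hq x.2)
  right_inv x := Subtype.ext (rT_rTi hp hq x.2)

lemma eA_pow (n : ℕ) (x : NF p q) : ((eA ^ n) x).1 = (x.1.1, x.1.2 + n) := by
  induction n with
  | zero => simp
  | succ n ih =>
      rw [pow_succ', Equiv.Perm.mul_apply]
      have hstep : (eA ((eA ^ n) x)).1 = (((eA ^ n) x).1.1, ((eA ^ n) x).1.2 + 1) := rfl
      rw [hstep, ih]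
      refine Prod.ext rfl ?_
      push_cast
      ring

lemma eA_zpow (k : ℤ) (x : NF p q) : ((eA ^ k) x).1 = (x.1.1, x.1.2 + k) := by
  cases k with
  | ofNat n =>
      rw [Int.ofNat_eq_coe, zpow_natCast, eA_pow]
  | negSucc n =>
      rw [zpow_negSucc]
      set y : NF p q := ((eA ^ (n + 1))⁻¹) x with hy
      have hxy : (eA ^ (n + 1)) y = x := by rw [hy]; simp
      have h3 : x.1 = (y.1.1, y.1.2 + ((n : ℤ) + 1)) := by
        rw [← hxy]
        have := eA_pow (n + 1) y
        rw [this]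
        push_cast
        ring_nf
      refine Prod.ext ?_ ?_
      · rw [h3]
      · rw [h3]
        show y.1.2 = y.1.2 + ((n : ℤ) + 1) + Int.negSucc n
        rw [Int.negSucc_eq]
        push_cast
        ring

/-- The raw commutation `rT ∘ (+q) = (+p) ∘ rT`. -/
lemma rT_add_q (hq : 0 < q) (x : List (BSBlock p q) × ℤ) :
    rT hq (x.1, x.2 + q) = ((rT hq x).1, (rT hq x).2 + p) := by
  have hq' : (q : ℤ) ≠ 0 := by exact_mod_cast hq.ne'
  have h1 : (x.2 + (q : ℤ)) % q = x.2 % q := by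
    conv_lhs => rw [show x.2 + (q : ℤ) = x.2 + q * 1 by ring]
    rw [Int.add_mul_emod_self_left]
  have h2 : (x.2 + (q : ℤ)) / q = x.2 / q + 1 := by
    conv_lhs => rw [show x.2 + (q : ℤ) = x.2 + q * 1 by ring]
    rw [Int.add_mul_ediv_left _ _ hq']
  by_cases hc : x.2 % q = 0 ∧ ∃ j : Fin p, x.1.getLast? = some (.inr j)
  · rw [rT, rT, if_pos hc, if_pos (show (x.1, x.2 + (q:ℤ)).2 % q = 0 ∧ _ from ⟨by rw [h1]; exact hc.1, hc.2⟩)]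
    refine Prod.ext rfl ?_
    show (jval x.1.getLast? : ℤ) + p * ((x.2 + q) / q) = (jval x.1.getLast? : ℤ) + p * (x.2 / q) + p
    rw [h2]
    ring
  · rw [rT, rT, if_neg hc, if_neg (show ¬((x.1, x.2 + (q:ℤ)).2 % q = 0 ∧ _) by
      rintro ⟨ha, hb⟩; exact hc ⟨by rw [← h1]; exact ha, hb⟩)]
    refine Prod.ext ?_ ?_
    · show x.1 ++ [(Sum.inl ⟨_, _⟩ : BSBlock p q)] = x.1 ++ [Sum.inl ⟨_, _⟩]
      congr 2
      exact congrArg Sum.inl (Fin.ext (by show ((x.2 + (q:ℤ)) % q).toNat = (x.2 % (q:ℤ)).toNat; rw [h1]))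
    · show (p : ℤ) * ((x.2 + q) / q) = (p : ℤ) * (x.2 / q) + p
      rw [h2]
      ring

lemma comm_perm (hp : 0 < p) (hq : 0 < q) :
    (eA ^ p * eT hp hq : Equiv.Perm (NF p q)) = eT hp hq * eA ^ q := by
  apply Equiv.ext
  intro x
  rw [Equiv.Perm.mul_apply, Equiv.Perm.mul_apply]
  apply Subtype.ext
  have h1 : ((eA ^ p) ((eT hp hq) x)).1 = (((eT hp hq) x).1.1, ((eT hp hq) x).1.2 + p) :=
    eA_pow p _
  have h2 : ((eA ^ q) x).1 = (x.1.1, x.1.2 + q) := eA_pow q x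
  have h3 : ((eT hp hq) ((eA ^ q) x)).1 = rT hq ((eA ^ q) x).1 := rfl
  rw [h1, h3, h2]
  have h4 : (((eT hp hq) x).1) = rT hq x.1 := rfl
  rw [h4, ← rT_add_q hq]

/-! ### The action of `BS(p,q)` on normal forms -/

/-- The images of the generators in the opposite of the permutation group of `NF p q`. -/
def fGen (hp : 0 < p) (hq : 0 < q) : Fin 2 → (Equiv.Perm (NF p q))ᵐᵒᵖ :=
  ![MulOpposite.op eA, MulOpposite.op (eT hp hq)]

lemma lift_rel (hp : 0 < p) (hq : 0 < q) :
    ∀ r ∈ BSRels p q, FreeGroup.lift (fGen hp hq) r = 1 := by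
  intro r hr
  have : r = FreeGroup.of 1 * FreeGroup.of 0 ^ p * (FreeGroup.of 1)⁻¹ * (FreeGroup.of 0 ^ q)⁻¹ := hr
  subst this
  rw [map_mul, map_mul, map_mul, map_inv, map_inv, map_pow, map_pow,
    FreeGroup.lift_apply_of, FreeGroup.lift_apply_of]
  apply MulOpposite.unop_injective
  simp only [fGen, Matrix.cons_val_one, Matrix.head_cons, Matrix.cons_val_zero,
    MulOpposite.unop_mul, MulOpposite.unop_inv, MulOpposite.unop_pow, MulOpposite.unop_op,
    MulOpposite.unop_one]
  rw [comm_perm hp hq]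
  group

/-- The (right-)action homomorphism of `BS(p,q)` on normal forms. -/
def rho (hp : 0 < p) (hq : 0 < q) : BS p q →* (Equiv.Perm (NF p q))ᵐᵒᵖ :=
  PresentedGroup.toGroup (lift_rel hp hq)

/-- The right action of `g : BS(p,q)` on normal forms. -/
def act (hp : 0 < p) (hq : 0 < q) (g : BS p q) (x : NF p q) : NF p q :=
  (rho hp hq g).unop x

lemma act_one (hp : 0 < p) (hq : 0 < q) (x : NF p q) : act hp hq 1 x = x := by
  simp [act]

lemma act_mul (hp : 0 < p) (hq : 0 < q) (g h : BS p q) (x : NF p q) :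
    act hp hq (g * h) x = act hp hq h (act hp hq g x) := by
  simp only [act, map_mul, MulOpposite.unop_mul, Equiv.Perm.mul_apply]

lemma rho_a (hp : 0 < p) (hq : 0 < q) : (rho hp hq (BS.a p q)).unop = eA := by
  rw [BS.a, rho, PresentedGroup.toGroup.of]
  rfl

lemma rho_t (hp : 0 < p) (hq : 0 < q) : (rho hp hq (BS.t p q)).unop = eT hp hq := by
  rw [BS.t, rho, PresentedGroup.toGroup.of]
  rfl

lemma act_a (hp : 0 < p) (hq : 0 < q) (x : NF p q) : act hp hq (BS.a p q) x = eA x := by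
  rw [act, rho_a]

lemma act_t (hp : 0 < p) (hq : 0 < q) (x : NF p q) :
    act hp hq (BS.t p q) x = eT hp hq x := by
  rw [act, rho_t]

lemma act_t_inv (hp : 0 < p) (hq : 0 < q) (x : NF p q) :
    act hp hq (BS.t p q)⁻¹ x = (eT hp hq).symm x := by
  rw [act, map_inv, MulOpposite.unop_inv, rho_t, ← Equiv.Perm.inv_def]

lemma act_a_zpow (hp : 0 < p) (hq : 0 < q) (k : ℤ) (x : NF p q) :
    act hp hq (BS.a p q ^ k) x = (eA ^ k) x := by
  rw [act, map_zpow, MulOpposite.unop_zpow, rho_a]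

/-! ### Evaluation of normal forms -/

/-- The product of a block word in `BS(p,q)`. -/
def blocksProd (bs : List (BSBlock p q)) : BS p q := (bs.map BSBlock.elem).prod

lemma blocksProd_nil : blocksProd ([] : List (BSBlock p q)) = 1 := rfl

lemma blocksProd_concat (bs : List (BSBlock p q)) (b : BSBlock p q) :
    blocksProd (bs ++ [b]) = blocksProd bs * b.elem := by
  simp [blocksProd]

/-- Evaluation of a normal form in `BS(p,q)`. -/
def piNF (x : NF p q) : BS p q := blocksProd x.1.1 * BS.a p q ^ x.1.2

lemma piNF_eA (x : NF p q) : piNF (eA x) = piNF x * BS.a p q := by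
  show blocksProd x.1.1 * BS.a p q ^ (x.1.2 + 1) = blocksProd x.1.1 * BS.a p q ^ x.1.2 * BS.a p q
  rw [zpow_add_one, mul_assoc]

lemma piNF_eT (hp : 0 < p) (hq : 0 < q) (x : NF p q) :
    piNF (eT hp hq x) = piNF x * BS.t p q := by
  obtain ⟨⟨bs, k⟩, hx⟩ := x
  have hq' : (q : ℤ) ≠ 0 := by exact_mod_cast hq.ne'
  show blocksProd (rT hq (bs, k)).1 * BS.a p q ^ (rT hq (bs, k)).2
      = blocksProd bs * BS.a p q ^ k * BS.t p q
  have hkey := key_comm p q (k / q)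
  by_cases hc : k % q = 0 ∧ ∃ j : Fin p, bs.getLast? = some (.inr j)
  · obtain ⟨hr, j, hj⟩ := hc
    obtain ⟨ys, rfl⟩ := List.getLast?_eq_some_iff.1 hj
    rw [rT, if_pos ⟨hr, j, List.getLast?_concat⟩]
    have hjv : (jval ((ys ++ [Sum.inr j] : List (BSBlock p q)), k).1.getLast? : ℤ) = j.val := by
      rw [show ((ys ++ [Sum.inr j] : List (BSBlock p q)), k).1 = ys ++ [Sum.inr j] from rfl,
        List.getLast?_concat]
      rfl
    have hk : (q : ℤ) * (k / q) = k := by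
      have := Int.mul_ediv_add_emod k q
      omega
    show blocksProd ((ys ++ [Sum.inr j] : List (BSBlock p q)), k).1.dropLast
        * BS.a p q ^ ((jval ((ys ++ [Sum.inr j] : List (BSBlock p q)), k).1.getLast? : ℤ)
          + p * (k / q)) = _
    rw [hjv]
    have hdl : ((ys ++ [Sum.inr j] : List (BSBlock p q)), k).1.dropLast = ys :=
      List.dropLast_concat
    rw [hdl, blocksProd_concat]
    show blocksProd ys * BS.a p q ^ ((j.val : ℤ) + p * (k / q))
        = blocksProd ys * (BS.a p q ^ j.val * (BS.t p q)⁻¹) * BS.a p q ^ k * BS.t p q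
    rw [zpow_add]
    have hz : BS.a p q ^ ((j.val : ℤ)) = BS.a p q ^ (j.val : ℕ) := zpow_natCast _ _
    have h3 : BS.a p q ^ k = BS.a p q ^ ((q : ℤ) * (k / q)) := by
      congr 1
      have := Int.mul_ediv_add_emod k q
      omega
    rw [hz, h3]
    simp only [mul_assoc]
    rw [hkey, inv_mul_cancel_left]
  · rw [rT, if_neg hc]
    rw [blocksProd_concat]
    have hr' : ((((k % (q:ℤ)).toNat : ℕ)) : ℤ) = k % q := by
      have h1 : 0 ≤ k % (q : ℤ) := Int.emod_nonneg k hq'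
      omega
    show blocksProd bs * (BS.a p q ^ ((k % (q:ℤ)).toNat) * BS.t p q)
        * BS.a p q ^ ((p : ℤ) * (k / q)) = blocksProd bs * BS.a p q ^ k * BS.t p q
    have h2 : BS.a p q ^ ((k % (q:ℤ)).toNat) = BS.a p q ^ (k % (q:ℤ)) := by
      rw [← zpow_natCast, hr']
    have h3 : BS.a p q ^ k = BS.a p q ^ (k % (q:ℤ)) * BS.a p q ^ ((q:ℤ) * (k / q)) := by
      rw [← zpow_add]
      congr 1
      have := Int.mul_ediv_add_emod k q
      omega
    rw [h2, h3]
    simp only [mul_assoc]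
    rw [hkey]

lemma piNF_eT_symm (hp : 0 < p) (hq : 0 < q) (x : NF p q) :
    piNF ((eT hp hq).symm x) = piNF x * (BS.t p q)⁻¹ := by
  have h := piNF_eT hp hq ((eT hp hq).symm x)
  rw [Equiv.apply_symm_apply] at h
  rw [h]
  group

/-! ### The action computes products -/

lemma act_piNF (hp : 0 < p) (hq : 0 < q) (g : BS p q) :
    ∀ x : NF p q, piNF (act hp hq g x) = piNF x * g := by
  have inv_step : ∀ g : BS p q, (∀ x, piNF (act hp hq g x) = piNF x * g) →
      ∀ x : NF p q, piNF (act hp hq g⁻¹ x) = piNF x * g⁻¹ := by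
    intro g hg x
    have h := hg (act hp hq g⁻¹ x)
    rw [← act_mul, inv_mul_cancel, act_one] at h
    rw [h]
    group
  refine PresentedGroup.induction_on
    (C := fun g => ∀ x : NF p q, piNF (act hp hq g x) = piNF x * g) g ?_
  intro z
  refine FreeGroup.induction_on z ?_ ?_ ?_ ?_
  · intro x
    rw [map_one, act_one, mul_one]
  · intro i
    have hpure : (pure i : FreeGroup (Fin 2)) = FreeGroup.of i := rfl
    fin_cases i
    · intro x
      show piNF (act hp hq (BS.a p q) x) = piNF x * BS.a p q
      rw [act_a, piNF_eA]
    · intro x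
      show piNF (act hp hq (BS.t p q) x) = piNF x * BS.t p q
      rw [act_t, piNF_eT]
  · intro i h x
    rw [map_inv]
    exact inv_step _ h x
  · intro z w hz hw x
    rw [map_mul, act_mul, hw, hz, mul_assoc]

/-- The base point: the empty normal form. -/
def base (p q : ℕ) : NF p q := ⟨([], 0), List.isChain_nil⟩

lemma act_base (hp : 0 < p) (hq : 0 < q) (bs : List (BSBlock p q)) :
    ∀ (hbs : bs.Chain' Good) (k : ℤ),
      act hp hq (blocksProd bs * BS.a p q ^ k) (base p q) = ⟨(bs, k), hbs⟩ := by
  induction bs using List.reverseRecOn with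
  | nil =>
      intro hbs k
      rw [blocksProd_nil, one_mul, act_a_zpow]
      apply Subtype.ext
      rw [eA_zpow]
      exact Prod.ext rfl (zero_add k)
  | append_singleton bs b ih =>
      intro hbs k
      have hbs' : bs.Chain' Good := (List.isChain_append.1 hbs).1
      have hjunc := (List.isChain_append.1 hbs).2.2
      cases b with
      | inl i =>
          rw [blocksProd_concat]
          have he : BSBlock.elem (Sum.inl i : BSBlock p q)
              = BS.a p q ^ (i.val : ℕ) * BS.t p q := rfl
          have hsplit : blocksProd bs * (BS.a p q ^ (i.val : ℕ) * BS.t p q) * BS.a p q ^ k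
              = blocksProd bs * BS.a p q ^ ((i.val : ℤ)) * BS.t p q * BS.a p q ^ k := by
            rw [zpow_natCast]
            simp only [mul_assoc]
          rw [he, hsplit, act_mul, act_mul, ih hbs' (i.val : ℤ)]
          erw [act_t, act_a_zpow]
          have hiq : ((i.val : ℤ)) % q = i.val :=
            Int.emod_eq_of_lt (by positivity) (by exact_mod_cast i.2)
          have hrT : rT hq (bs, (i.val : ℤ)) = (bs ++ [Sum.inl i], 0) := by
            rw [rT, if_neg]
            · refine Prod.ext ?_ ?_
              · show bs ++ [Sum.inl ⟨_, _⟩] = bs ++ [Sum.inl i]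
                congr 2
                exact congrArg Sum.inl (Fin.ext (by
                  show (((i.val : ℤ)) % q).toNat = i.val
                  rw [hiq]
                  simp))
              · show (p : ℤ) * ((i.val : ℤ) / q) = 0
                rw [Int.ediv_eq_zero_of_lt (by positivity) (by exact_mod_cast i.2), mul_zero]
            · rintro ⟨h0, j, hj⟩
              rw [hiq] at h0
              have hg : Good (Sum.inr j : BSBlock p q) (Sum.inl i) := hjunc _ hj _ (by simp)
              have : i.val ≠ 0 := hg
              omega
          apply Subtype.ext
          rw [eA_zpow]
          show ((rT hq (bs, (i.val : ℤ))).1, (rT hq (bs, (i.val : ℤ))).2 + k)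
              = (bs ++ [Sum.inl i], k)
          rw [hrT]
          exact Prod.ext rfl (zero_add k)
      | inr j =>
          rw [blocksProd_concat]
          have he : BSBlock.elem (Sum.inr j : BSBlock p q)
              = BS.a p q ^ (j.val : ℕ) * (BS.t p q)⁻¹ := rfl
          have hsplit : blocksProd bs * (BS.a p q ^ (j.val : ℕ) * (BS.t p q)⁻¹) * BS.a p q ^ k
              = blocksProd bs * BS.a p q ^ ((j.val : ℤ)) * (BS.t p q)⁻¹ * BS.a p q ^ k := by
            rw [zpow_natCast]
            simp only [mul_assoc]
          rw [he, hsplit, act_mul, act_mul, ih hbs' (j.val : ℤ)]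
          erw [act_t_inv, act_a_zpow]
          have hjp : ((j.val : ℤ)) % p = j.val :=
            Int.emod_eq_of_lt (by positivity) (by exact_mod_cast j.2)
          have hrTi : rTi hp (bs, (j.val : ℤ)) = (bs ++ [Sum.inr j], 0) := by
            rw [rTi, if_neg]
            · refine Prod.ext ?_ ?_
              · show bs ++ [Sum.inr ⟨_, _⟩] = bs ++ [Sum.inr j]
                congr 2
                exact congrArg Sum.inr (Fin.ext (by
                  show (((j.val : ℤ)) % p).toNat = j.val
                  rw [hjp]
                  simp))
              · show (q : ℤ) * ((j.val : ℤ) / p) = 0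
                rw [Int.ediv_eq_zero_of_lt (by positivity) (by exact_mod_cast j.2), mul_zero]
            · rintro ⟨h0, i, hi⟩
              rw [hjp] at h0
              have hg : Good (Sum.inl i : BSBlock p q) (Sum.inr j) := hjunc _ hi _ (by simp)
              have : j.val ≠ 0 := hg
              omega
          apply Subtype.ext
          rw [eA_zpow]
          show ((rTi hp (bs, (j.val : ℤ))).1, (rTi hp (bs, (j.val : ℤ))).2 + k)
              = (bs ++ [Sum.inr j], k)
          rw [hrTi]
          exact Prod.ext rfl (zero_add k)

lemma piNF_injective (hp : 0 < p) (hq : 0 < q) {x y : NF p q} (h : piNF x = piNF y) :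
    x = y := by
  have hx : act hp hq (piNF x) (base p q) = x := act_base hp hq x.1.1 x.2 x.1.2
  have hy : act hp hq (piNF y) (base p q) = y := act_base hp hq y.1.1 y.2 y.1.2
  rw [← hx, ← hy, h]

/-! ### Free reduction versus the chain condition -/

/-- Non-cancellation of adjacent letters. -/
def RL {α : Type*} : (α × Bool) → (α × Bool) → Prop :=
  fun u v => ¬(u.1 = v.1 ∧ u.2 = !v.2)

lemma reduce_eq_self_iff {α : Type*} [DecidableEq α] (L : List (α × Bool)) :
    FreeGroup.reduce L = L ↔ L.Chain' RL := by
  constructor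
  · induction L with
    | nil => intro _; exact List.isChain_nil
    | cons x L ih =>
        intro h
        rw [FreeGroup.reduce.cons] at h
        rcases hL : FreeGroup.reduce L with _ | ⟨y, ys⟩ <;> rw [hL] at h
        · have : L = [] := by
            cases L with
            | nil => rfl
            | cons a as => simp at h
          subst this
          exact List.isChain_singleton x
        · dsimp only at h
          split_ifs at h with hcan
          · exfalso
            have hle := FreeGroup.Red.length_le (FreeGroup.reduce.red (L := L))
            rw [hL, h] at hle
            simp at hle
          · have hL' : L = y :: ys := by
              injection h with h1 h2
              exact h2.symm
            subst hL'
            exact List.isChain_cons_cons.2 ⟨hcan, ih hL⟩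
  · induction L with
    | nil => intro _; rfl
    | cons x L ih =>
        intro h
        have hL : FreeGroup.reduce L = L := ih ((List.isChain_cons.1 h).2)
        rw [FreeGroup.reduce.cons, hL]
        cases L with
        | nil => rfl
        | cons y ys =>
            dsimp only
            rw [if_neg ((List.isChain_cons_cons.1 h).1)]

lemma letters_ne_nil (b : BSBlock p q) : BSBlock.letters b ≠ [] := by
  cases b <;> simp [BSBlock.letters]

lemma chain'_letters (b : BSBlock p q) : (BSBlock.letters b).Chain' RL := by
  have hrepl : ∀ n : ℕ, (List.replicate n (((0 : Fin 2), true))).Chain' RL :=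
    fun n => List.isChain_replicate_of_rel n (by simp [RL])
  have hjunc : ∀ (s : Bool) (n : ℕ),
      ∀ x ∈ (List.replicate n (((0 : Fin 2), true))).getLast?,
        ∀ y ∈ [((1 : Fin 2), s)].head?, RL x y := by
    intro s n x hx y hy
    simp only [List.head?_cons, Option.mem_def, Option.some.injEq] at hy
    subst hy
    rw [List.getLast?_replicate] at hx
    split_ifs at hx with hn
    · simp at hx
    · simp only [Option.mem_def, Option.some.injEq] at hx
      subst hx
      simp [RL]
  cases b with
  | inl i => exact List.isChain_append.2 ⟨hrepl _, List.isChain_singleton _, hjunc true i.val⟩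
  | inr j => exact List.isChain_append.2 ⟨hrepl _, List.isChain_singleton _, hjunc false j.val⟩

lemma junction_iff (b b' : BSBlock p q) :
    (∀ x ∈ (BSBlock.letters b).getLast?, ∀ y ∈ (BSBlock.letters b').head?, RL x y)
      ↔ Good b b' := by
  have hlast : ∀ (s : Bool) (n : ℕ),
      (List.replicate n (((0 : Fin 2), true)) ++ [((1 : Fin 2), s)]).getLast?
        = some ((1 : Fin 2), s) := fun s n => List.getLast?_concat
  have hhead : ∀ (s : Bool) (n : ℕ),
      (List.replicate n (((0 : Fin 2), true)) ++ [((1 : Fin 2), s)]).head?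
        = some (if n = 0 then ((1 : Fin 2), s) else ((0 : Fin 2), true)) := by
    intro s n
    cases n with
    | zero => simp
    | succ n => simp [List.replicate_succ]
  cases b with
  | inl i =>
      cases b' with
      | inl i' =>
          show _ ↔ True
          simp only [BSBlock.letters, hlast true i.val, hhead true i'.val, iff_true,
            Option.mem_def, Option.some.injEq]
          rintro x rfl y rfl
          split_ifs <;> (simp [RL]; try decide)
      | inr j' =>
          show _ ↔ j'.val ≠ 0
          simp only [BSBlock.letters, hlast true i.val, hhead false j'.val,
            Option.mem_def, Option.some.injEq]
          constructor
          · intro h hj0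
            have := h _ rfl _ rfl
            rw [if_pos hj0] at this
            exact this (by decide)
          · intro hj0 x hx y hy
            subst hx; subst hy
            rw [if_neg hj0]
            simp [RL]
  | inr j =>
      cases b' with
      | inl i' =>
          show _ ↔ i'.val ≠ 0
          simp only [BSBlock.letters, hlast false j.val, hhead true i'.val,
            Option.mem_def, Option.some.injEq]
          constructor
          · intro h hi0
            have := h _ rfl _ rfl
            rw [if_pos hi0] at this
            exact this (by decide)
          · intro hi0 x hx y hy
            subst hx; subst hy
            rw [if_neg hi0]
            simp [RL]
      | inr j' =>
          show _ ↔ True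
          simp only [BSBlock.letters, hlast false j.val, hhead false j'.val, iff_true,
            Option.mem_def, Option.some.injEq]
          rintro x rfl y rfl
          split_ifs <;> (simp [RL]; try decide)

lemma chain'_blockword_iff (bs : List (BSBlock p q)) :
    (BSBlockWord bs).Chain' RL ↔ bs.Chain' Good := by
  unfold List.Chain'
  rw [BSBlockWord, List.isChain_flatten (by
    intro hmem
    rw [List.mem_map] at hmem
    obtain ⟨b, -, hb⟩ := hmem
    exact letters_ne_nil b hb)]
  constructor
  · rintro ⟨-, h2⟩
    rw [List.isChain_map] at h2
    exact h2.imp fun a b hab => (junction_iff a b).1 hab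
  · intro h
    refine ⟨?_, ?_⟩
    · intro l hl
      rw [List.mem_map] at hl
      obtain ⟨b, -, rfl⟩ := hl
      exact chain'_letters b
    · rw [List.isChain_map]
      exact h.imp fun a b hab => (junction_iff a b).2 hab

lemma freelyReduced_iff (bs : List (BSBlock p q)) :
    BSFreelyReduced bs ↔ bs.Chain' Good := by
  rw [BSFreelyReduced, reduce_eq_self_iff, chain'_blockword_iff]

end BSNF

open CAG in
/-- Normal form in the Baumslag–Solitar group `BS(p,q)`, `1 ≤ p ≤ q`: every element `g`
can be written uniquely as `g = w̃(a,t)·aᵏ`, where `w̃(a,t)` is a freely reduced word over the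
alphabet of blocks `{t, at, …, a^{q-1}t, t⁻¹, at⁻¹, …, a^{p-1}t⁻¹}` and `k ∈ ℤ`. -/
theorem BS_normal_form (p q : ℕ) (hp : 1 ≤ p) (hpq : p ≤ q) (g : BS p q) :
    ∃! bk : List (BSBlock p q) × ℤ,
      BSFreelyReduced bk.1 ∧ g = (bk.1.map BSBlock.elem).prod * BS.a p q ^ bk.2 := by
  have hp0 : 0 < p := hp
  have hq0 : 0 < q := lt_of_lt_of_le hp hpq
  refine ⟨(BSNF.act hp0 hq0 g (BSNF.base p q)).1, ⟨?_, ?_⟩, ?_⟩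
  · exact (BSNF.freelyReduced_iff _).2 (BSNF.act hp0 hq0 g (BSNF.base p q)).2
  · have h1 := BSNF.act_piNF hp0 hq0 g (BSNF.base p q)
    have h2 : BSNF.piNF (BSNF.base p q) = 1 := by
      show BSNF.blocksProd ([] : List (BSBlock p q)) * BS.a p q ^ (0 : ℤ) = 1
      rw [BSNF.blocksProd_nil, zpow_zero, mul_one]
    show g = BSNF.piNF (BSNF.act hp0 hq0 g (BSNF.base p q))
    rw [h1, h2, one_mul]
  · rintro ⟨bs, k⟩ ⟨hred, hg⟩
    have hch : bs.Chain' BSNF.Good := (BSNF.freelyReduced_iff bs).1 hred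
    have h1 := BSNF.act_base hp0 hq0 bs hch k
    have h2 : BSNF.piNF (⟨(bs, k), hch⟩ : BSNF.NF p q) = g := hg.symm
    have h3 : BSNF.act hp0 hq0 g (BSNF.base p q) = ⟨(bs, k), hch⟩ := by
      rw [← h2]
      exact h1
    rw [h3]
end
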